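/- arXiv:1812.11170 — 8 statements merged into one kernel-verified Lean document; each statement's English description precedes it below -/
import Mathlib

section
/- Let n ≥ 1 be an integer, χ > 0 a real number, and V : ℂ → (−∞, ∞] a measurable function. Define Ṽ : ℂ∖{0} → (−∞, ∞] by Ṽ(x) = V(1/x) + log|x|. Let μ be the measure on (ℂ∖{0})ⁿ with density (x₁,…,xₙ) ↦ ∏_{1≤i<j≤n} |xᵢ−xⱼ|² · exp(−2(n+χ) ∑_{i=1}^n V(xᵢ)) with respect to the n-fold product of Lebesgue measure on ℂ (where exp(−∞) is interpreted as 0). Then the pushforward of μ under the map (x₁,…,xₙ) ↦ (1/x₁,…,1/xₙ) equals the measure on (ℂ∖{0})ⁿ with density (x₁,…,xₙ) ↦ ∏_{1≤i<j≤n} |xᵢ−xⱼ|² · exp(−2(n+χ) ∑_{i=1}^n Ṽ(xᵢ)) · ∏_{i=1}^n |xᵢ|^{2(χ−1)} with respect to the n-fold product of Lebesgue measure on ℂ. -/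
open MeasureTheory Filter Topology

/-- `wexp c s = e^{-c·s}` for `s ∈ (-∞, ∞]`, as a value in `[0,∞]`,
with the convention `e^{-c·∞} = 0` (for `c > 0`). -/
noncomputable def wexp (c : ℝ) (s : EReal) : ENNReal :=
  if s = ⊤ then 0 else ENNReal.ofReal (Real.exp (-(c * s.toReal)))

section Aux

lemma ereal_measurable_add : Measurable fun p : EReal × EReal => p.1 + p.2 := by
  classical
  have hbad : ({((⊥ : EReal), (⊤ : EReal)), ((⊤ : EReal), (⊥ : EReal))} :
      Set (EReal × EReal)).Finite :=
    (Set.finite_singleton _).insert _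
  have hO : IsOpen ({((⊥ : EReal), (⊤ : EReal)), ((⊤ : EReal), (⊥ : EReal))} :
      Set (EReal × EReal))ᶜ :=
    hbad.isClosed.isOpen_compl
  have heq : (fun p : EReal × EReal => p.1 + p.2) =
      Set.piecewise ({((⊥ : EReal), (⊤ : EReal)), ((⊤ : EReal), (⊥ : EReal))} :
          Set (EReal × EReal))ᶜ
        (fun p => p.1 + p.2) (fun _ => ⊥) := by
    ext p
    by_cases hp : p ∈ ({((⊥ : EReal), (⊤ : EReal)), ((⊤ : EReal), (⊥ : EReal))} :
        Set (EReal × EReal))ᶜ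
    · simp [hp]
    · simp only [Set.mem_compl_iff, Set.mem_insert_iff, Set.mem_singleton_iff, not_not] at hp
      rcases hp with hp | hp <;> subst hp <;> simp [Set.piecewise, Set.mem_insert_iff]
  rw [heq]
  apply ContinuousOn.measurable_piecewise
  · intro p hp
    apply (EReal.continuousAt_add ?_ ?_).continuousWithinAt
    · simp only [Set.mem_compl_iff, Set.mem_insert_iff, Set.mem_singleton_iff, not_or] at hp
      by_contra h
      push_neg at h
      exact hp.2 (Prod.ext h.1 h.2)
    · simp only [Set.mem_compl_iff, Set.mem_insert_iff, Set.mem_singleton_iff, not_or] at hp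
      by_contra h
      push_neg at h
      exact hp.1 (Prod.ext h.1 h.2)
  · exact continuous_const.continuousOn
  · exact hO.measurableSet

instance : MeasurableAdd₂ EReal := ⟨ereal_measurable_add⟩

lemma measurable_wexp (c : ℝ) : Measurable (wexp c) := by
  unfold wexp
  refine Measurable.ite measurableSet_eq measurable_const ?_
  exact ENNReal.measurable_ofReal.comp (((measurable_ereal_toReal.const_mul c).neg).exp)

lemma wexp_add_coe (c : ℝ) {s : EReal} (hs : s ≠ ⊥) (r : ℝ) :
    wexp c (s + (r : EReal)) = wexp c s * ENNReal.ofReal (Real.exp (-(c * r))) := by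
  by_cases ht : s = ⊤
  · subst ht
    rw [EReal.top_add_coe]
    simp [wexp]
  · lift s to ℝ using ⟨ht, hs⟩ with t
    rw [← EReal.coe_add]
    simp only [wexp, EReal.coe_ne_top, if_false, EReal.toReal_coe]
    rw [← ENNReal.ofReal_mul (Real.exp_nonneg _), ← Real.exp_add]
    ring_nf

lemma ereal_sum_ne_bot {ι : Type*} {s : Finset ι} {f : ι → EReal}
    (h : ∀ i ∈ s, f i ≠ ⊥) : ∑ i ∈ s, f i ≠ ⊥ := by
  classical
  induction s using Finset.cons_induction with
  | empty => simp
  | cons a s ha ih =>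
    rw [Finset.sum_cons, Ne, EReal.add_eq_bot_iff]
    push_neg
    exact ⟨h a (Finset.mem_cons_self a s),
      ih fun i hi => h i (Finset.mem_cons_of_mem hi)⟩

lemma ereal_coe_sum {ι : Type*} (s : Finset ι) (f : ι → ℝ) :
    ((∑ i ∈ s, f i : ℝ) : EReal) = ∑ i ∈ s, ((f i : ℝ) : EReal) :=
  map_sum (⟨⟨(fun r : ℝ => (r : EReal)), EReal.coe_zero⟩, fun a b => EReal.coe_add a b⟩ :
    ℝ →+ EReal) f s

lemma map_withDensity_comp {α β : Type*} [MeasurableSpace α] [MeasurableSpace β]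
    (ν : Measure α) {T : α → β} (hT : Measurable T) {g : β → ENNReal} (hg : Measurable g) :
    Measure.map T (ν.withDensity (g ∘ T)) = (Measure.map T ν).withDensity g := by
  ext s hs
  rw [withDensity_apply _ hs, Measure.map_apply hT hs, withDensity_apply _ (hT hs),
    setLIntegral_map hs hg hT]
  rfl

lemma det_pi_mul (n : ℕ) (c : Fin n → ℂ) :
    LinearMap.det (LinearMap.pi fun i : Fin n =>
        (LinearMap.mul ℝ ℂ (c i)).comp (LinearMap.proj i)) =
      ∏ i : Fin n, Complex.normSq (c i) := by
  classical
  set b : Module.Basis ((_ : Fin n) × Fin 2) ℝ (Fin n → ℂ) :=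
    Pi.basis (fun _ : Fin n => Complex.basisOneI) with hb
  rw [← LinearMap.det_toMatrix b]
  let e : (Fin 2 × Fin n) ≃ ((_ : Fin n) × Fin 2) :=
    ⟨fun p => ⟨p.2, p.1⟩, fun q => (q.2, q.1), fun _ => rfl, fun _ => rfl⟩
  have hmat : LinearMap.toMatrix b b (LinearMap.pi fun i : Fin n =>
      (LinearMap.mul ℝ ℂ (c i)).comp (LinearMap.proj i)) =
      Matrix.reindex e e
        (Matrix.blockDiagonal fun i => Algebra.leftMulMatrix Complex.basisOneI (c i)) := by
    ext ⟨i, k⟩ ⟨j, l⟩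
    rw [LinearMap.toMatrix_apply]
    simp only [hb, Pi.basis_apply, Pi.basis_repr]
    rw [LinearMap.pi_apply, LinearMap.comp_apply, LinearMap.proj_apply]
    by_cases hij : i = j
    · subst hij
      simp only [Pi.single_eq_same, LinearMap.mul_apply']
      rw [Matrix.reindex_apply]
      simp only [Matrix.submatrix_apply]
      rw [show e.symm ⟨i, k⟩ = (k, i) from rfl, show e.symm ⟨i, l⟩ = (l, i) from rfl]
      rw [Matrix.blockDiagonal_apply_eq]
      rw [Algebra.leftMulMatrix_eq_repr_mul]
    · rw [Pi.single_eq_of_ne hij]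
      simp only [map_zero, Finsupp.coe_zero, Pi.zero_apply]
      rw [Matrix.reindex_apply]
      simp only [Matrix.submatrix_apply]
      rw [show e.symm ⟨i, k⟩ = (k, i) from rfl, show e.symm ⟨j, l⟩ = (l, j) from rfl]
      rw [Matrix.blockDiagonal_apply_ne _ _ _ hij]
  rw [hmat, Matrix.det_reindex_self, Matrix.det_blockDiagonal]
  refine Finset.prod_congr rfl fun i _ => ?_
  rw [← Algebra.norm_eq_matrix_det Complex.basisOneI, Algebra.norm_complex_apply]

noncomputable def invDeriv (n : ℕ) (x : Fin n → ℂ) : (Fin n → ℂ) →L[ℝ] (Fin n → ℂ) :=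
  ContinuousLinearMap.pi fun i =>
    ((ContinuousLinearMap.mul ℝ ℂ (-(x i ^ 2)⁻¹)).comp (ContinuousLinearMap.proj i))

lemma hasFDerivAt_invmap {n : ℕ} {x : Fin n → ℂ} (hx : ∀ i, x i ≠ 0) :
    HasFDerivAt (fun y : Fin n → ℂ => fun i => (y i)⁻¹) (invDeriv n x) x := by
  apply hasFDerivAt_pi.2
  intro i
  have h1 : HasFDerivAt (fun z : ℂ => z⁻¹)
      (ContinuousLinearMap.mul ℝ ℂ (-(x i ^ 2)⁻¹)) (x i) := by
    have h2 := (hasDerivAt_inv (hx i)).hasFDerivAt.restrictScalars ℝ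
    refine HasFDerivAt.congr_fderiv h2 ?_
    ext z
    simp [mul_comm]
  exact h1.comp x (hasFDerivAt_apply i x)

lemma invDeriv_det {n : ℕ} (x : Fin n → ℂ) :
    (invDeriv n x).det = ∏ i : Fin n, Complex.normSq (-(x i ^ 2)⁻¹) := by
  have h : ((invDeriv n x) : (Fin n → ℂ) →ₗ[ℝ] (Fin n → ℂ)) =
      LinearMap.pi fun i : Fin n =>
        (LinearMap.mul ℝ ℂ (-(x i ^ 2)⁻¹)).comp (LinearMap.proj i) := by
    ext y i
    rfl
  rw [ContinuousLinearMap.det, h, det_pi_mul]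

lemma prod_pair {n : ℕ} (b : Fin n → ℝ) :
    ∏ i : Fin n, ∏ j ∈ Finset.Ioi i, (b i * b j) = ∏ k : Fin n, b k ^ (n - 1) := by
  have h1 : ∏ i : Fin n, ∏ j ∈ Finset.Ioi i, (b i * b j) =
      (∏ i : Fin n, ∏ j ∈ Finset.Ioi i, b i) * ∏ i : Fin n, ∏ j ∈ Finset.Ioi i, b j := by
    rw [← Finset.prod_mul_distrib]
    exact Finset.prod_congr rfl fun i _ => Finset.prod_mul_distrib
  have h2 : ∏ i : Fin n, ∏ j ∈ Finset.Ioi i, b i = ∏ i : Fin n, b i ^ (n - 1 - (i : ℕ)) := by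
    refine Finset.prod_congr rfl fun i _ => ?_
    rw [Finset.prod_const, Fin.card_Ioi]
  have h3 : ∏ i : Fin n, ∏ j ∈ Finset.Ioi i, b j = ∏ j : Fin n, b j ^ (j : ℕ) := by
    rw [Finset.prod_comm' (t' := Finset.univ) (s' := fun j => Finset.Iio j) ?_]
    · refine Finset.prod_congr rfl fun j _ => ?_
      rw [Finset.prod_const, Fin.card_Iio]
    · intro i j
      simp [Finset.mem_Ioi, Finset.mem_Iio]
  rw [h1, h2, h3, ← Finset.prod_mul_distrib]
  refine Finset.prod_congr rfl fun k _ => ?_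
  rw [← pow_add]
  congr 1
  omega

lemma key_scalar {n : ℕ} (hn : 1 ≤ n) {χ : ℝ} {t : ℝ} (ht : 0 < t) :
    (t ^ 2 * (t ^ 2 * 1))⁻¹ * ((t ^ 2)⁻¹) ^ (n - 1) *
      (Real.exp ((2 * ((n : ℝ) + χ)) * Real.log t) * (t⁻¹) ^ (2 * (χ - 1))) = 1 := by
  have h1 : Real.exp ((2 * ((n : ℝ) + χ)) * Real.log t) = t ^ (2 * ((n : ℝ) + χ)) := by
    rw [Real.rpow_def_of_pos ht, mul_comm]
  have h2 : (t⁻¹) ^ (2 * (χ - 1)) = t ^ (-(2 * (χ - 1))) := by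
    rw [Real.inv_rpow ht.le, ← Real.rpow_neg ht.le]
  have h3 : (t ^ 2 * (t ^ 2 * 1))⁻¹ = t ^ (-(4 : ℝ)) := by
    rw [show t ^ 2 * (t ^ 2 * 1) = t ^ (4 : ℕ) by ring]
    rw [← Real.rpow_natCast t 4, ← Real.rpow_neg ht.le]
    norm_num
  have h4 : ((t ^ 2)⁻¹) ^ (n - 1) = t ^ (-(2 * ((n : ℝ) - 1))) := by
    have e1 : (t ^ 2)⁻¹ = t ^ (-(2 : ℝ)) := by
      rw [← Real.rpow_natCast t 2, ← Real.rpow_neg ht.le]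
      norm_num
    rw [e1, ← Real.rpow_natCast (t ^ (-(2 : ℝ))) (n - 1), ← Real.rpow_mul ht.le]
    congr 1
    rw [Nat.cast_sub hn]
    push_cast
    ring
  rw [h1, h2, h3, h4, ← Real.rpow_add ht, ← Real.rpow_add ht, ← Real.rpow_add ht]
  rw [show -(4 : ℝ) + -(2 * ((n : ℝ) - 1)) + (2 * ((n : ℝ) + χ) + -(2 * (χ - 1))) = 0 by ring]
  exact Real.rpow_zero t

lemma measurable_nonneg_rpow (p : ℝ) {α : Type*} [MeasurableSpace α] {f : α → ℝ}
    (hf : Measurable f) (h0 : ∀ a, 0 ≤ f a) : Measurable fun a => f a ^ p := by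
  classical
  have hrw : (fun a => f a ^ p) =
      fun a => if f a = 0 then (0 : ℝ) ^ p else Real.exp (Real.log (f a) * p) := by
    funext a
    by_cases h : f a = 0
    · simp [h]
    · rw [if_neg h, ← Real.rpow_def_of_pos (lt_of_le_of_ne (h0 a) (Ne.symm h))]
  rw [hrw]
  exact Measurable.ite (hf (measurableSet_singleton 0)) measurable_const
    (((Real.measurable_log.comp hf).mul_const p).exp)

end Aux

theorem inversionOfCoulombGases
    (n : ℕ) (hn : 1 ≤ n) (χ : ℝ) (hχ : 0 < χ)
    (V : ℂ → EReal) (hVmeas : Measurable V) (hVbot : ∀ x : ℂ, V x ≠ ⊥) :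
    Measure.map (fun (x : Fin n → ℂ) (i : Fin n) => (x i)⁻¹)
        ((volume.restrict {x : Fin n → ℂ | ∀ i, x i ≠ 0}).withDensity fun x =>
          ENNReal.ofReal (∏ i : Fin n, ∏ j ∈ Finset.Ioi i,
              ‖x i - x j‖ ^ 2) *
            wexp (2 * ((n : ℝ) + χ)) (∑ i : Fin n, V (x i))) =
      (volume.restrict {x : Fin n → ℂ | ∀ i, x i ≠ 0}).withDensity fun x =>
        ENNReal.ofReal (∏ i : Fin n, ∏ j ∈ Finset.Ioi i,
            ‖x i - x j‖ ^ 2) *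
          wexp (2 * ((n : ℝ) + χ))
            (∑ i : Fin n, (V ((x i)⁻¹) + ((Real.log (‖x i‖) : ℝ) : EReal))) *
          ENNReal.ofReal (∏ i : Fin n, ‖x i‖ ^ (2 * (χ - 1))) := by
  classical
  have hc : (2 : ℝ) * ((n : ℝ) + χ) = 2 * ((n : ℝ) + χ) := rfl
  set c : ℝ := 2 * ((n : ℝ) + χ) with hcdef
  set S : Set (Fin n → ℂ) := {x : Fin n → ℂ | ∀ i, x i ≠ 0} with hS
  set T : (Fin n → ℂ) → (Fin n → ℂ) := fun x i => (x i)⁻¹ with hT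
  have hSmeas : MeasurableSet S := by
    have hds : S = ⋂ i : Fin n, (fun x : Fin n → ℂ => x i) ⁻¹' ({0}ᶜ) := by
      ext x; simp [hS]
    rw [hds]
    exact MeasurableSet.iInter fun i =>
      (measurable_pi_apply i) (measurableSet_singleton 0).compl
  have hTmeas : Measurable T :=
    measurable_pi_lambda _ fun i => (measurable_pi_apply i).inv
  have hTinj : Function.Injective T := by
    intro x y hxy
    funext i
    exact inv_injective (congrFun hxy i)
  have hTS : T '' S = S := by
    ext y
    constructor
    · rintro ⟨x, hx, rfl⟩
      intro i
      exact inv_ne_zero (hx i)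
    · intro hy
      refine ⟨T y, fun i => inv_ne_zero (hy i), ?_⟩
      funext i
      simp [hT]
  -- densities
  set A : (Fin n → ℂ) → ENNReal := fun x =>
    ENNReal.ofReal (∏ i : Fin n, ∏ j ∈ Finset.Ioi i, ‖x i - x j‖ ^ 2) with hA
  set h : (Fin n → ℂ) → ENNReal := fun x =>
    A x * wexp c (∑ i : Fin n, (V ((x i)⁻¹) + ((Real.log (‖x i‖) : ℝ) : EReal))) *
      ENNReal.ofReal (∏ i : Fin n, ‖x i‖ ^ (2 * (χ - 1))) with hh
  have hAmeas : Measurable A := by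
    apply ENNReal.measurable_ofReal.comp
    apply Finset.measurable_prod
    intro i _
    apply Finset.measurable_prod
    intro j _
    exact ((continuous_norm.measurable.comp
      ((measurable_pi_apply i).sub (measurable_pi_apply j))).pow_const 2)
  have hhmeas : Measurable h := by
    apply Measurable.mul
    apply Measurable.mul hAmeas
    · apply (measurable_wexp c).comp
      apply Finset.measurable_sum
      intro i _
      apply Measurable.add
      · exact hVmeas.comp ((measurable_pi_apply i).inv)
      · exact (Real.measurable_log.comp
          (continuous_norm.measurable.comp (measurable_pi_apply i))).coe_real_ereal
    · apply ENNReal.measurable_ofReal.comp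
      apply Finset.measurable_prod
      intro i _
      exact measurable_nonneg_rpow _
        (continuous_norm.measurable.comp (measurable_pi_apply i))
        (fun a => norm_nonneg _)
  have hJmeas : Measurable fun x : Fin n → ℂ => ENNReal.ofReal |(invDeriv n x).det| := by
    apply ENNReal.measurable_ofReal.comp
    apply Measurable.abs
    have hfun : (fun x : Fin n → ℂ => (invDeriv n x).det) =
        fun x => ∏ i : Fin n, Complex.normSq (-(x i ^ 2)⁻¹) := by
      funext x; exact invDeriv_det x
    rw [hfun]
    apply Finset.measurable_prod
    intro i _
    exact Complex.continuous_normSq.measurable.comp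
      ((((measurable_pi_apply i).pow_const 2).inv).neg)
  -- key pointwise identity
  have hkey : ∀ x ∈ S, ENNReal.ofReal |(invDeriv n x).det| * h (T x) =
      A x * wexp c (∑ i : Fin n, V (x i)) := by
    intro x hx
    have hxi : ∀ i, x i ≠ 0 := hx
    have habs : ∀ i, 0 < ‖x i‖ := fun i =>
      norm_pos_iff.2 (hxi i)
    have hVne : (∑ i : Fin n, V (x i)) ≠ ⊥ :=
      ereal_sum_ne_bot fun i _ => hVbot (x i)
    set L : ℝ := ∑ i : Fin n, Real.log (‖x i‖) with hL
    -- the EReal sum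
    have hsum : (∑ i : Fin n, (V (((x i)⁻¹)⁻¹) +
        ((Real.log (‖(x i)⁻¹‖) : ℝ) : EReal))) =
        (∑ i : Fin n, V (x i)) + (((-L) : ℝ) : EReal) := by
      rw [Finset.sum_add_distrib]
      congr 1
      · exact Finset.sum_congr rfl fun i _ => by rw [inv_inv]
      · rw [hL, ← Finset.sum_neg_distrib, ereal_coe_sum]
        exact Finset.sum_congr rfl fun i _ => by rw [norm_inv, Real.log_inv]
    -- unfold h (T x)
    have hhTx : h (T x) = A (fun i => (x i)⁻¹) *
        (wexp c (∑ i : Fin n, V (x i)) * ENNReal.ofReal (Real.exp (c * L))) *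
        ENNReal.ofReal (∏ i : Fin n, ‖(x i)⁻¹‖ ^ (2 * (χ - 1))) := by
      rw [hh]
      simp only [hT]
      rw [hsum, wexp_add_coe c hVne, mul_neg, neg_neg]
    -- Vandermonde for the inverted points
    have hVdm : (∏ i : Fin n, ∏ j ∈ Finset.Ioi i,
          ‖(x i)⁻¹ - (x j)⁻¹‖ ^ 2) =
        (∏ i : Fin n, ∏ j ∈ Finset.Ioi i, ‖x i - x j‖ ^ 2) *
          ∏ k : Fin n, (((‖x k‖) ^ 2)⁻¹) ^ (n - 1) := by
      rw [← prod_pair (fun k => ((‖x k‖) ^ 2)⁻¹), ← Finset.prod_mul_distrib]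
      refine Finset.prod_congr rfl fun i _ => ?_
      rw [← Finset.prod_mul_distrib]
      refine Finset.prod_congr rfl fun j hj => ?_
      have hstep : (x i)⁻¹ - (x j)⁻¹ = (x j - x i) * ((x i) * (x j))⁻¹ := by
        rw [inv_eq_one_div, inv_eq_one_div, div_sub_div _ _ (hxi i) (hxi j), one_mul,
          mul_one, div_eq_mul_inv]
      rw [hstep, norm_mul, norm_inv, norm_mul]
      have habs_sub : ‖x j - x i‖ = ‖x i - x j‖ := by
        rw [← neg_sub, norm_neg]
      rw [habs_sub, mul_pow, inv_pow, mul_pow]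
      ring
    -- real identity
    have hreal : |∏ i : Fin n, Complex.normSq (-(x i ^ 2)⁻¹)| *
        ((∏ i : Fin n, ∏ j ∈ Finset.Ioi i, ‖(x i)⁻¹ - (x j)⁻¹‖ ^ 2) *
          Real.exp (c * L) *
          (∏ i : Fin n, ‖(x i)⁻¹‖ ^ (2 * (χ - 1)))) =
        ∏ i : Fin n, ∏ j ∈ Finset.Ioi i, ‖x i - x j‖ ^ 2 := by
      have hns : ∀ i : Fin n, Complex.normSq (-(x i ^ 2)⁻¹) =
          ((‖x i‖) ^ 2 * ((‖x i‖) ^ 2 * 1))⁻¹ := by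
        intro i
        rw [Complex.normSq_neg, map_inv₀, map_pow, Complex.normSq_eq_norm_sq]
        ring_nf
      have habsinv : ∀ i : Fin n, ‖(x i)⁻¹‖ = (‖x i‖)⁻¹ :=
        fun i => norm_inv _
      simp_rw [hns, habsinv]
      rw [abs_of_nonneg (Finset.prod_nonneg fun i _ => by positivity)]
      rw [hVdm, hL, Finset.mul_sum, Real.exp_sum]
      have hQ : ∏ k : Fin n,
          (((‖x k‖) ^ 2 * ((‖x k‖) ^ 2 * 1))⁻¹ *
            ((((‖x k‖) ^ 2)⁻¹) ^ (n - 1)) *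
            (Real.exp (c * Real.log (‖x k‖)) *
              ((‖x k‖)⁻¹) ^ (2 * (χ - 1)))) = 1 :=
        Finset.prod_eq_one fun k _ => by
          rw [hcdef]; exact key_scalar hn (habs k)
      calc (∏ i : Fin n, ((‖x i‖) ^ 2 * ((‖x i‖) ^ 2 * 1))⁻¹) *
            ((∏ i : Fin n, ∏ j ∈ Finset.Ioi i, ‖x i - x j‖ ^ 2) *
              (∏ k : Fin n, (((‖x k‖) ^ 2)⁻¹) ^ (n - 1)) *
              (∏ i : Fin n, Real.exp (c * Real.log (‖x i‖))) *
              (∏ i : Fin n, ((‖x i‖)⁻¹) ^ (2 * (χ - 1))))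
          = (∏ i : Fin n, ∏ j ∈ Finset.Ioi i, ‖x i - x j‖ ^ 2) *
            ∏ k : Fin n,
              (((‖x k‖) ^ 2 * ((‖x k‖) ^ 2 * 1))⁻¹ *
                ((((‖x k‖) ^ 2)⁻¹) ^ (n - 1)) *
                (Real.exp (c * Real.log (‖x k‖)) *
                  ((‖x k‖)⁻¹) ^ (2 * (χ - 1)))) := by
            rw [Finset.prod_mul_distrib, Finset.prod_mul_distrib, Finset.prod_mul_distrib]
            ring
        _ = ∏ i : Fin n, ∏ j ∈ Finset.Ioi i, ‖x i - x j‖ ^ 2 := by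
            rw [hQ, mul_one]
    -- put things together in ENNReal
    rw [hhTx, invDeriv_det]
    have hVdmT_nonneg : 0 ≤ ∏ i : Fin n, ∏ j ∈ Finset.Ioi i,
        ‖(x i)⁻¹ - (x j)⁻¹‖ ^ 2 :=
      Finset.prod_nonneg fun i _ => Finset.prod_nonneg fun j _ => by positivity
    have hAB : ENNReal.ofReal |∏ i : Fin n, Complex.normSq (-(x i ^ 2)⁻¹)| *
        (A (fun i => (x i)⁻¹) * ENNReal.ofReal (Real.exp (c * L)) *
          ENNReal.ofReal (∏ i : Fin n, ‖(x i)⁻¹‖ ^ (2 * (χ - 1)))) = A x := by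
      rw [hA]
      simp only []
      rw [← ENNReal.ofReal_mul hVdmT_nonneg,
        ← ENNReal.ofReal_mul (mul_nonneg hVdmT_nonneg (Real.exp_nonneg _)),
        ← ENNReal.ofReal_mul (abs_nonneg _)]
      exact congrArg ENNReal.ofReal hreal
    calc ENNReal.ofReal |∏ i : Fin n, Complex.normSq (-(x i ^ 2)⁻¹)| *
          (A (fun i => (x i)⁻¹) *
            (wexp c (∑ i : Fin n, V (x i)) * ENNReal.ofReal (Real.exp (c * L))) *
            ENNReal.ofReal (∏ i : Fin n, ‖(x i)⁻¹‖ ^ (2 * (χ - 1))))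
        = (ENNReal.ofReal |∏ i : Fin n, Complex.normSq (-(x i ^ 2)⁻¹)| *
            (A (fun i => (x i)⁻¹) * ENNReal.ofReal (Real.exp (c * L)) *
              ENNReal.ofReal (∏ i : Fin n, ‖(x i)⁻¹‖ ^ (2 * (χ - 1))))) *
            wexp c (∑ i : Fin n, V (x i)) := by ring
      _ = A x * wexp c (∑ i : Fin n, V (x i)) := by rw [hAB]
  -- main chain
  show Measure.map T
      ((volume.restrict S).withDensity fun x => A x * wexp c (∑ i : Fin n, V (x i))) =
    (volume.restrict S).withDensity h
  have h1 : (volume.restrict S).withDensity (fun x => A x * wexp c (∑ i : Fin n, V (x i))) =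
      (volume.restrict S).withDensity
        ((fun x => ENNReal.ofReal |(invDeriv n x).det|) * (h ∘ T)) :=
    withDensity_congr_ae
      ((ae_restrict_iff' hSmeas).2 (ae_of_all _ fun x hx => (hkey x hx).symm))
  rw [h1, withDensity_mul _ hJmeas (hhmeas.comp hTmeas),
    map_withDensity_comp _ hTmeas hhmeas,
    map_withDensity_abs_det_fderiv_eq_addHaar volume hSmeas.nullMeasurableSet
      (fun x hx => (hasFDerivAt_invmap hx).hasFDerivWithinAt) (hTinj.injOn),
    hTS]
end

section
/- Let q > 1 and χ ≥ 0, and let (mₙ)_{n≥1} be a sequence of real numbers with mₙ > 1 for all n, mₙ → 1, and mₙⁿ → ∞ as n → ∞. Then the sequences aₙ = ∑_{k=0}^{n−1} log( 1 − (k+1) mₙ^{2k+2−2q(n+χ)} / (q(n+χ)) ) and bₙ = −(1/(2q)) · 1/( mₙ^{2(q−1)n} (mₙ − 1) ) are asymptotically equivalent as n → ∞, i.e. aₙ / bₙ → 1. -/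
open Filter Topology

lemma sum_geom_deriv (x : ℝ) (n : ℕ) :
    (∑ k ∈ Finset.range n, ((k:ℝ)+1) * x^k) * (x-1)^2
      = n * x^(n+1) - ((n:ℝ)+1) * x^n + 1 := by
  induction n with
  | zero => simp
  | succ n ih =>
    rw [Finset.sum_range_succ, add_mul, ih]
    push_cast
    ring

lemma log_one_sub_bounds {t : ℝ} (h2 : t ≤ 1/2) :
    -t - 2*t^2 ≤ Real.log (1-t) ∧ Real.log (1-t) ≤ -t := by
  have h1 : 0 < 1 - t := by linarith
  constructor
  · have hinv : Real.log (1-t)⁻¹ ≤ (1-t)⁻¹ - 1 :=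
      Real.log_le_sub_one_of_pos (by positivity)
    have hle : (1-t)⁻¹ ≤ 1 + t + 2*t^2 := by
      rw [inv_eq_one_div, div_le_iff₀ h1]; nlinarith
    rw [Real.log_inv] at hinv; linarith
  · have := Real.log_le_sub_one_of_pos h1; linarith

lemma ratio_eq (q χ M : ℝ) (n : ℕ) (hn : 1 ≤ n) (hq : 1 < q) (hχ : 0 ≤ χ) (hM : 1 < M) :
    (∑ k ∈ Finset.range n, ((k:ℝ)+1) * M ^ (2*(k:ℝ)+2-2*q*((n:ℝ)+χ)) / (q*((n:ℝ)+χ))) /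
      ((1/(2*q)) * (1/(M ^ (2*(q-1)*(n:ℝ)) * (M - 1))))
    = (M^2 / (M ^ (2*q*χ) * (M+1)^2)) *
        (2*(M+1) * ((n:ℝ)/((n:ℝ)+χ)) +
          2 * (((M^(2*n) : ℝ))⁻¹ - 1)/(((n:ℝ)+χ)*(M-1))) := by
  have hM0 : (0:ℝ) < M := by linarith
  have hn1 : (1:ℝ) ≤ (n:ℝ) := by exact_mod_cast hn
  have hnχ : (0:ℝ) < (n:ℝ) + χ := by linarith
  have hq0 : (0:ℝ) < q := by linarith
  have hD : (0:ℝ) < q*((n:ℝ)+χ) := by positivity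
  have hsum : ∀ k ∈ Finset.range n,
      ((k:ℝ)+1) * M ^ (2*(k:ℝ)+2-2*q*((n:ℝ)+χ)) / (q*((n:ℝ)+χ))
      = (((k:ℝ)+1) * (M^2)^k) * (M ^ (2-2*q*((n:ℝ)+χ)) / (q*((n:ℝ)+χ))) := by
    intro k _
    rw [show (2*(k:ℝ)+2-2*q*((n:ℝ)+χ)) = (2*(k:ℝ)) + (2-2*q*((n:ℝ)+χ)) by ring,
      Real.rpow_add hM0,
      show (2*(k:ℝ)) = ((2*k : ℕ) : ℝ) by push_cast; ring,
      Real.rpow_natCast, pow_mul]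
    ring
  rw [Finset.sum_congr rfl hsum, ← Finset.sum_mul]
  have hx : (M^2 - 1) ≠ 0 := by nlinarith
  have hSig : (∑ k ∈ Finset.range n, ((k:ℝ)+1) * (M^2)^k)
      = ((n:ℝ) * (M^2)^(n+1) - ((n:ℝ)+1) * (M^2)^n + 1)/((M^2-1)^2) := by
    rw [eq_div_iff (pow_ne_zero 2 hx)]; exact sum_geom_deriv _ n
  have hW0 : (M^(2*n) : ℝ) ≠ 0 := by positivity
  have hG0 : M ^ (2*q*χ) ≠ 0 := (Real.rpow_pos_of_pos hM0 _).ne'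
  have hQ0 : M ^ (2*(q-1)*(n:ℝ)) ≠ 0 := (Real.rpow_pos_of_pos hM0 _).ne'
  have hm1 : M - 1 ≠ 0 := by linarith
  have hp1 : M + 1 ≠ 0 := by linarith
  have hPQ : M ^ (2-2*q*((n:ℝ)+χ))
      = M^2 / (M^(2*n) * M ^ (2*q*χ) * M ^ (2*(q-1)*(n:ℝ))) := by
    rw [eq_div_iff (by positivity)]
    rw [← Real.rpow_natCast M (2*n), ← Real.rpow_natCast M 2]
    rw [← Real.rpow_add hM0, ← Real.rpow_add hM0, ← Real.rpow_add hM0]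
    congr 1
    push_cast
    ring
  rw [hSig, hPQ]
  field_simp
  ring

theorem cdfEquivalence
    (q χ : ℝ) (hq : 1 < q) (hχ : 0 ≤ χ) (m : ℕ → ℝ)
    (hm1 : ∀ n, 1 < m n)
    (hml : Tendsto m atTop (𝓝 1))
    (hmn : Tendsto (fun n : ℕ => m n ^ n) atTop atTop) :
    Tendsto (fun n : ℕ =>
        (∑ k ∈ Finset.range n,
          Real.log (1 - ((k : ℝ) + 1) *
            m n ^ (2 * (k : ℝ) + 2 - 2 * q * ((n : ℝ) + χ)) / (q * ((n : ℝ) + χ)))) /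
        (-(1 / (2 * q)) * (1 / (m n ^ (2 * (q - 1) * (n : ℝ)) * (m n - 1)))))
      atTop (𝓝 1) := by
  have hq0 : (0:ℝ) < q := by linarith
  have hM0 : ∀ n, (0:ℝ) < m n := fun n => lt_trans one_pos (hm1 n)
  -- n * (m n - 1) → ∞
  have hv : Tendsto (fun n : ℕ => (n:ℝ) * (m n - 1)) atTop atTop := by
    have hlog : Tendsto (fun n : ℕ => Real.log (m n ^ n)) atTop atTop :=
      Real.tendsto_log_atTop.comp hmn
    refine tendsto_atTop_mono (fun n => ?_) hlog
    rw [Real.log_pow]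
    exact mul_le_mul_of_nonneg_left
      (by linarith [Real.log_le_sub_one_of_pos (hM0 n)]) (Nat.cast_nonneg n)
  -- T → 0
  have hT0 : Tendsto (fun n : ℕ => m n ^ (2*(n:ℝ) - 2*q*((n:ℝ)+χ)) / q) atTop (𝓝 0) := by
    have hub : ∀ n : ℕ, m n ^ (2*(n:ℝ) - 2*q*((n:ℝ)+χ)) / q
        ≤ ((m n ^ n : ℝ)) ^ (-(2*(q-1))) / q := by
      intro n
      have he : m n ^ (2*(n:ℝ) - 2*q*((n:ℝ)+χ)) ≤ m n ^ ((n:ℝ) * (-(2*(q-1)))) := by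
        apply Real.rpow_le_rpow_of_exponent_le (hm1 n).le
        have hn0 : (0:ℝ) ≤ (n:ℝ) := Nat.cast_nonneg n
        nlinarith
      have heq : m n ^ ((n:ℝ) * (-(2*(q-1)))) = ((m n ^ n : ℝ)) ^ (-(2*(q-1))) := by
        rw [Real.rpow_mul (hM0 n).le, Real.rpow_natCast]
      rw [heq] at he
      gcongr
    have hlim : Tendsto (fun n : ℕ => ((m n ^ n : ℝ)) ^ (-(2*(q-1))) / q) atTop (𝓝 0) := by
      have := ((tendsto_rpow_neg_atTop (by linarith : (0:ℝ) < 2*(q-1))).comp hmn).div_const q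
      simpa using this
    refine squeeze_zero (fun n => ?_) hub hlim
    have := Real.rpow_pos_of_pos (hM0 n) (2*(n:ℝ) - 2*q*((n:ℝ)+χ))
    positivity
  -- G → 1
  have hG1 : Tendsto (fun n : ℕ => m n ^ (2*q*χ)) atTop (𝓝 1) := by
    have hc : ContinuousAt (fun y : ℝ => y ^ (2*q*χ)) 1 :=
      Real.continuousAt_rpow_const 1 _ (Or.inl one_ne_zero)
    have h := hc.tendsto.comp hml
    simpa [Function.comp_def, Real.one_rpow] using h
  -- n/(n+χ) → 1
  have hnn : Tendsto (fun n : ℕ => (n:ℝ)/((n:ℝ)+χ)) atTop (𝓝 1) := by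
    have hinf : Tendsto (fun n : ℕ => (n:ℝ)+χ) atTop atTop :=
      tendsto_atTop_add_const_right _ χ tendsto_natCast_atTop_atTop
    have h0 : Tendsto (fun n : ℕ => χ * ((n:ℝ)+χ)⁻¹) atTop (𝓝 0) := by
      simpa using (hinf.inv_tendsto_atTop).const_mul χ
    have heq : ∀ᶠ n : ℕ in atTop, 1 - χ * ((n:ℝ)+χ)⁻¹ = (n:ℝ)/((n:ℝ)+χ) := by
      filter_upwards [eventually_ge_atTop 1] with n hn
      have hn1 : (1:ℝ) ≤ (n:ℝ) := by exact_mod_cast hn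
      have hpos : (0:ℝ) < (n:ℝ)+χ := by linarith
      field_simp
      ring
    have h1 : Tendsto (fun n : ℕ => 1 - χ * ((n:ℝ)+χ)⁻¹) atTop (𝓝 1) := by
      simpa using tendsto_const_nhds.sub h0
    exact Tendsto.congr' heq h1
  -- E → 0
  have hE0 : Tendsto
      (fun n : ℕ => ((((m n)^(2*n) : ℝ))⁻¹ - 1)/(((n:ℝ)+χ)*(m n - 1))) atTop (𝓝 0) := by
    apply squeeze_zero_norm' ?_ hv.inv_tendsto_atTop
    filter_upwards [eventually_ge_atTop 1] with n hn
    have hn1 : (1:ℝ) ≤ (n:ℝ) := by exact_mod_cast hn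
    have hm' : (0:ℝ) < m n - 1 := by linarith [hm1 n]
    have hW1 : (1:ℝ) ≤ (m n)^(2*n) := one_le_pow₀ (hm1 n).le
    have hWpos : (0:ℝ) < (m n)^(2*n) := by positivity
    have hnum : |(((m n)^(2*n) : ℝ))⁻¹ - 1| ≤ 1 := by
      rw [abs_sub_comm, abs_of_nonneg (by
        have : ((m n)^(2*n) : ℝ)⁻¹ ≤ 1 := inv_le_one_of_one_le₀ hW1
        linarith)]
      have h2 : (0:ℝ) < ((m n)^(2*n) : ℝ)⁻¹ := by positivity
      linarith
    have hden : (0:ℝ) < ((n:ℝ)+χ)*(m n - 1) := by positivity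
    rw [Real.norm_eq_abs, abs_div, abs_of_pos hden]
    have hdle : (n:ℝ)*(m n - 1) ≤ ((n:ℝ)+χ)*(m n - 1) := by nlinarith
    have hd0 : (0:ℝ) < (n:ℝ)*(m n - 1) := by positivity
    calc |(((m n)^(2*n) : ℝ))⁻¹ - 1| / (((n:ℝ)+χ)*(m n - 1))
        ≤ 1 / (((n:ℝ)+χ)*(m n - 1)) := by gcongr
      _ ≤ 1 / ((n:ℝ)*(m n - 1)) := by gcongr
      _ = ((n:ℝ)*(m n - 1))⁻¹ := one_div _
  -- F → 1
  have hF : Tendsto (fun n : ℕ => ((m n)^2 / (m n ^ (2*q*χ) * (m n + 1)^2)) *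
      (2*(m n + 1) * ((n:ℝ)/((n:ℝ)+χ)) +
        2 * ((((m n)^(2*n) : ℝ))⁻¹ - 1)/(((n:ℝ)+χ)*(m n - 1)))) atTop (𝓝 1) := by
    have ha : Tendsto (fun n : ℕ => (m n)^2) atTop (𝓝 1) := by
      simpa using hml.pow 2
    have hc : Tendsto (fun n : ℕ => (m n + 1)^2) atTop (𝓝 4) := by
      have := (hml.add_const 1).pow 2
      norm_num at this
      exact this
    have hb : Tendsto (fun n : ℕ => m n ^ (2*q*χ) * (m n + 1)^2) atTop (𝓝 4) := by
      simpa using hG1.mul hc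
    have h1 : Tendsto (fun n : ℕ => (m n)^2 / (m n ^ (2*q*χ) * (m n + 1)^2))
        atTop (𝓝 (1/4)) := ha.div hb (by norm_num)
    have hd : Tendsto (fun n : ℕ => 2*(m n + 1)) atTop (𝓝 4) := by
      have := (hml.add_const 1).const_mul 2
      norm_num at this
      exact this
    have h2 : Tendsto (fun n : ℕ => 2*(m n + 1) * ((n:ℝ)/((n:ℝ)+χ)) +
        2 * ((((m n)^(2*n) : ℝ))⁻¹ - 1)/(((n:ℝ)+χ)*(m n - 1))) atTop (𝓝 4) := by
      have he2 : Tendsto (fun n : ℕ =>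
          2 * ((((m n)^(2*n) : ℝ))⁻¹ - 1)/(((n:ℝ)+χ)*(m n - 1))) atTop (𝓝 0) := by
        have := hE0.const_mul 2
        norm_num at this
        simpa [mul_div_assoc] using this
      have := (hd.mul hnn).add he2
      norm_num at this
      exact this
    have := h1.mul h2
    norm_num at this
    exact this
  -- upper comparison function → 1
  have hupper : Tendsto (fun n : ℕ =>
      (1 + 2 * (m n ^ (2*(n:ℝ) - 2*q*((n:ℝ)+χ)) / q)) *
      (((m n)^2 / (m n ^ (2*q*χ) * (m n + 1)^2)) *
        (2*(m n + 1) * ((n:ℝ)/((n:ℝ)+χ)) +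
          2 * ((((m n)^(2*n) : ℝ))⁻¹ - 1)/(((n:ℝ)+χ)*(m n - 1))))) atTop (𝓝 1) := by
    have h1 : Tendsto (fun n : ℕ =>
        1 + 2 * (m n ^ (2*(n:ℝ) - 2*q*((n:ℝ)+χ)) / q)) atTop (𝓝 1) := by
      have := (hT0.const_mul 2).const_add 1
      norm_num at this
      exact this
    have := h1.mul hF
    norm_num at this
    exact this
  -- per-n sum bounds
  have hAS : ∀ n : ℕ, 1 ≤ n → m n ^ (2*(n:ℝ) - 2*q*((n:ℝ)+χ)) / q ≤ 1/2 →
      (∑ k ∈ Finset.range n, ((k:ℝ)+1) * m n ^ (2*(k:ℝ)+2-2*q*((n:ℝ)+χ)) / (q*((n:ℝ)+χ)))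
        ≤ -(∑ k ∈ Finset.range n, Real.log (1 - ((k:ℝ)+1) *
            m n ^ (2*(k:ℝ)+2-2*q*((n:ℝ)+χ)) / (q*((n:ℝ)+χ))))
      ∧ -(∑ k ∈ Finset.range n, Real.log (1 - ((k:ℝ)+1) *
            m n ^ (2*(k:ℝ)+2-2*q*((n:ℝ)+χ)) / (q*((n:ℝ)+χ))))
        ≤ (1 + 2*(m n ^ (2*(n:ℝ)-2*q*((n:ℝ)+χ))/q)) *
          (∑ k ∈ Finset.range n, ((k:ℝ)+1) *
            m n ^ (2*(k:ℝ)+2-2*q*((n:ℝ)+χ)) / (q*((n:ℝ)+χ))) := by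
    intro n hn hThalf
    have hn1 : (1:ℝ) ≤ (n:ℝ) := by exact_mod_cast hn
    have hnχ : (0:ℝ) < (n:ℝ)+χ := by linarith
    have hD : (0:ℝ) < q*((n:ℝ)+χ) := by positivity
    have hTnn : 0 ≤ m n ^ (2*(n:ℝ) - 2*q*((n:ℝ)+χ)) / q := by
      have := Real.rpow_nonneg (hM0 n).le (2*(n:ℝ)-2*q*((n:ℝ)+χ))
      positivity
    have htk : ∀ k ∈ Finset.range n,
        0 ≤ ((k:ℝ)+1) * m n ^ (2*(k:ℝ)+2-2*q*((n:ℝ)+χ)) / (q*((n:ℝ)+χ)) ∧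
        ((k:ℝ)+1) * m n ^ (2*(k:ℝ)+2-2*q*((n:ℝ)+χ)) / (q*((n:ℝ)+χ))
          ≤ m n ^ (2*(n:ℝ) - 2*q*((n:ℝ)+χ)) / q := by
      intro k hk
      have hk' : (k:ℝ)+1 ≤ (n:ℝ) := by
        have := Finset.mem_range.mp hk
        exact_mod_cast Nat.succ_le_of_lt this
      have hP := Real.rpow_nonneg (hM0 n).le (2*(k:ℝ)+2-2*q*((n:ℝ)+χ))
      have hPm := Real.rpow_nonneg (hM0 n).le (2*(n:ℝ)-2*q*((n:ℝ)+χ))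
      constructor
      · apply div_nonneg (mul_nonneg (by positivity) hP) hD.le
      · have hrp : m n ^ (2*(k:ℝ)+2-2*q*((n:ℝ)+χ)) ≤ m n ^ (2*(n:ℝ)-2*q*((n:ℝ)+χ)) :=
          Real.rpow_le_rpow_of_exponent_le (hm1 n).le (by linarith)
        have h1 : ((k:ℝ)+1) * m n ^ (2*(k:ℝ)+2-2*q*((n:ℝ)+χ))
            ≤ (n:ℝ) * m n ^ (2*(n:ℝ)-2*q*((n:ℝ)+χ)) :=
          mul_le_mul hk' hrp hP (by linarith)
        rw [div_le_div_iff₀ hD hq0]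
        have t1 := mul_le_mul_of_nonneg_right h1 hq0.le
        have t2 : (0:ℝ) ≤ m n ^ (2*(n:ℝ)-2*q*((n:ℝ)+χ)) * q * χ :=
          mul_nonneg (mul_nonneg hPm hq0.le) hχ
        nlinarith [t1, t2]
    have hlog : ∀ k ∈ Finset.range n,
        (-(1 + 2*(m n ^ (2*(n:ℝ)-2*q*((n:ℝ)+χ))/q))) *
          (((k:ℝ)+1) * m n ^ (2*(k:ℝ)+2-2*q*((n:ℝ)+χ)) / (q*((n:ℝ)+χ)))
          ≤ Real.log (1 - ((k:ℝ)+1) * m n ^ (2*(k:ℝ)+2-2*q*((n:ℝ)+χ)) / (q*((n:ℝ)+χ)))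
        ∧ Real.log (1 - ((k:ℝ)+1) * m n ^ (2*(k:ℝ)+2-2*q*((n:ℝ)+χ)) / (q*((n:ℝ)+χ)))
          ≤ -(((k:ℝ)+1) * m n ^ (2*(k:ℝ)+2-2*q*((n:ℝ)+χ)) / (q*((n:ℝ)+χ))) := by
      intro k hk
      obtain ⟨h0, hT'⟩ := htk k hk
      have ht2 : ((k:ℝ)+1) * m n ^ (2*(k:ℝ)+2-2*q*((n:ℝ)+χ)) / (q*((n:ℝ)+χ)) ≤ 1/2 :=
        le_trans hT' hThalf
      obtain ⟨hl, hu⟩ := log_one_sub_bounds ht2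
      refine ⟨?_, hu⟩
      have hsq : (((k:ℝ)+1) * m n ^ (2*(k:ℝ)+2-2*q*((n:ℝ)+χ)) / (q*((n:ℝ)+χ)))^2
          ≤ (m n ^ (2*(n:ℝ)-2*q*((n:ℝ)+χ))/q) *
            (((k:ℝ)+1) * m n ^ (2*(k:ℝ)+2-2*q*((n:ℝ)+χ)) / (q*((n:ℝ)+χ))) := by
        nlinarith [h0, hT']
      nlinarith [hl, hsq]
    constructor
    · have h := Finset.sum_le_sum (fun k hk => (hlog k hk).2)
      rw [Finset.sum_neg_distrib] at h
      linarith
    · have h := Finset.sum_le_sum (fun k hk => (hlog k hk).1)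
      rw [← Finset.mul_sum, neg_mul] at h
      linarith
  -- positivity of the (positive form of the) denominator
  have hB : ∀ n : ℕ, 0 < (1/(2*q)) * (1/(m n ^ (2*(q-1)*(n:ℝ)) * (m n - 1))) := by
    intro n
    have h1 := Real.rpow_pos_of_pos (hM0 n) (2*(q-1)*(n:ℝ))
    have h2 : 0 < m n - 1 := by linarith [hm1 n]
    exact mul_pos (by positivity) (one_div_pos.mpr (mul_pos h1 h2))
  have hrw : ∀ (a d : ℝ), a / (-(1/(2*q)) * d) = (-a) / ((1/(2*q)) * d) := by
    intro a d; rw [neg_mul, div_neg, neg_div]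
  have hTev : ∀ᶠ n : ℕ in atTop,
      m n ^ (2*(n:ℝ) - 2*q*((n:ℝ)+χ)) / q ≤ 1/2 :=
    hT0.eventually_le_const (by norm_num)
  refine tendsto_of_tendsto_of_tendsto_of_le_of_le' hF hupper ?_ ?_
  · -- lower bound
    filter_upwards [hTev, eventually_ge_atTop 1] with n hTn hn
    obtain ⟨h1, h2⟩ := hAS n hn hTn
    rw [hrw, ← ratio_eq q χ (m n) n hn hq hχ (hm1 n)]
    exact (div_le_div_iff_of_pos_right (hB n)).mpr (by linarith)
  · -- upper bound
    filter_upwards [hTev, eventually_ge_atTop 1] with n hTn hn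
    obtain ⟨h1, h2⟩ := hAS n hn hTn
    rw [hrw, ← ratio_eq q χ (m n) n hn hq hχ (hm1 n)]
    conv_rhs => rw [← mul_div_assoc]
    exact (div_le_div_iff_of_pos_right (hB n)).mpr (by linarith)
end

section
/- Let q > 1 and χ ≥ 0, and let (mₙ)_{n≥1} be a sequence of real numbers with mₙ > 1 for all n, mₙ → 1, mₙⁿ → ∞, and n(mₙ − 1)² → 0 as n → ∞. Then the sequences aₙ = ∑_{k=0}^{n−1} log( 1 − (k+1) mₙ^{2k+2−2q(n+χ)} / (q(n+χ)) ) and cₙ = −(1/(2q)) · 1/( e^{2(q−1) n (mₙ−1)} (mₙ − 1) ) are asymptotically equivalent as n → ∞, i.e. aₙ / cₙ → 1. -/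
open Filter Topology

private lemma geomDerivSum (r : ℝ) (n : ℕ) :
    (r - 1)^2 * ∑ k ∈ Finset.range n, ((k:ℝ)+1) * r^(k+1)
      = r * ((n:ℝ) * r^(n+1) - ((n:ℝ)+1) * r^n + 1) := by
  induction n with
  | zero => simp
  | succ n ih =>
    rw [Finset.sum_range_succ, mul_add]
    push_cast
    push_cast at ih
    linear_combination ih

private lemma prodAlg (mm rn W E q χ nr : ℝ) (hq : q ≠ 0) (hnχ : nr + χ ≠ 0)
    (hr : mm^2 - 1 ≠ 0) (hrn : rn ≠ 0) (hn : nr ≠ 0) :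
    2*(mm-1)/(mm^2-1) * (nr/(nr+χ)) * (E * (rn * mm^2 * W)) * (1 - (rn-1)/(nr*(mm^2-1)*rn))
      = (mm^2 * (nr*(rn*mm^2) - (nr+1)*rn + 1) / (mm^2-1)^2 * (W/(q*(nr+χ)))) * (2*q*(mm-1)*E) := by
  field_simp
  ring

private lemma ratioAlg (A S E ε q : ℝ) (hS : S ≠ 0) (hE : E ≠ 0) (hε : ε ≠ 0)
    (hq : q ≠ 0) :
    A / (-S) * (S * (2*q*ε*E)) = A / (-(1 / (2 * q)) * (1 / (E * ε))) := by
  field_simp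

theorem cdfFurtherEquivalence
    (q χ : ℝ) (hq : 1 < q) (hχ : 0 ≤ χ) (m : ℕ → ℝ)
    (hm1 : ∀ n, 1 < m n)
    (hml : Tendsto m atTop (𝓝 1))
    (hmn : Tendsto (fun n : ℕ => m n ^ n) atTop atTop)
    (hm2 : Tendsto (fun n : ℕ => (n : ℝ) * (m n - 1) ^ 2) atTop (𝓝 0)) :
    Tendsto (fun n : ℕ =>
        (∑ k ∈ Finset.range n,
          Real.log (1 - ((k : ℝ) + 1) *
            m n ^ (2 * (k : ℝ) + 2 - 2 * q * ((n : ℝ) + χ)) / (q * ((n : ℝ) + χ)))) /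
        (-(1 / (2 * q)) *
          (1 / (Real.exp (2 * (q - 1) * (n : ℝ) * (m n - 1)) * (m n - 1)))))
      atTop (𝓝 1) := by
  have hq0 : (0:ℝ) < q := by linarith
  have hm0 : ∀ n, (0:ℝ) < m n := fun n => lt_trans one_pos (hm1 n)
  have hε : ∀ n, (0:ℝ) < m n - 1 := fun n => by linarith [hm1 n]
  set x : ℕ → ℕ → ℝ := fun n k => ((k : ℝ) + 1) *
      m n ^ (2 * (k : ℝ) + 2 - 2 * q * ((n : ℝ) + χ)) / (q * ((n : ℝ) + χ)) with hx
  set S : ℕ → ℝ := fun n => ∑ k ∈ Finset.range n, x n k with hS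
  set a : ℕ → ℝ := fun n => ∑ k ∈ Finset.range n, Real.log (1 - x n k) with ha
  set E : ℕ → ℝ := fun n => Real.exp (2 * (q - 1) * (n : ℝ) * (m n - 1)) with hE
  set M : ℕ → ℝ := fun n => (m n ^ n) ^ (-(2*q-2)) / q with hM
  clear_value x S a E M
  -- basic limits
  have h_nlog : Tendsto (fun n : ℕ => (n:ℝ) * Real.log (m n)) atTop atTop :=
    (Real.tendsto_log_atTop.comp hmn).congr fun n => by
      simp [Function.comp, Real.log_pow]
  have h_nε : Tendsto (fun n : ℕ => (n:ℝ) * (m n - 1)) atTop atTop := by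
    refine tendsto_atTop_mono (fun n => ?_) h_nlog
    exact mul_le_mul_of_nonneg_left
      (by linarith [Real.log_le_sub_one_of_pos (hm0 n)]) (Nat.cast_nonneg n)
  have h_M : Tendsto M atTop (𝓝 0) := by
    have h1 : Tendsto (fun n : ℕ => (m n ^ n) ^ (-(2*q-2))) atTop (𝓝 0) :=
      (tendsto_rpow_neg_atTop (by linarith)).comp hmn
    have h2 := h1.div_const q
    rw [zero_div] at h2
    rw [hM]
    exact h2
  -- bounds on x
  have h_xpos : ∀ n, 1 ≤ n → ∀ k ∈ Finset.range n, 0 < x n k := by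
    intro n hn k _
    have hnχ : (0:ℝ) < (n:ℝ) + χ := by
      have : (1:ℝ) ≤ (n:ℝ) := by exact_mod_cast hn
      linarith
    rw [hx]
    exact div_pos (mul_pos (by positivity) (Real.rpow_pos_of_pos (hm0 n) _))
      (mul_pos hq0 hnχ)
  have h_xle : ∀ n, 1 ≤ n → ∀ k ∈ Finset.range n, x n k ≤ M n := by
    intro n hn k hk
    have hkn : (k:ℝ) + 1 ≤ (n:ℝ) := by
      have : (k:ℕ) + 1 ≤ n := Finset.mem_range.mp hk
      exact_mod_cast this
    have hn1 : (1:ℝ) ≤ (n:ℝ) := by exact_mod_cast hn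
    have hnχ : (0:ℝ) < (n:ℝ) + χ := by linarith
    have hrw : ((m n : ℝ) ^ n) ^ (-(2*q-2)) = m n ^ ((n:ℝ) * (-(2*q-2))) := by
      rw [← Real.rpow_natCast (m n) n, ← Real.rpow_mul (le_of_lt (hm0 n))]
    have hexp : m n ^ (2 * (k : ℝ) + 2 - 2 * q * ((n : ℝ) + χ))
        ≤ m n ^ ((n:ℝ) * (-(2*q-2))) := by
      apply Real.rpow_le_rpow_left_iff (hm1 n) |>.mpr
      nlinarith
    have hXpos : (0:ℝ) < m n ^ (2 * (k : ℝ) + 2 - 2 * q * ((n : ℝ) + χ)) :=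
      Real.rpow_pos_of_pos (hm0 n) _
    have hYpos : (0:ℝ) < m n ^ ((n:ℝ) * (-(2*q-2))) := Real.rpow_pos_of_pos (hm0 n) _
    simp only [hx, hM]
    rw [hrw, div_le_div_iff₀ (by positivity) hq0]
    have h1 := mul_le_mul hkn hexp (le_of_lt hXpos) (by linarith : (0:ℝ) ≤ (n:ℝ))
    have h2 : (n:ℝ) * m n ^ ((n:ℝ) * (-(2*q-2)))
        ≤ ((n:ℝ)+χ) * m n ^ ((n:ℝ) * (-(2*q-2))) := by nlinarith
    have h3 := mul_le_mul_of_nonneg_right (h1.trans h2) hq0.le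
    nlinarith [h3]
  have h_Spos : ∀ n, 1 ≤ n → 0 < S n := by
    intro n hn
    rw [hS]
    exact Finset.sum_pos (h_xpos n hn) (by simpa using Nat.one_le_iff_ne_zero.mp hn)
  -- part 1 : a / (-S) → 1
  have h1 : Tendsto (fun n => a n / (-S n)) atTop (𝓝 1) := by
    have hM12 : ∀ᶠ n in atTop, M n < 1/2 :=
      h_M.eventually (Iio_mem_nhds (by norm_num))
    have hub : Tendsto (fun n => (1 - M n)⁻¹) atTop (𝓝 1) := by
      have h : Tendsto (fun n : ℕ => (1 - M n)⁻¹) atTop (𝓝 (1 - 0)⁻¹) :=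
        ((tendsto_const_nhds (x := (1:ℝ))).sub h_M).inv₀ (by norm_num)
      norm_num at h
      exact h
    refine tendsto_of_tendsto_of_tendsto_of_le_of_le'
      (tendsto_const_nhds : Tendsto (fun _ : ℕ => (1:ℝ)) atTop (𝓝 1)) hub ?_ ?_
    · filter_upwards [hM12, eventually_ge_atTop 1] with n hMn hn
      have hSpos := h_Spos n hn
      have hle : a n ≤ -S n := by
        simp only [ha, hS]
        rw [← Finset.sum_neg_distrib]
        refine Finset.sum_le_sum fun k hk => ?_
        have hxp := h_xpos n hn k hk
        have hx1 : 0 < 1 - x n k := by linarith [h_xle n hn k hk]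
        have := Real.log_le_sub_one_of_pos hx1
        linarith
      rw [div_neg, le_neg, div_le_iff₀ hSpos]
      linarith
    · filter_upwards [hM12, eventually_ge_atTop 1] with n hMn hn
      have hSpos := h_Spos n hn
      have h1M : (0:ℝ) < 1 - M n := by linarith
      have hge : -(S n / (1 - M n)) ≤ a n := by
        have hsum : ∑ k ∈ Finset.range n, -(x n k / (1 - M n))
            = -(S n / (1 - M n)) := by
          rw [Finset.sum_neg_distrib, ← Finset.sum_div, hS]
        rw [← hsum, ha]
        refine Finset.sum_le_sum fun k hk => ?_
        have hxp := h_xpos n hn k hk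
        have hxM := h_xle n hn k hk
        have hx1 : 0 < 1 - x n k := by linarith
        have hlog := Real.log_le_sub_one_of_pos (inv_pos.mpr hx1)
        rw [Real.log_inv] at hlog
        have hinv : (1 - x n k)⁻¹ - 1 = x n k / (1 - x n k) := by field_simp; ring
        have hdiv : x n k / (1 - x n k) ≤ x n k / (1 - M n) :=
          div_le_div_of_nonneg_left hxp.le h1M (by linarith)
        linarith
      rw [div_neg, neg_le, le_div_iff₀ hSpos]
      have heq : -(1 - M n)⁻¹ * S n = -(S n/(1 - M n)) := by ring
      linarith
  -- part 2 pieces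
  have hP1 : Tendsto (fun n : ℕ => 2*(m n - 1)/(m n^2 - 1)) atTop (𝓝 1) := by
    have h : Tendsto (fun n : ℕ => 2/(m n + 1)) atTop (𝓝 (2/(1+1))) :=
      tendsto_const_nhds.div (hml.add tendsto_const_nhds) (by norm_num)
    norm_num at h
    refine h.congr fun n => ?_
    have ha1 : m n + 1 ≠ 0 := by have := hm0 n; intro hc; linarith
    have ha2 : m n^2 - 1 ≠ 0 := by nlinarith [hm1 n]
    rw [div_eq_div_iff ha1 ha2]
    ring
  have hP2 : Tendsto (fun n : ℕ => (n:ℝ)/((n:ℝ)+χ)) atTop (𝓝 1) := by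
    have hden : Tendsto (fun n : ℕ => (n:ℝ)+χ) atTop atTop :=
      tendsto_atTop_add_const_right _ χ tendsto_natCast_atTop_atTop
    have h0 : Tendsto (fun n : ℕ => χ/((n:ℝ)+χ)) atTop (𝓝 0) :=
      tendsto_const_nhds.div_atTop hden
    have h := (tendsto_const_nhds (x := (1:ℝ))).sub h0
    rw [sub_zero] at h
    refine h.congr' ?_
    filter_upwards [eventually_ge_atTop 1] with n hn
    have hnχ : (0:ℝ) < (n:ℝ)+χ := by
      have : (1:ℝ) ≤ (n:ℝ) := by exact_mod_cast hn
      linarith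
    field_simp
    ring
  have hL0 : Tendsto (fun n : ℕ => Real.log (m n)) atTop (𝓝 0) := by
    have h := (Real.continuousAt_log one_ne_zero).tendsto.comp hml
    simpa [Function.comp_def] using h
  have h_gap : Tendsto (fun n : ℕ => (n:ℝ)*(m n - 1 - Real.log (m n))) atTop (𝓝 0) := by
    refine tendsto_of_tendsto_of_tendsto_of_le_of_le
      (tendsto_const_nhds (x := (0:ℝ))) hm2 (fun n => ?_) (fun n => ?_)
    · exact mul_nonneg (Nat.cast_nonneg n)
        (by linarith [Real.log_le_sub_one_of_pos (hm0 n)])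
    · refine mul_le_mul_of_nonneg_left ?_ (Nat.cast_nonneg n)
      have h := Real.one_sub_inv_le_log_of_pos (hm0 n)
      have hinv : (m n)⁻¹ * m n = 1 := inv_mul_cancel₀ (ne_of_gt (hm0 n))
      nlinarith [hm1 n, inv_pos.mpr (hm0 n), sq_nonneg (m n - 1),
        mul_nonneg (sq_nonneg (m n - 1)) (le_of_lt (hε n))]
  have hP3 : Tendsto (fun n : ℕ => E n * m n ^ (2*(n:ℝ)+2-2*q*((n:ℝ)+χ)))
      atTop (𝓝 1) := by
    have hf : Tendsto (fun n : ℕ => 2*(q-1)*((n:ℝ)*(m n - 1 - Real.log (m n)))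
        + (2-2*q*χ)*Real.log (m n)) atTop (𝓝 0) := by
      have h := ((tendsto_const_nhds (x := 2*(q-1))).mul h_gap).add
        ((tendsto_const_nhds (x := 2-2*q*χ)).mul hL0)
      simpa using h
    have h := (Real.continuous_exp.tendsto 0).comp hf
    rw [Real.exp_zero] at h
    refine h.congr fun n => ?_
    simp only [hE, Function.comp]
    rw [Real.rpow_def_of_pos (hm0 n), ← Real.exp_add]
    exact congrArg Real.exp (by ring)
  have hP4 : Tendsto (fun n : ℕ =>
      1 - ((m n^2)^n - 1)/((n:ℝ)*(m n^2-1)*(m n^2)^n)) atTop (𝓝 1) := by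
    have hd : Tendsto (fun n : ℕ => (n:ℝ)*(m n^2 -1)) atTop atTop := by
      refine tendsto_atTop_mono (fun n => ?_) h_nε
      exact mul_le_mul_of_nonneg_left (by nlinarith [hm1 n]) (Nat.cast_nonneg n)
    have hinv : Tendsto (fun n : ℕ => ((n:ℝ)*(m n^2-1))⁻¹) atTop (𝓝 0) :=
      hd.inv_tendsto_atTop
    have hu : Tendsto (fun n : ℕ =>
        ((m n^2)^n - 1)/((n:ℝ)*(m n^2-1)*(m n^2)^n)) atTop (𝓝 0) := by
      refine tendsto_of_tendsto_of_tendsto_of_le_of_le'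
        (tendsto_const_nhds (x := (0:ℝ))) hinv ?_ ?_
      · filter_upwards [eventually_ge_atTop 1] with n hn
        have hn1 : (0:ℝ) < (n:ℝ) := by exact_mod_cast hn
        have hr : (0:ℝ) < m n^2 - 1 := by nlinarith [hm1 n]
        have hr1 : (1:ℝ) ≤ m n^2 := by nlinarith [hm1 n]
        have hnum : (0:ℝ) ≤ (m n^2)^n - 1 := by
          have := one_le_pow₀ hr1 (n := n); linarith
        have hden : (0:ℝ) < (n:ℝ)*(m n^2-1)*(m n^2)^n :=
          mul_pos (mul_pos hn1 hr) (pow_pos (pow_pos (hm0 n) 2) n)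
        exact div_nonneg hnum hden.le
      · filter_upwards [eventually_ge_atTop 1] with n hn
        have hn1 : (0:ℝ) < (n:ℝ) := by exact_mod_cast hn
        have hr : (0:ℝ) < m n^2 - 1 := by nlinarith [hm1 n]
        have hrn : (0:ℝ) < (m n^2)^n := pow_pos (pow_pos (hm0 n) 2) n
        rw [div_le_iff₀ (mul_pos (mul_pos hn1 hr) hrn)]
        have hcalc : ((n:ℝ)*(m n^2-1))⁻¹ * ((n:ℝ)*(m n^2-1)*(m n^2)^n)
            = (m n^2)^n := by
          field_simp
        rw [hcalc]
        linarith
    have h := (tendsto_const_nhds (x := (1:ℝ))).sub hu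
    rw [sub_zero] at h
    exact h
  -- part 2 : S * (2 q ε E) → 1
  have h2 : Tendsto (fun n => S n * (2*q*(m n - 1)*E n)) atTop (𝓝 1) := by
    have hP := ((hP1.mul hP2).mul hP3).mul hP4
    rw [show ((1:ℝ)*1*1*1) = 1 by norm_num] at hP
    refine hP.congr' ?_
    filter_upwards [eventually_ge_atTop 1] with n hn
    have hn1 : (1:ℝ) ≤ (n:ℝ) := by exact_mod_cast hn
    have hnχ : (0:ℝ) < (n:ℝ)+χ := by linarith
    have hr : (0:ℝ) < m n^2 - 1 := by nlinarith [hm1 n]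
    have hrn : (0:ℝ) < (m n^2)^n := pow_pos (pow_pos (hm0 n) 2) n
    have hxre : ∀ k:ℕ, m n ^ (2*(k:ℝ)+2-2*q*((n:ℝ)+χ))
        = (m n^2)^(k+1) * m n ^ (-(2*q*((n:ℝ)+χ))) := by
      intro k
      rw [show (2*(k:ℝ)+2-2*q*((n:ℝ)+χ))
          = ((2*(k+1):ℕ):ℝ) + (-(2*q*((n:ℝ)+χ))) by push_cast; ring,
        Real.rpow_add (hm0 n), Real.rpow_natCast, pow_mul]
    have hSn : S n = (∑ k ∈ Finset.range n, ((k:ℝ)+1)*(m n^2)^(k+1)) *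
        (m n ^ (-(2*q*((n:ℝ)+χ))) / (q*((n:ℝ)+χ))) := by
      simp only [hS, hx]
      rw [Finset.sum_mul]
      refine Finset.sum_congr rfl fun k _ => ?_
      rw [hxre k]
      ring
    have hG : ∑ k ∈ Finset.range n, ((k:ℝ)+1)*(m n^2)^(k+1)
        = m n^2 * ((n:ℝ)*(m n^2)^(n+1) - ((n:ℝ)+1)*(m n^2)^n + 1) / (m n^2 - 1)^2 := by
      rw [eq_div_iff (pow_ne_zero 2 (ne_of_gt hr)), mul_comm]
      exact geomDerivSum _ n
    have hn0 : (n:ℝ) ≠ 0 := by linarith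
    rw [hSn, hG, hxre n, pow_succ]
    exact prodAlg (m n) ((m n^2)^n) (m n ^ (-(2*q*((n:ℝ)+χ)))) (E n) q χ (n:ℝ)
      (ne_of_gt hq0) (ne_of_gt hnχ) (ne_of_gt hr) (ne_of_gt hrn) hn0
  -- combine
  have h3 := h1.mul h2
  rw [one_mul] at h3
  refine h3.congr' ?_
  filter_upwards [eventually_ge_atTop 1] with n hn
  have hEne : E n ≠ 0 := by simp only [hE]; exact Real.exp_ne_zero _
  have hsum : (∑ k ∈ Finset.range n, Real.log (1 - ((k:ℝ) + 1) *
      m n ^ (2 * (k:ℝ) + 2 - 2 * q * ((n:ℝ) + χ)) / (q * ((n:ℝ) + χ)))) = a n := by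
    simp only [ha, hx]
  have hexp : Real.exp (2 * (q - 1) * (n:ℝ) * (m n - 1)) = E n := by rw [hE]
  rw [hsum, hexp]
  exact ratioAlg (a n) (S n) (E n) (m n - 1) q (ne_of_gt (h_Spos n hn))
    hEne (ne_of_gt (hε n)) (ne_of_gt hq0)
end

section
/- Let χ ≥ 0, R ∈ (0,1), and let V : [0,1] → [0,∞] be measurable with V(r) = 0 for every r ∈ [R,1]. For n ≥ 1 and 0 ≤ k ≤ n−1 define a_k⁽ⁿ⁾ > 0 by (a_k⁽ⁿ⁾)^{−1} = 2π ∫_0^1 r^{2k+1} e^{−2(n+χ) V(r)} dr (with e^{−∞} = 0), and define Kₙ(z, w) = ∑_{k=0}^{n−1} a_k⁽ⁿ⁾ z^k (conj w)^k. Then the functions (α, β) ↦ (π/n²) Kₙ(1 − α/n, 1 − β/n) converge, as n → ∞, uniformly on every compact subset of ℂ × ℂ to the function (α, β) ↦ ∫_0^1 t e^{−(α + conj β) t} dt. -/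
open Filter Topology MeasureTheory

noncomputable def expNegE (v : ENNReal) : ℝ :=
  if v = ⊤ then 0 else Real.exp (-v.toReal)

lemma expNegE_nonneg (v : ENNReal) : 0 ≤ expNegE v := by
  unfold expNegE; split
  · exact le_refl 0
  · positivity

lemma expNegE_le_one (v : ENNReal) : expNegE v ≤ 1 := by
  unfold expNegE; split
  · norm_num
  · exact Real.exp_le_one_iff.2 (by simp [ENNReal.toReal_nonneg])

lemma expNegE_zero : expNegE 0 = 1 := by simp [expNegE]

lemma measurable_expNegE : Measurable expNegE := by
  unfold expNegE
  exact Measurable.ite (measurableSet_singleton ⊤) measurable_const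
    ((Real.measurable_exp.comp (ENNReal.measurable_toReal.neg)))

lemma integrable_aux (c : ENNReal) (V : ℝ → ENNReal) (hVmeas : Measurable V) (k : ℕ) :
    IntegrableOn (fun r : ℝ => r ^ (2*k+1) * expNegE (c * V r)) (Set.Icc (0:ℝ) 1) := by
  have hmeas : Measurable (fun r : ℝ => r ^ (2*k+1) * expNegE (c * V r)) :=
    (measurable_id.pow_const _).mul (measurable_expNegE.comp (measurable_const.mul hVmeas))
  refine Integrable.mono' (integrable_const 1) hmeas.aestronglyMeasurable ?_
  refine (ae_restrict_iff' measurableSet_Icc).2 (Filter.Eventually.of_forall fun r hr => ?_)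
  have h0 : (0:ℝ) ≤ r := hr.1
  have h1 : r ≤ 1 := hr.2
  have := expNegE_nonneg (c * V r)
  have := expNegE_le_one (c * V r)
  rw [Real.norm_eq_abs, abs_of_nonneg (by positivity)]
  calc r ^ (2*k+1) * expNegE (c * V r) ≤ 1 * 1 := by
        apply mul_le_mul (by exact pow_le_one₀ h0 h1) ‹_› ‹_› zero_le_one
    _ = 1 := by ring

lemma int_bounds (R : ℝ) (hR0 : 0 < R) (hR1 : R < 1) (c : ENNReal) (V : ℝ → ENNReal)
    (hVmeas : Measurable V) (hV0 : ∀ r ∈ Set.Icc R 1, V r = 0) (k : ℕ) :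
    (1 - R^(2*k+2))/(2*(k:ℝ)+2) ≤ (∫ r in Set.Icc (0:ℝ) 1, r ^ (2*k+1) * expNegE (c * V r))
    ∧ (∫ r in Set.Icc (0:ℝ) 1, r ^ (2*k+1) * expNegE (c * V r)) ≤ 1/(2*(k:ℝ)+2) := by
  have hint := integrable_aux c V hVmeas k
  have hpow : ∀ a b : ℝ, a ≤ b → ∫ r in Set.Icc a b, r ^ (2*k+1) = (b^(2*k+2) - a^(2*k+2))/(2*(k:ℝ)+2) := by
    intro a b hab
    rw [integral_Icc_eq_integral_Ioc, ← intervalIntegral.integral_of_le hab, integral_pow]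
    push_cast; ring_nf
  constructor
  · have h1 : (∫ r in Set.Icc R 1, r ^ (2*k+1) * expNegE (c * V r))
        ≤ ∫ r in Set.Icc (0:ℝ) 1, r ^ (2*k+1) * expNegE (c * V r) := by
      refine setIntegral_mono_set hint ?_ ?_
      · refine (ae_restrict_iff' measurableSet_Icc).2 (Filter.Eventually.of_forall fun r hr => ?_)
        exact mul_nonneg (pow_nonneg hr.1 _) (expNegE_nonneg _)
      · exact (Set.Icc_subset_Icc (le_of_lt hR0) le_rfl).eventuallyLE
    have heq : (∫ r in Set.Icc R 1, r ^ (2*k+1) * expNegE (c * V r))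
        = ∫ r in Set.Icc R 1, r ^ (2*k+1) := by
      refine setIntegral_congr_fun measurableSet_Icc fun r hr => ?_
      rw [hV0 r hr, mul_zero, expNegE_zero, mul_one]
    rw [heq, hpow R 1 hR1.le] at h1
    simpa using h1
  · have h2 : (∫ r in Set.Icc (0:ℝ) 1, r ^ (2*k+1) * expNegE (c * V r))
        ≤ ∫ r in Set.Icc (0:ℝ) 1, r ^ (2*k+1) := by
      refine setIntegral_mono_on hint ((continuous_pow (2*k+1)).integrableOn_Icc) measurableSet_Icc fun r hr => ?_
      have h0 : (0:ℝ) ≤ r := hr.1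
      calc r ^ (2*k+1) * expNegE (c * V r) ≤ r ^ (2*k+1) * 1 :=
            mul_le_mul_of_nonneg_left (expNegE_le_one _) (by positivity)
        _ = r ^ (2*k+1) := mul_one _
    rw [hpow 0 1 zero_le_one] at h2
    simpa using h2

lemma coeff_bound (R : ℝ) (hR0 : 0 < R) (hR1 : R < 1) (k : ℕ) (I : ℝ)
    (hlow : (1 - R^(2*k+2))/(2*(k:ℝ)+2) ≤ I) (hup : I ≤ 1/(2*(k:ℝ)+2)) :
    ((k:ℝ)+1) ≤ Real.pi * (2*Real.pi*I)⁻¹ ∧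
    Real.pi * (2*Real.pi*I)⁻¹ ≤ ((k:ℝ)+1) + ((k:ℝ)+1)*R^(2*k+2)/(1-R^2) := by
  have hπ := Real.pi_pos
  set x := R^(2*k+2) with hxdef
  set K := (k:ℝ)+1 with hKdef
  have hK0 : 0 < K := by positivity
  have hRk : x < 1 := pow_lt_one₀ hR0.le hR1 (by omega)
  have hRk0 : 0 < x := pow_pos hR0 _
  have hR2 : x ≤ R^2 := pow_le_pow_of_le_one hR0.le hR1.le (by omega)
  have hR2' : (0:ℝ) < 1 - R^2 := by nlinarith
  have hx1 : (0:ℝ) < 1 - x := by linarith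
  have h2K : 2*(k:ℝ)+2 = 2*K := by rw [hKdef]; ring
  rw [h2K] at hlow hup
  have hI0 : 0 < I := lt_of_lt_of_le (by positivity) hlow
  have hb : Real.pi * (2*Real.pi*I)⁻¹ = 1/(2*I) := by
    rw [mul_inv, mul_inv]
    field_simp
  rw [hb]
  constructor
  · rw [le_div_iff₀ (by positivity)]
    rw [le_div_iff₀ (by positivity)] at hup
    nlinarith
  · have step1 : 1/(2*I) ≤ K/(1-x) := by
      rw [div_le_div_iff₀ (by positivity) hx1]
      rw [div_le_iff₀ (by positivity)] at hlow
      nlinarith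
    have step2 : K/(1-x) = K + K*x/(1-x) := by field_simp; ring
    have step3 : K*x/(1-x) ≤ K*x/(1-R^2) := by
      apply div_le_div_of_nonneg_left (by positivity) hR2' (by linarith)
    linarith

lemma pow_sub_pow_norm (a b : ℂ) (r : ℝ) (hr : 1 ≤ r) (ha : ‖a‖ ≤ r) (hb : ‖b‖ ≤ r) (k : ℕ) :
    ‖a^k - b^k‖ ≤ k * r^k * ‖a - b‖ := by
  have hr0 : (0:ℝ) ≤ r := le_trans zero_le_one hr
  induction k with
  | zero => simp
  | succ k ih =>
    have hdecomp : a^(k+1) - b^(k+1) = a^k*(a-b) + (a^k - b^k)*b := by ring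
    rw [hdecomp]
    have h1 : ‖a^k*(a-b)‖ ≤ r^k * ‖a-b‖ := by
      rw [norm_mul, norm_pow]
      gcongr
    have h2 : ‖(a^k - b^k)*b‖ ≤ (k * r^k * ‖a-b‖) * r := by
      rw [norm_mul]
      exact mul_le_mul ih hb (norm_nonneg _) (by positivity)
    calc ‖a^k*(a-b) + (a^k - b^k)*b‖ ≤ ‖a^k*(a-b)‖ + ‖(a^k - b^k)*b‖ := norm_add_le _ _
      _ ≤ r^k * ‖a-b‖ + (k * r^k * ‖a-b‖) * r := add_le_add h1 h2
      _ ≤ ((k:ℝ)+1) * r^(k+1) * ‖a - b‖ := by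
          have hp : r^k ≤ r^(k+1) := pow_le_pow_right₀ hr (Nat.le_succ k)
          have h3 : (k * r^k * ‖a-b‖) * r = k * r^(k+1) * ‖a-b‖ := by ring
          rw [h3]
          nlinarith [norm_nonneg (a-b), pow_nonneg hr0 k, pow_nonneg hr0 (k+1)]
      _ = (↑(k+1)) * r^(k+1) * ‖a - b‖ := by push_cast; ring

lemma prod_diff_norm (x₁ x₂ y₁ y₂ : ℂ) :
    ‖x₁*y₁ - x₂*y₂‖ ≤ ‖x₁-x₂‖*‖y₁‖ + ‖x₂‖*‖y₁-y₂‖ := by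
  have : x₁*y₁ - x₂*y₂ = (x₁-x₂)*y₁ + x₂*(y₁-y₂) := by ring
  rw [this]
  calc ‖(x₁-x₂)*y₁ + x₂*(y₁-y₂)‖ ≤ ‖(x₁-x₂)*y₁‖ + ‖x₂*(y₁-y₂)‖ := norm_add_le _ _
    _ = ‖x₁-x₂‖*‖y₁‖ + ‖x₂‖*‖y₁-y₂‖ := by rw [norm_mul, norm_mul]

lemma exp_norm_le (z : ℂ) : ‖Complex.exp z‖ ≤ Real.exp ‖z‖ := by
  rw [Complex.norm_exp]
  exact Real.exp_le_exp.2 (Complex.re_le_norm z)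

lemma riemann_est (s : ℂ) (M : ℝ) (hM : 1 ≤ M) (hs : ‖s‖ ≤ 2*M) (n : ℕ) (hn : 2*M ≤ (n:ℝ)) :
    ‖(∑ k ∈ Finset.range n, ((((k:ℝ)+1)/(n:ℝ)^2 : ℝ) : ℂ) * Complex.exp (-s * (((k:ℝ)/(n:ℝ) : ℝ) : ℂ)))
      - ∫ t in (0:ℝ)..1, (t:ℂ) * Complex.exp (-s * t)‖
    ≤ Real.exp (2*M) * (1 + 4*M) / n := by
  have hn0 : (0:ℝ) < n := lt_of_lt_of_le (by linarith) hn
  have hnn : n ≠ 0 := (Nat.cast_pos.mp hn0).ne'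
  set f : ℝ → ℂ := fun t => (t:ℂ) * Complex.exp (-s * t) with hf
  have hfc : Continuous f :=
    Complex.continuous_ofReal.mul
      (Complex.continuous_exp.comp (continuous_const.mul Complex.continuous_ofReal))
  set a : ℕ → ℝ := fun k => (k:ℝ)/(n:ℝ) with ha
  have hsum : ∑ k ∈ Finset.range n, ∫ t in a k..a (k+1), f t = ∫ t in (0:ℝ)..1, f t := by
    rw [intervalIntegral.sum_integral_adjacent_intervals
      (fun k _ => hfc.intervalIntegrable _ _)]
    have h0 : a 0 = 0 := by simp [ha]
    have h1 : a n = 1 := by simp only [ha]; exact div_self (ne_of_gt hn0)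
    rw [h0, h1]
  rw [← hsum, ← Finset.sum_sub_distrib]
  set D : ℝ := Real.exp (2*M) * (1 + 4*M) with hD
  have hD0 : 0 ≤ D := by positivity
  have key : ∀ k ∈ Finset.range n,
      ‖((((k:ℝ)+1)/(n:ℝ)^2 : ℝ) : ℂ) * Complex.exp (-s * (((k:ℝ)/(n:ℝ) : ℝ) : ℂ))
        - ∫ t in a k..a (k+1), f t‖ ≤ D/n * (1/n) := by
    intro k hk
    have hkn : k < n := Finset.mem_range.1 hk
    have hkn' : (k:ℝ) + 1 ≤ (n:ℝ) := by exact_mod_cast Nat.succ_le_of_lt hkn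
    have hk0 : (0:ℝ) ≤ (k:ℝ) := Nat.cast_nonneg k
    have hle : a k ≤ a (k+1) := by
      simp only [ha]; push_cast; gcongr; linarith
    have hak0 : 0 ≤ a k := by simp only [ha]; positivity
    have hak1 : a (k+1) ≤ 1 := by
      simp only [ha]; rw [div_le_one hn0]; push_cast; linarith
    have hlen : a (k+1) - a k = 1/(n:ℝ) := by
      simp only [ha]; push_cast; field_simp; ring
    set E0 : ℂ := Complex.exp (-s * (((k:ℝ)/(n:ℝ) : ℝ) : ℂ)) with hE0def
    have hconst : ((((k:ℝ)+1)/(n:ℝ)^2 : ℝ) : ℂ) * E0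
        = ∫ _t in a k..a (k+1), ((((k:ℝ)+1)/(n:ℝ) : ℝ) : ℂ) * E0 := by
      rw [intervalIntegral.integral_const, hlen, Complex.real_smul, ← mul_assoc,
        ← Complex.ofReal_mul]
      have : 1/(n:ℝ) * (((k:ℝ)+1)/(n:ℝ)) = ((k:ℝ)+1)/(n:ℝ)^2 := by
        rw [div_mul_div_comm, one_mul, ← sq]
      rw [this]
    rw [hconst, ← intervalIntegral.integral_sub intervalIntegrable_const
      (hfc.intervalIntegrable _ _)]
    have hpt : ∀ t ∈ Set.uIoc (a k) (a (k+1)),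
        ‖((((k:ℝ)+1)/(n:ℝ) : ℝ) : ℂ) * E0 - f t‖ ≤ D/n := by
      intro t ht
      rw [Set.uIoc_of_le hle] at ht
      have ht1 : a k < t := ht.1
      have ht2 : t ≤ a (k+1) := ht.2
      have ht1' : (k:ℝ)/(n:ℝ) < t := by simpa [ha] using ht1
      have ht2' : t ≤ ((k:ℝ)+1)/(n:ℝ) := by
        have := ht2; simp only [ha] at this; push_cast at this; exact this
      have ht0 : 0 ≤ t := le_trans hak0 ht1.le
      have htle1 : t ≤ 1 := le_trans ht2 hak1
      have hkn1 : (k:ℝ)/(n:ℝ) ≤ 1 := by rw [div_le_one hn0]; linarith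
      have hE0 : ‖E0‖ ≤ Real.exp (2*M) := by
        refine le_trans (exp_norm_le _) (Real.exp_le_exp.2 ?_)
        rw [norm_mul, norm_neg, Complex.norm_real, Real.norm_eq_abs,
          abs_of_nonneg (by positivity)]
        calc ‖s‖ * ((k:ℝ)/(n:ℝ)) ≤ (2*M) * 1 :=
              mul_le_mul hs hkn1 (by positivity) (by linarith)
          _ = 2*M := by ring
      have hEt : ‖Complex.exp (-s * (t:ℂ))‖ ≤ Real.exp (2*M) := by
        refine le_trans (exp_norm_le _) (Real.exp_le_exp.2 ?_)
        rw [norm_mul, norm_neg, Complex.norm_real, Real.norm_eq_abs, abs_of_nonneg ht0]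
        calc ‖s‖ * t ≤ (2*M) * 1 := mul_le_mul hs htle1 ht0 (by linarith)
          _ = 2*M := by ring
      have hwd : t - (k:ℝ)/(n:ℝ) ≤ 1/n := by
        have : (k:ℝ)/(n:ℝ) + 1/n = ((k:ℝ)+1)/n := by field_simp
        linarith
      have hw : ‖s * ((t:ℂ) - (((k:ℝ)/(n:ℝ) : ℝ) : ℂ))‖ ≤ 2*M/n := by
        rw [norm_mul, ← Complex.ofReal_sub, Complex.norm_real, Real.norm_eq_abs,
          abs_of_nonneg (by linarith)]
        calc ‖s‖ * (t - (k:ℝ)/(n:ℝ)) ≤ (2*M) * (1/n) :=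
              mul_le_mul hs hwd (by linarith) (by linarith)
          _ = 2*M/n := by ring
      have hw1 : ‖s * ((t:ℂ) - (((k:ℝ)/(n:ℝ) : ℝ) : ℂ))‖ ≤ 1 := by
        refine le_trans hw ?_
        rw [div_le_one hn0]; linarith
      have hdiff : ‖E0 - Complex.exp (-s * (t:ℂ))‖ ≤ Real.exp (2*M) * (4*M/n) := by
        have hfac : E0 - Complex.exp (-s * (t:ℂ))
            = Complex.exp (-s * (t:ℂ))
              * (Complex.exp (s * ((t:ℂ) - (((k:ℝ)/(n:ℝ) : ℝ) : ℂ))) - 1) := by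
          rw [mul_sub, ← Complex.exp_add, mul_one, hE0def]
          rw [show -s * (t:ℂ) + s * ((t:ℂ) - (((k:ℝ)/(n:ℝ) : ℝ) : ℂ))
            = -s * (((k:ℝ)/(n:ℝ) : ℝ) : ℂ) by ring]
        rw [hfac, norm_mul]
        have h2 : ‖Complex.exp (s * ((t:ℂ) - (((k:ℝ)/(n:ℝ) : ℝ) : ℂ))) - 1‖
            ≤ 2 * ‖s * ((t:ℂ) - (((k:ℝ)/(n:ℝ) : ℝ) : ℂ))‖ :=
          Complex.norm_exp_sub_one_le hw1
        calc ‖Complex.exp (-s * (t:ℂ))‖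
              * ‖Complex.exp (s * ((t:ℂ) - (((k:ℝ)/(n:ℝ) : ℝ) : ℂ))) - 1‖
            ≤ Real.exp (2*M) * (2 * (2*M/n)) :=
              mul_le_mul hEt (le_trans h2 (by linarith)) (norm_nonneg _) (by positivity)
          _ = Real.exp (2*M) * (4*M/n) := by ring
      have hsplit := prod_diff_norm ((((k:ℝ)+1)/(n:ℝ) : ℝ) : ℂ) (t:ℂ) E0
        (Complex.exp (-s * (t:ℂ)))
      have hx : ‖((((k:ℝ)+1)/(n:ℝ) : ℝ) : ℂ) - (t:ℂ)‖ ≤ 1/n := by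
        rw [← Complex.ofReal_sub, Complex.norm_real, Real.norm_eq_abs,
          abs_of_nonneg (by linarith)]
        have : (k:ℝ)/(n:ℝ) + 1/n = ((k:ℝ)+1)/n := by field_simp
        linarith
      have hxt : ‖(t:ℂ)‖ ≤ 1 := by
        rw [Complex.norm_real, Real.norm_eq_abs, abs_of_nonneg ht0]; exact htle1
      have hff : f t = (t:ℂ) * Complex.exp (-s * (t:ℂ)) := rfl
      rw [hff]
      refine le_trans hsplit ?_
      have e1 : ‖((((k:ℝ)+1)/(n:ℝ) : ℝ) : ℂ) - (t:ℂ)‖ * ‖E0‖ ≤ (1/n) * Real.exp (2*M) :=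
        mul_le_mul hx hE0 (norm_nonneg _) (by positivity)
      have e2 : ‖(t:ℂ)‖ * ‖E0 - Complex.exp (-s * (t:ℂ))‖
          ≤ 1 * (Real.exp (2*M) * (4*M/n)) :=
        mul_le_mul hxt hdiff (norm_nonneg _) (by norm_num)
      have heq : (1/(n:ℝ)) * Real.exp (2*M) + 1 * (Real.exp (2*M) * (4*M/n))
          = Real.exp (2*M) * (1 + 4*M) / n := by field_simp
      rw [hD]
      linarith
    refine le_trans (intervalIntegral.norm_integral_le_of_norm_le_const hpt) ?_
    rw [hlen, abs_of_nonneg (by positivity : (0:ℝ) ≤ 1/(n:ℝ))]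
  calc ‖∑ k ∈ Finset.range n, (((((k:ℝ)+1)/(n:ℝ)^2 : ℝ) : ℂ)
          * Complex.exp (-s * (((k:ℝ)/(n:ℝ) : ℝ) : ℂ))
        - ∫ t in a k..a (k+1), f t)‖
      ≤ ∑ _k ∈ Finset.range n, (D/n * (1/n)) := norm_sum_le_of_le _ key
    _ = n * (D/n * (1/n)) := by rw [Finset.sum_const, Finset.card_range]; ring
    _ = D / n := by field_simp

lemma geom_bound (R : ℝ) (hR0 : 0 < R) (hR1 : R < 1) :
    ∃ CR : ℝ, 0 ≤ CR ∧ ∀ n : ℕ, ∑ k ∈ Finset.range n, ((k:ℝ)+1) * R^(2*k+2) ≤ CR := by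
  set x := R^2 with hx
  have hx0 : 0 < x := by positivity
  have hx1 : x < 1 := by nlinarith
  have h1 : Summable (fun k : ℕ => (k:ℝ) * x^k) := by
    simpa using summable_pow_mul_geometric_of_norm_lt_one 1
      (by rwa [Real.norm_eq_abs, abs_of_pos hx0] : ‖x‖ < 1)
  have h2 : Summable (fun k : ℕ => x^k) := summable_geometric_of_lt_one hx0.le hx1
  have h3 : Summable (fun k : ℕ => ((k:ℝ)+1) * x^k) := by
    simpa [add_mul, one_mul] using h1.add h2
  have hsum : Summable (fun k : ℕ => ((k:ℝ)+1) * x^(k+1)) := by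
    have := h3.mul_left x
    apply this.congr
    intro k
    rw [pow_succ]
    ring
  have hterm : ∀ k : ℕ, ((k:ℝ)+1) * R^(2*k+2) = ((k:ℝ)+1) * x^(k+1) := by
    intro k
    have h2k : 2*k+2 = 2*(k+1) := by omega
    rw [hx, h2k, pow_mul]
  refine ⟨∑' k : ℕ, ((k:ℝ)+1)*x^(k+1), tsum_nonneg (fun k => by positivity), fun n => ?_⟩
  calc ∑ k ∈ Finset.range n, ((k:ℝ)+1) * R^(2*k+2)
      = ∑ k ∈ Finset.range n, ((k:ℝ)+1) * x^(k+1) := Finset.sum_congr rfl (fun k _ => hterm k)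
    _ ≤ ∑' k : ℕ, ((k:ℝ)+1)*x^(k+1) := hsum.sum_le_tsum _ (fun k _ => by positivity)

set_option maxHeartbeats 2000000 in
theorem generalLimitKernel
    (χ : ℝ) (hχ : 0 ≤ χ) (R : ℝ) (hR0 : 0 < R) (hR1 : R < 1)
    (V : ℝ → ENNReal) (hVmeas : Measurable V)
    (hV0 : ∀ r ∈ Set.Icc R 1, V r = 0) :
    ∀ S : Set (ℂ × ℂ), IsCompact S →
      TendstoUniformlyOn
        (fun (n : ℕ) (p : ℂ × ℂ) =>
          ((Real.pi : ℂ) / (n : ℂ) ^ 2) * ∑ k ∈ Finset.range n,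
            (((2 * Real.pi * ∫ r in Set.Icc (0 : ℝ) 1,
                r ^ (2 * k + 1) *
                  expNegE (ENNReal.ofReal (2 * ((n : ℝ) + χ)) * V r))⁻¹ : ℝ) : ℂ) *
              (1 - p.1 / (n : ℂ)) ^ k * (starRingEnd ℂ (1 - p.2 / (n : ℂ))) ^ k)
        (fun p : ℂ × ℂ =>
          ∫ t in (0 : ℝ)..1, (t : ℂ) * Complex.exp (-(p.1 + starRingEnd ℂ p.2) * t))
        atTop S := by
  intro S hS
  obtain ⟨M0, hM0⟩ := hS.isBounded.exists_norm_le
  set M : ℝ := max M0 1 with hMdef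
  have hM1 : 1 ≤ M := le_max_right _ _
  have hM0' : 0 < M := lt_of_lt_of_le one_pos hM1
  have hpM : ∀ p ∈ S, ‖p.1‖ ≤ M ∧ ‖p.2‖ ≤ M := by
    intro p hp
    constructor
    · exact le_trans (le_trans (norm_fst_le p) (hM0 p hp)) (le_max_left _ _)
    · exact le_trans (le_trans (norm_snd_le p) (hM0 p hp)) (le_max_left _ _)
  obtain ⟨CR, hCR0, hCR⟩ := geom_bound R hR0 hR1
  set Ctot : ℝ := Real.exp (2*M) * CR / (1-R^2) + 2*Real.exp (2*M)*M^2
      + Real.exp (2*M)*(1+4*M) with hCtot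
  have hR2' : (0:ℝ) < 1 - R^2 := by nlinarith
  have hCtot0 : 0 < Ctot := by positivity
  set N0 : ℕ := ⌈2*M⌉₊ + 1 with hN0
  have key : ∀ n : ℕ, N0 ≤ n → ∀ p ∈ S,
      ‖(((Real.pi : ℂ) / (n : ℂ) ^ 2) * ∑ k ∈ Finset.range n,
            (((2 * Real.pi * ∫ r in Set.Icc (0 : ℝ) 1,
                r ^ (2 * k + 1) *
                  expNegE (ENNReal.ofReal (2 * ((n : ℝ) + χ)) * V r))⁻¹ : ℝ) : ℂ) *
              (1 - p.1 / (n : ℂ)) ^ k * (starRingEnd ℂ (1 - p.2 / (n : ℂ))) ^ k)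
          - ∫ t in (0 : ℝ)..1, (t : ℂ) * Complex.exp (-(p.1 + starRingEnd ℂ p.2) * t)‖
        ≤ Ctot / n := by
    intro n hnN0 p hp
    have hceil := Nat.le_ceil (2*M)
    have hnN0' : (⌈2*M⌉₊:ℝ) + 1 ≤ (n:ℝ) := by
      have : ((N0:ℕ):ℝ) ≤ (n:ℝ) := by exact_mod_cast hnN0
      rw [hN0] at this; push_cast at this; linarith
    have hn2M : 2*M ≤ (n:ℝ) := by linarith
    have hn0 : (0:ℝ) < n := by linarith
    have hnn : n ≠ 0 := (Nat.cast_pos.mp hn0).ne'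
    have hnc : (n:ℂ) ≠ 0 := Nat.cast_ne_zero.2 hnn
    have hMn : M ≤ (n:ℝ) := by linarith
    obtain ⟨hα, hβ⟩ := hpM p hp
    set α := p.1 with hαdef
    set γ := starRingEnd ℂ p.2 with hγdef
    have hγ : ‖γ‖ ≤ M := by rw [hγdef, RCLike.norm_conj]; exact hβ
    set s : ℂ := α + γ with hsdef
    have hs : ‖s‖ ≤ 2*M := le_trans (norm_add_le _ _) (by linarith)
    set z : ℂ := 1 - α/(n:ℂ) with hzdef
    set w : ℂ := 1 - γ/(n:ℂ) with hwdef
    have hwconj : starRingEnd ℂ (1 - p.2/(n:ℂ)) = w := by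
      rw [map_sub, map_one, map_div₀, map_natCast, hwdef, hγdef]
    set u : ℂ := Complex.exp (-α/(n:ℂ)) with hudef
    set v : ℂ := Complex.exp (-γ/(n:ℂ)) with hvdef
    set r : ℝ := Real.exp (M/n) with hrdef
    have hr1 : (1:ℝ) ≤ r := Real.one_le_exp (by positivity)
    have hr0 : (0:ℝ) ≤ r := by linarith
    have hdivnorm : ∀ x : ℂ, ‖x‖ ≤ M → ‖x/(n:ℂ)‖ ≤ M/n := by
      intro x hx
      rw [norm_div, Complex.norm_natCast]
      gcongr
    have hznorm : ‖z‖ ≤ r := by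
      rw [hzdef, hrdef]
      refine le_trans (norm_sub_le _ _) ?_
      rw [norm_one]
      have := hdivnorm α hα
      have h2 : M/(n:ℝ) + 1 ≤ Real.exp (M/n) := Real.add_one_le_exp _
      linarith
    have hwnorm : ‖w‖ ≤ r := by
      rw [hwdef, hrdef]
      refine le_trans (norm_sub_le _ _) ?_
      rw [norm_one]
      have := hdivnorm γ hγ
      have h2 : M/(n:ℝ) + 1 ≤ Real.exp (M/n) := Real.add_one_le_exp _
      linarith
    have hexpnorm : ∀ x : ℂ, ‖x‖ ≤ M → ‖Complex.exp (-x/(n:ℂ))‖ ≤ r := by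
      intro x hx
      refine le_trans (exp_norm_le _) (Real.exp_le_exp.2 ?_)
      have : ‖-x/(n:ℂ)‖ = ‖x/(n:ℂ)‖ := by rw [neg_div, norm_neg]
      rw [this]
      exact hdivnorm x hx
    have hunorm : ‖u‖ ≤ r := hexpnorm α hα
    have hvnorm : ‖v‖ ≤ r := hexpnorm γ hγ
    have hrk : ∀ k : ℕ, k ≤ n → r^k ≤ Real.exp M := by
      intro k hk
      rw [hrdef, ← Real.exp_nat_mul]
      refine Real.exp_le_exp.2 ?_
      have hk' : (k:ℝ) ≤ n := by exact_mod_cast hk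
      calc (k:ℝ) * (M/n) ≤ (n:ℝ) * (M/n) := by
            apply mul_le_mul_of_nonneg_right hk' (by positivity)
        _ = M := by field_simp
    have hzk : ∀ k : ℕ, k ≤ n → ‖z‖^k ≤ Real.exp M := fun k hk =>
      le_trans (pow_le_pow_left₀ (norm_nonneg _) hznorm k) (hrk k hk)
    have hwk : ∀ k : ℕ, k ≤ n → ‖w‖^k ≤ Real.exp M := fun k hk =>
      le_trans (pow_le_pow_left₀ (norm_nonneg _) hwnorm k) (hrk k hk)
    have huk : ∀ k : ℕ, k ≤ n → ‖u‖^k ≤ Real.exp M := fun k hk =>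
      le_trans (pow_le_pow_left₀ (norm_nonneg _) hunorm k) (hrk k hk)
    have hsubnorm : ∀ x : ℂ, ‖x‖ ≤ M →
        ‖(1 - x/(n:ℂ)) - Complex.exp (-x/(n:ℂ))‖ ≤ M^2/(n:ℝ)^2 := by
      intro x hx
      have hxle : ‖-x/(n:ℂ)‖ ≤ 1 := by
        rw [neg_div, norm_neg]
        refine le_trans (hdivnorm x hx) ?_
        rw [div_le_one hn0]; linarith
      have heq : (1 - x/(n:ℂ)) - Complex.exp (-x/(n:ℂ))
          = -(Complex.exp (-x/(n:ℂ)) - 1 - (-x/(n:ℂ))) := by ring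
      rw [heq, norm_neg]
      have h1 : ‖Complex.exp (-x/(n:ℂ)) - 1 - (-x/(n:ℂ))‖ ≤ ‖-x/(n:ℂ)‖^2 :=
        Complex.norm_exp_sub_one_sub_id_le hxle
      refine le_trans h1 ?_
      have h2 : ‖-x/(n:ℂ)‖ ≤ M/n := by
        rw [neg_div, norm_neg]; exact hdivnorm x hx
      calc ‖-x/(n:ℂ)‖^2 ≤ (M/n)^2 := by
            apply pow_le_pow_left₀ (norm_nonneg _) h2
        _ = M^2/(n:ℝ)^2 := by rw [div_pow]
    have hzu : ‖z - u‖ ≤ M^2/(n:ℝ)^2 := hsubnorm α hα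
    have hwv : ‖w - v‖ ≤ M^2/(n:ℝ)^2 := hsubnorm γ hγ
    have hexpM0 : (0:ℝ) < Real.exp M := Real.exp_pos _
    have hexp2 : Real.exp M * Real.exp M = Real.exp (2*M) := by
      rw [← Real.exp_add]; ring_nf
    set c : ENNReal := ENNReal.ofReal (2 * ((n : ℝ) + χ)) with hcdef
    rw [hwconj]
    set X : ℂ := (Real.pi:ℂ)/(n:ℂ)^2 * ∑ k ∈ Finset.range n,
      (((2 * Real.pi * ∫ r in Set.Icc (0:ℝ) 1,
        r ^ (2*k+1) * expNegE (c * V r))⁻¹ : ℝ):ℂ) * z^k * w^k with hX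
    set T2 : ℂ := ∑ k ∈ Finset.range n,
      ((((k:ℝ)+1)/(n:ℝ)^2 : ℝ):ℂ) * (z^k * w^k) with hT2
    set T3 : ℂ := ∑ k ∈ Finset.range n,
      ((((k:ℝ)+1)/(n:ℝ)^2 : ℝ):ℂ)
        * Complex.exp (-s * (((k:ℝ)/(n:ℝ) : ℝ):ℂ)) with hT3
    set L : ℂ := ∫ t in (0:ℝ)..1, (t:ℂ) * Complex.exp (-s * t) with hL
    have e1 : ‖X - T2‖ ≤ (Real.exp (2*M) * CR / (1-R^2))/n := by
      have hXsum : X = ∑ k ∈ Finset.range n,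
          ((Real.pi * (2 * Real.pi * ∫ r in Set.Icc (0:ℝ) 1,
            r ^ (2*k+1) * expNegE (c * V r))⁻¹ / (n:ℝ)^2 : ℝ):ℂ) * (z^k * w^k) := by
        rw [hX, Finset.mul_sum]
        refine Finset.sum_congr rfl fun k _ => ?_
        push_cast
        ring
      rw [hXsum, hT2, ← Finset.sum_sub_distrib]
      have hterm : ∀ k ∈ Finset.range n,
          ‖((Real.pi * (2 * Real.pi * ∫ r in Set.Icc (0:ℝ) 1,
              r ^ (2*k+1) * expNegE (c * V r))⁻¹ / (n:ℝ)^2 : ℝ):ℂ) * (z^k * w^k)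
            - ((((k:ℝ)+1)/(n:ℝ)^2 : ℝ):ℂ) * (z^k * w^k)‖
          ≤ (((k:ℝ)+1)*R^(2*k+2)) * (Real.exp (2*M)/((1-R^2)*(n:ℝ)^2)) := by
        intro k hk
        have hk' : k ≤ n := (Finset.mem_range.1 hk).le
        obtain ⟨hb1, hb2⟩ := coeff_bound R hR0 hR1 k _
          (int_bounds R hR0 hR1 c V hVmeas hV0 k).1
          (int_bounds R hR0 hR1 c V hVmeas hV0 k).2
        rw [← sub_mul, ← Complex.ofReal_sub, div_sub_div_same, norm_mul,
          Complex.norm_real, Real.norm_eq_abs,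
          abs_of_nonneg (div_nonneg (by linarith) (by positivity))]
        have hzwk : ‖z^k * w^k‖ ≤ Real.exp (2*M) := by
          rw [norm_mul, norm_pow, norm_pow, ← hexp2]
          exact mul_le_mul (hzk k hk') (hwk k hk')
            (pow_nonneg (norm_nonneg _) _) hexpM0.le
        calc (Real.pi * (2 * Real.pi * ∫ r in Set.Icc (0:ℝ) 1,
                r ^ (2*k+1) * expNegE (c * V r))⁻¹ - ((k:ℝ)+1))/(n:ℝ)^2 * ‖z^k * w^k‖
            ≤ ((((k:ℝ)+1)*R^(2*k+2)/(1-R^2))/(n:ℝ)^2) * Real.exp (2*M) := by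
              refine mul_le_mul ?_ hzwk (norm_nonneg _) (by positivity)
              gcongr
              linarith
          _ = (((k:ℝ)+1)*R^(2*k+2)) * (Real.exp (2*M)/((1-R^2)*(n:ℝ)^2)) := by
              field_simp
      refine le_trans (norm_sum_le_of_le _ hterm) ?_
      calc ∑ k ∈ Finset.range n,
              (((k:ℝ)+1)*R^(2*k+2)) * (Real.exp (2*M)/((1-R^2)*(n:ℝ)^2))
            = (∑ k ∈ Finset.range n, ((k:ℝ)+1)*R^(2*k+2))
                * (Real.exp (2*M)/((1-R^2)*(n:ℝ)^2)) := by rw [← Finset.sum_mul]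
          _ ≤ CR * (Real.exp (2*M)/((1-R^2)*(n:ℝ)^2)) :=
              mul_le_mul_of_nonneg_right (hCR n) (by positivity)
          _ = (Real.exp (2*M) * CR / (1-R^2))/(n:ℝ)^2 := by field_simp
          _ ≤ (Real.exp (2*M) * CR / (1-R^2))/n := by
              refine div_le_div_of_nonneg_left (by positivity) hn0 ?_
              nlinarith
    have e2 : ‖T2 - T3‖ ≤ (2*Real.exp (2*M)*M^2)/n := by
      rw [hT2, hT3, ← Finset.sum_sub_distrib]
      have hterm : ∀ k ∈ Finset.range n,
          ‖((((k:ℝ)+1)/(n:ℝ)^2 : ℝ):ℂ) * (z^k * w^k)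
            - ((((k:ℝ)+1)/(n:ℝ)^2 : ℝ):ℂ)
                * Complex.exp (-s * (((k:ℝ)/(n:ℝ) : ℝ):ℂ))‖
          ≤ 2*Real.exp (2*M)*M^2/(n:ℝ)^2 := by
        intro k hk
        have hkn : k < n := Finset.mem_range.1 hk
        have hk' : k ≤ n := hkn.le
        have hk1 : ((k:ℝ)+1) ≤ (n:ℝ) := by exact_mod_cast Nat.succ_le_of_lt hkn
        have hkr : ((k:ℝ)) ≤ (n:ℝ) := by linarith
        have hexpuv : Complex.exp (-s * (((k:ℝ)/(n:ℝ) : ℝ):ℂ)) = u^k * v^k := by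
          rw [hudef, hvdef, ← Complex.exp_nat_mul, ← Complex.exp_nat_mul,
            ← Complex.exp_add]
          congr 1
          rw [hsdef]
          push_cast
          ring
        rw [hexpuv, ← mul_sub, norm_mul, Complex.norm_real, Real.norm_eq_abs,
          abs_of_nonneg (by positivity)]
        have i1 : ‖z^k - u^k‖ ≤ (k:ℝ)*Real.exp M*(M^2/(n:ℝ)^2) := by
          refine le_trans (pow_sub_pow_norm z u r hr1 hznorm hunorm k) ?_
          exact mul_le_mul (mul_le_mul le_rfl (hrk k hk') (pow_nonneg hr0 k)
            (Nat.cast_nonneg k)) hzu (norm_nonneg _) (by positivity)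
        have i2 : ‖w^k - v^k‖ ≤ (k:ℝ)*Real.exp M*(M^2/(n:ℝ)^2) := by
          refine le_trans (pow_sub_pow_norm w v r hr1 hwnorm hvnorm k) ?_
          exact mul_le_mul (mul_le_mul le_rfl (hrk k hk') (pow_nonneg hr0 k)
            (Nat.cast_nonneg k)) hwv (norm_nonneg _) (by positivity)
        have hinner : ‖z^k*w^k - u^k*v^k‖ ≤ 2*(k:ℝ)*Real.exp (2*M)*M^2/(n:ℝ)^2 := by
          refine le_trans (prod_diff_norm _ _ _ _) ?_
          have j1 : ‖z^k - u^k‖*‖w^k‖ ≤ ((k:ℝ)*Real.exp M*(M^2/(n:ℝ)^2))*Real.exp M := by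
            refine mul_le_mul i1 ?_ (norm_nonneg _) (by positivity)
            rw [norm_pow]
            exact hwk k hk'
          have j2 : ‖u^k‖*‖w^k - v^k‖ ≤ Real.exp M*((k:ℝ)*Real.exp M*(M^2/(n:ℝ)^2)) := by
            refine mul_le_mul ?_ i2 (norm_nonneg _) hexpM0.le
            rw [norm_pow]
            exact huk k hk'
          have jsum : ((k:ℝ)*Real.exp M*(M^2/(n:ℝ)^2))*Real.exp M
              + Real.exp M*((k:ℝ)*Real.exp M*(M^2/(n:ℝ)^2))
              = 2*(k:ℝ)*Real.exp (2*M)*M^2/(n:ℝ)^2 := by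
            rw [← hexp2]
            ring
          linarith
        calc ((k:ℝ)+1)/(n:ℝ)^2 * ‖z^k*w^k - u^k*v^k‖
            ≤ ((k:ℝ)+1)/(n:ℝ)^2 * (2*(k:ℝ)*Real.exp (2*M)*M^2/(n:ℝ)^2) :=
              mul_le_mul_of_nonneg_left hinner (by positivity)
          _ = (((k:ℝ)+1)*(k:ℝ)) * (2*Real.exp (2*M)*M^2/((n:ℝ)^2*(n:ℝ)^2)) := by
              ring
          _ ≤ ((n:ℝ)*(n:ℝ)) * (2*Real.exp (2*M)*M^2/((n:ℝ)^2*(n:ℝ)^2)) := by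
              refine mul_le_mul_of_nonneg_right
                (mul_le_mul hk1 hkr (Nat.cast_nonneg k) (by linarith)) (by positivity)
          _ = 2*Real.exp (2*M)*M^2/(n:ℝ)^2 := by field_simp
      refine le_trans (norm_sum_le_of_le _ hterm) ?_
      rw [Finset.sum_const, Finset.card_range, nsmul_eq_mul]
      refine le_of_eq ?_
      field_simp
    have e3 : ‖T3 - L‖ ≤ Real.exp (2*M)*(1+4*M)/n := riemann_est s M hM1 hs n hn2M
    calc ‖X - L‖ = ‖(X - T2) + ((T2 - T3) + (T3 - L))‖ := by congr 1; ring
      _ ≤ ‖X - T2‖ + ‖(T2 - T3) + (T3 - L)‖ := norm_add_le _ _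
      _ ≤ ‖X - T2‖ + (‖T2 - T3‖ + ‖T3 - L‖) := by
          have := norm_add_le (T2 - T3) (T3 - L)
          linarith
      _ ≤ (Real.exp (2*M) * CR / (1-R^2))/n + ((2*Real.exp (2*M)*M^2)/n
            + Real.exp (2*M)*(1+4*M)/n) := by
          exact add_le_add e1 (add_le_add e2 e3)
      _ = Ctot / n := by rw [hCtot]; ring
  rw [Metric.tendstoUniformlyOn_iff]
  intro ε hε
  set N1 : ℕ := ⌈Ctot/ε⌉₊ + 1 with hN1
  filter_upwards [Filter.eventually_ge_atTop (max N0 N1)] with n hn p hp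
  have hnN0 : N0 ≤ n := le_trans (le_max_left _ _) hn
  have hnN1 : N1 ≤ n := le_trans (le_max_right _ _) hn
  have hn0 : (0:ℝ) < n := by
    have : 1 ≤ n := le_trans (by omega : 1 ≤ N0) hnN0
    exact_mod_cast Nat.lt_of_lt_of_le Nat.zero_lt_one this
  rw [dist_eq_norm, norm_sub_rev]
  refine lt_of_le_of_lt (key n hnN0 p hp) ?_
  rw [div_lt_iff₀ hn0]
  have h1 : Ctot/ε < N1 := by
    have := Nat.le_ceil (Ctot/ε)
    have h2 : ((⌈Ctot/ε⌉₊ : ℝ)) < N1 := by rw [hN1]; push_cast; linarith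
    linarith
  have h2 : (N1:ℝ) ≤ n := by exact_mod_cast hnN1
  calc Ctot = (Ctot/ε) * ε := by field_simp
    _ < (N1:ℝ) * ε := by exact mul_lt_mul_of_pos_right h1 hε
    _ ≤ ε * n := by rw [mul_comm]; exact mul_le_mul_of_nonneg_left h2 hε.le
end

section
/- Let χ ≥ 0, let 0 ≤ q < Q be real numbers, let 0 < R₋ < 1 < R₊ < ∞, and let V : (0,∞) → ℝ be continuous with: V(r) = q log r for r ∈ [R₋, 1]; V(r) = Q log r for r ∈ [1, R₊]; V(r) ≥ q log r for r ∈ (0, R₋]; V(r) ≥ Q log r for r ≥ R₊; and there exists C ∈ ℝ such that V(r) ≥ log r − C for all r ≥ R₊. Then for every t ∈ (q, Q) with 0 < t < 1, lim_{n→∞} n ∫_ℂ |z|^{2⌊tn⌋} e^{−2(n+χ) V(|z|)} dℓ_ℂ(z) = π (Q − q) / ( (t − q)(Q − t) ). -/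
open Filter Topology MeasureTheory Set

lemma polarIntegral (g : ℝ → ℝ) :
    (∫ z : ℂ, g ‖z‖) = 2 * Real.pi * ∫ r in Set.Ioi (0:ℝ), r * g r := by
  rw [MeasureTheory.integral_fun_norm_addHaar volume g]
  simp only [Complex.finrank_real_complex, Complex.volume_ball, pow_one, smul_eq_mul,
    nsmul_eq_mul, Nat.cast_ofNat]
  rw [show ((2:ℕ) - 1) = 1 from rfl]
  simp only [pow_one]
  rw [Measure.real, Complex.volume_ball, ENNReal.toReal_mul]
  norm_num
  ring

lemma powExp (r : ℝ) (hr : 0 < r) (m : ℕ) (s : ℝ) :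
    r * (r ^ m * Real.exp (-s * Real.log r)) = r ^ ((m:ℝ) + 1 - s) := by
  rw [show (m:ℝ) + 1 - s = (m:ℝ) + 1 + (-s) by ring, Real.rpow_add hr, Real.rpow_add hr,
    Real.rpow_natCast, Real.rpow_one, Real.rpow_def_of_pos hr]
  ring_nf

lemma coeffAux (q Q Rm Rp : ℝ) (hRm0 : 0 < Rm) (hRm1 : Rm < 1) (hRp : 1 < Rp)
    (V : ℝ → ℝ) (hVcont : ContinuousOn V (Set.Ioi 0))
    (hV1 : ∀ r ∈ Set.Icc Rm 1, V r = q * Real.log r)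
    (hV2 : ∀ r ∈ Set.Icc 1 Rp, V r = Q * Real.log r)
    (hV3 : ∀ r ∈ Set.Ioc 0 Rm, q * Real.log r ≤ V r)
    (hV4 : ∀ r : ℝ, Rp ≤ r → Q * Real.log r ≤ V r)
    (m : ℕ) (c : ℝ) (hc : 0 < c)
    (ha : 0 < (m:ℝ) + 2 - c * q) (hb : (m:ℝ) + 2 - c * Q < 0) :
    (∫ z : ℂ, ‖z‖ ^ m * Real.exp (-(c * V ‖z‖))) =
      2 * Real.pi * ((∫ r in Set.Ioc 0 Rm, r * (r ^ m * Real.exp (-(c * V r))))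
        + (1 - Rm ^ ((m:ℝ) + 2 - c * q)) / ((m:ℝ) + 2 - c * q)
        + (Rp ^ ((m:ℝ) + 2 - c * Q) - 1) / ((m:ℝ) + 2 - c * Q)
        + (∫ r in Set.Ioi Rp, r * (r ^ m * Real.exp (-(c * V r))))) ∧
    0 ≤ (∫ r in Set.Ioc 0 Rm, r * (r ^ m * Real.exp (-(c * V r)))) ∧
    (∫ r in Set.Ioc 0 Rm, r * (r ^ m * Real.exp (-(c * V r)))) ≤
      Rm ^ ((m:ℝ) + 2 - c * q) / ((m:ℝ) + 2 - c * q) ∧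
    0 ≤ (∫ r in Set.Ioi Rp, r * (r ^ m * Real.exp (-(c * V r)))) ∧
    (∫ r in Set.Ioi Rp, r * (r ^ m * Real.exp (-(c * V r)))) ≤
      -(Rp ^ ((m:ℝ) + 2 - c * Q) / ((m:ℝ) + 2 - c * Q)) := by
  set g : ℝ → ℝ := fun r => r * (r ^ m * Real.exp (-(c * V r))) with hgdef
  have hgc : ContinuousOn g (Set.Ioi 0) := by
    apply (continuousOn_id.mul ((continuous_pow m).continuousOn.mul
      (Real.continuous_exp.comp_continuousOn ((continuousOn_const.mul hVcont).neg))))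
  have hgnn : ∀ r ∈ Set.Ioi (0:ℝ), 0 ≤ g r := by
    intro r hr
    have hr0 : (0:ℝ) < r := hr
    have := (Real.exp_pos (-(c * V r))).le
    positivity
  -- pointwise identities / bounds
  have hB : ∀ r ∈ Set.Ioc Rm 1, g r = r ^ ((m:ℝ) + 1 - c * q) := by
    intro r hr
    have hr0 : 0 < r := lt_trans hRm0 hr.1
    rw [hgdef]
    simp only
    rw [hV1 r ⟨hr.1.le, hr.2⟩, show -(c * (q * Real.log r)) = -(c*q) * Real.log r by ring,
      powExp r hr0]
  have hC : ∀ r ∈ Set.Ioc 1 Rp, g r = r ^ ((m:ℝ) + 1 - c * Q) := by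
    intro r hr
    have hr0 : (0:ℝ) < r := lt_trans one_pos hr.1
    rw [hgdef]
    simp only
    rw [hV2 r ⟨hr.1.le, hr.2⟩, show -(c * (Q * Real.log r)) = -(c*Q) * Real.log r by ring,
      powExp r hr0]
  have hA : ∀ r ∈ Set.Ioc (0:ℝ) Rm, g r ≤ r ^ ((m:ℝ) + 1 - c * q) := by
    intro r hr
    have hr0 : 0 < r := hr.1
    have hexp : Real.exp (-(c * V r)) ≤ Real.exp (-(c * (q * Real.log r))) := by
      apply Real.exp_le_exp.2
      have := hV3 r hr
      nlinarith
    calc g r ≤ r * (r ^ m * Real.exp (-(c * (q * Real.log r)))) := by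
          apply mul_le_mul_of_nonneg_left (mul_le_mul_of_nonneg_left hexp (by positivity)) hr0.le
      _ = r ^ ((m:ℝ) + 1 - c * q) := by
          rw [show -(c * (q * Real.log r)) = -(c*q) * Real.log r by ring, powExp r hr0]
  have hD : ∀ r ∈ Set.Ioi Rp, g r ≤ r ^ ((m:ℝ) + 1 - c * Q) := by
    intro r hr
    have hr0 : (0:ℝ) < r := lt_trans (lt_trans one_pos hRp) hr
    have hexp : Real.exp (-(c * V r)) ≤ Real.exp (-(c * (Q * Real.log r))) := by
      apply Real.exp_le_exp.2
      have := hV4 r (le_of_lt hr)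
      nlinarith
    calc g r ≤ r * (r ^ m * Real.exp (-(c * (Q * Real.log r)))) := by
          apply mul_le_mul_of_nonneg_left (mul_le_mul_of_nonneg_left hexp (by positivity)) hr0.le
      _ = r ^ ((m:ℝ) + 1 - c * Q) := by
          rw [show -(c * (Q * Real.log r)) = -(c*Q) * Real.log r by ring, powExp r hr0]
  -- integrabilities
  have hmeasA : AEStronglyMeasurable g (volume.restrict (Set.Ioc (0:ℝ) Rm)) :=
    (hgc.mono (fun x hx => hx.1)).aestronglyMeasurable measurableSet_Ioc
  have hmeasD : AEStronglyMeasurable g (volume.restrict (Set.Ioi Rp)) :=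
    (hgc.mono (fun x hx => lt_trans (lt_trans one_pos hRp) hx)).aestronglyMeasurable
      measurableSet_Ioi
  have hrpowA : IntegrableOn (fun r : ℝ => r ^ ((m:ℝ) + 1 - c * q)) (Set.Ioc 0 Rm) := by
    have := intervalIntegral.intervalIntegrable_rpow' (a := 0) (b := Rm)
      (r := (m:ℝ) + 1 - c * q) (by linarith)
    rwa [intervalIntegrable_iff_integrableOn_Ioc_of_le hRm0.le] at this
  have hrpowD : IntegrableOn (fun r : ℝ => r ^ ((m:ℝ) + 1 - c * Q)) (Set.Ioi Rp) :=
    integrableOn_Ioi_rpow_of_lt (by linarith) (lt_trans one_pos hRp)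
  have hIntA : IntegrableOn g (Set.Ioc 0 Rm) := by
    apply Integrable.mono hrpowA hmeasA
    rw [ae_restrict_iff' measurableSet_Ioc]
    refine ae_of_all _ fun r hr => ?_
    rw [Real.norm_eq_abs, Real.norm_eq_abs, abs_of_nonneg (hgnn r hr.1),
      abs_of_nonneg (Real.rpow_nonneg hr.1.le _)]
    exact hA r hr
  have hIntD : IntegrableOn g (Set.Ioi Rp) := by
    apply Integrable.mono hrpowD hmeasD
    rw [ae_restrict_iff' measurableSet_Ioi]
    refine ae_of_all _ fun r hr => ?_
    rw [Real.norm_eq_abs, Real.norm_eq_abs,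
      abs_of_nonneg (hgnn r (lt_trans (lt_trans one_pos hRp) hr)),
      abs_of_nonneg (Real.rpow_nonneg (le_of_lt (lt_trans (lt_trans one_pos hRp) hr)) _)]
    exact hD r hr
  have hIntB : IntegrableOn g (Set.Ioc Rm 1) := by
    apply ((hgc.mono (fun x hx => lt_of_lt_of_le hRm0 hx.1)).integrableOn_Icc).mono_set
      Set.Ioc_subset_Icc_self
  have hIntC : IntegrableOn g (Set.Ioc 1 Rp) := by
    apply ((hgc.mono (fun x hx => lt_of_lt_of_le one_pos hx.1)).integrableOn_Icc).mono_set
      Set.Ioc_subset_Icc_self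
  have hIntAB : IntegrableOn g (Set.Ioc (0:ℝ) 1) := by
    rw [← Set.Ioc_union_Ioc_eq_Ioc hRm0.le hRm1.le]; exact hIntA.union hIntB
  have hIntABC : IntegrableOn g (Set.Ioc (0:ℝ) Rp) := by
    rw [← Set.Ioc_union_Ioc_eq_Ioc (show (0:ℝ) ≤ 1 by norm_num) (le_of_lt hRp)]
    exact hIntAB.union hIntC
  -- splitting
  have hsplit : (∫ r in Set.Ioi (0:ℝ), g r) =
      (∫ r in Set.Ioc (0:ℝ) Rm, g r) + (∫ r in Set.Ioc Rm 1, g r)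
      + (∫ r in Set.Ioc (1:ℝ) Rp, g r) + (∫ r in Set.Ioi Rp, g r) := by
    rw [← Set.Ioc_union_Ioi_eq_Ioi (show (0:ℝ) ≤ Rp by linarith),
      setIntegral_union Set.Ioc_disjoint_Ioi_same measurableSet_Ioi hIntABC hIntD,
      ← Set.Ioc_union_Ioc_eq_Ioc (show (0:ℝ) ≤ 1 by norm_num) (le_of_lt hRp),
      setIntegral_union (Set.Ioc_disjoint_Ioc_of_le le_rfl) measurableSet_Ioc hIntAB hIntC,
      ← Set.Ioc_union_Ioc_eq_Ioc hRm0.le hRm1.le,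
      setIntegral_union (Set.Ioc_disjoint_Ioc_of_le le_rfl) measurableSet_Ioc hIntA hIntB]
  -- values of B and C
  have hBval : (∫ r in Set.Ioc Rm 1, g r) =
      (1 - Rm ^ ((m:ℝ) + 2 - c * q)) / ((m:ℝ) + 2 - c * q) := by
    rw [setIntegral_congr_fun measurableSet_Ioc hB,
      ← intervalIntegral.integral_of_le hRm1.le,
      integral_rpow (Or.inl (by linarith : (-1:ℝ) < (m:ℝ) + 1 - c * q)),
      show (m:ℝ) + 1 - c * q + 1 = (m:ℝ) + 2 - c * q by ring, Real.one_rpow]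
  have hCval : (∫ r in Set.Ioc (1:ℝ) Rp, g r) =
      (Rp ^ ((m:ℝ) + 2 - c * Q) - 1) / ((m:ℝ) + 2 - c * Q) := by
    rw [setIntegral_congr_fun measurableSet_Ioc hC,
      ← intervalIntegral.integral_of_le (le_of_lt hRp),
      integral_rpow (Or.inr ⟨(by intro h; rw [show (-1:ℝ) = 0-1 by ring] at h; linarith : ((m:ℝ) + 1 - c * Q) ≠ -1),
        by rw [Set.uIcc_of_le (le_of_lt hRp)]; rintro ⟨h0, -⟩; norm_num at h0⟩),
      show (m:ℝ) + 1 - c * Q + 1 = (m:ℝ) + 2 - c * Q by ring, Real.one_rpow]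
  -- bounds on A and D
  have hAnn : 0 ≤ ∫ r in Set.Ioc (0:ℝ) Rm, g r :=
    setIntegral_nonneg measurableSet_Ioc (fun r hr => hgnn r hr.1)
  have hDnn : 0 ≤ ∫ r in Set.Ioi Rp, g r :=
    setIntegral_nonneg measurableSet_Ioi
      (fun r hr => hgnn r (lt_trans (lt_trans one_pos hRp) hr))
  have hAbd : (∫ r in Set.Ioc (0:ℝ) Rm, g r) ≤
      Rm ^ ((m:ℝ) + 2 - c * q) / ((m:ℝ) + 2 - c * q) := by
    calc (∫ r in Set.Ioc (0:ℝ) Rm, g r) ≤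
        ∫ r in Set.Ioc (0:ℝ) Rm, r ^ ((m:ℝ) + 1 - c * q) :=
          setIntegral_mono_on hIntA hrpowA measurableSet_Ioc hA
      _ = Rm ^ ((m:ℝ) + 2 - c * q) / ((m:ℝ) + 2 - c * q) := by
          rw [← intervalIntegral.integral_of_le hRm0.le,
            integral_rpow (Or.inl (by linarith : (-1:ℝ) < (m:ℝ) + 1 - c * q)),
            show (m:ℝ) + 1 - c * q + 1 = (m:ℝ) + 2 - c * q by ring,
            Real.zero_rpow (by linarith), sub_zero]
  have hDbd : (∫ r in Set.Ioi Rp, g r) ≤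
      -(Rp ^ ((m:ℝ) + 2 - c * Q) / ((m:ℝ) + 2 - c * Q)) := by
    calc (∫ r in Set.Ioi Rp, g r) ≤ ∫ r in Set.Ioi Rp, r ^ ((m:ℝ) + 1 - c * Q) :=
          setIntegral_mono_on hIntD hrpowD measurableSet_Ioi hD
      _ = -(Rp ^ ((m:ℝ) + 2 - c * Q) / ((m:ℝ) + 2 - c * Q)) := by
          rw [integral_Ioi_rpow_of_lt (by linarith) (lt_trans one_pos hRp),
            show (m:ℝ) + 1 - c * Q + 1 = (m:ℝ) + 2 - c * Q by ring, neg_div]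
  refine ⟨?_, hAnn, hAbd, hDnn, hDbd⟩
  rw [polarIntegral (fun r => r ^ m * Real.exp (-(c * V r))), hsplit, hBval, hCval]
theorem coefficientLimit
    (χ q Q Rm Rp : ℝ) (hχ : 0 ≤ χ) (hq : 0 ≤ q) (hqQ : q < Q)
    (hRm0 : 0 < Rm) (hRm1 : Rm < 1) (hRp : 1 < Rp)
    (V : ℝ → ℝ) (hVcont : ContinuousOn V (Set.Ioi 0))
    (hV1 : ∀ r ∈ Set.Icc Rm 1, V r = q * Real.log r)
    (hV2 : ∀ r ∈ Set.Icc 1 Rp, V r = Q * Real.log r)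
    (hV3 : ∀ r ∈ Set.Ioc 0 Rm, q * Real.log r ≤ V r)
    (hV4 : ∀ r : ℝ, Rp ≤ r → Q * Real.log r ≤ V r)
    (hV5 : ∃ C : ℝ, ∀ r : ℝ, Rp ≤ r → Real.log r - C ≤ V r)
    (t : ℝ) (hqt : q < t) (htQ : t < Q) (ht0 : 0 < t) (ht1 : t < 1) :
    Tendsto (fun n : ℕ => (n : ℝ) *
        ∫ z : ℂ, ‖z‖ ^ (2 * ⌊t * (n : ℝ)⌋₊) *
          Real.exp (-2 * ((n : ℝ) + χ) * V (‖z‖)))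
      atTop (𝓝 (Real.pi * (Q - q) / ((t - q) * (Q - t)))) := by
  have htq : (0:ℝ) < t - q := by linarith
  have htQ2 : (0:ℝ) < Q - t := by linarith
  have hfl : Tendsto (fun n : ℕ => (⌊t * (n:ℝ)⌋₊ : ℝ) / (n:ℝ)) atTop (𝓝 t) :=
    (tendsto_nat_floor_mul_div_atTop ht0.le).comp tendsto_natCast_atTop_atTop
  have hninv : Tendsto (fun n : ℕ => ((n:ℝ))⁻¹) atTop (𝓝 0) :=
    tendsto_inv_atTop_zero.comp tendsto_natCast_atTop_atTop
  -- limits of the exponents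
  have hE1div : Tendsto (fun n : ℕ => ((((2 * ⌊t * (n : ℝ)⌋₊ : ℕ) : ℝ) + 2 - 2 * ((n : ℝ) + χ) * q)) / (n:ℝ)) atTop (𝓝 (2*(t-q))) := by
    have base := ((hfl.const_mul 2).sub_const (2*q)).add (hninv.const_mul (2 - 2*χ*q))
    rw [show 2*t - 2*q + (2 - 2*χ*q)*0 = 2*(t-q) by ring] at base
    apply base.congr'
    filter_upwards [eventually_gt_atTop 0] with n hn
    have hn0 : ((n:ℝ)) ≠ 0 := Nat.cast_ne_zero.2 hn.ne'
    push_cast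
    field_simp
    ring
  have hE2div : Tendsto (fun n : ℕ => ((((2 * ⌊t * (n : ℝ)⌋₊ : ℕ) : ℝ) + 2 - 2 * ((n : ℝ) + χ) * Q)) / (n:ℝ)) atTop (𝓝 (2*(t-Q))) := by
    have base := ((hfl.const_mul 2).sub_const (2*Q)).add (hninv.const_mul (2 - 2*χ*Q))
    rw [show 2*t - 2*Q + (2 - 2*χ*Q)*0 = 2*(t-Q) by ring] at base
    apply base.congr'
    filter_upwards [eventually_gt_atTop 0] with n hn
    have hn0 : ((n:ℝ)) ≠ 0 := Nat.cast_ne_zero.2 hn.ne'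
    push_cast
    field_simp
    ring
  have hE1top : Tendsto (fun n : ℕ => (((2 * ⌊t * (n : ℝ)⌋₊ : ℕ) : ℝ) + 2 - 2 * ((n : ℝ) + χ) * q)) atTop atTop := by
    apply tendsto_atTop_mono' atTop ?_ (tendsto_atTop_add_const_right atTop (-(2*χ*q))
      (Tendsto.const_mul_atTop (show (0:ℝ) < 2*(t-q) by linarith) tendsto_natCast_atTop_atTop))
    refine Filter.Eventually.of_forall fun n => ?_
    have h1 := Nat.lt_floor_add_one (t*(n:ℝ))
    have h2 : (0:ℝ) ≤ (n:ℝ) := Nat.cast_nonneg n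
    push_cast
    nlinarith
  have hE2bot : Tendsto (fun n : ℕ => (((2 * ⌊t * (n : ℝ)⌋₊ : ℕ) : ℝ) + 2 - 2 * ((n : ℝ) + χ) * Q)) atTop atBot := by
    apply tendsto_atBot_mono' atTop ?_ (tendsto_atBot_add_const_right atTop (2 - 2*χ*Q)
      ((tendsto_const_mul_atBot_of_neg (show 2*(t-Q) < 0 by linarith)).2
        tendsto_natCast_atTop_atTop))
    refine Filter.Eventually.of_forall fun n => ?_
    have h1 := Nat.floor_le (show (0:ℝ) ≤ t*(n:ℝ) by positivity)
    have h2 : (0:ℝ) ≤ (n:ℝ) := Nat.cast_nonneg n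
    push_cast
    nlinarith
  have hRmE1 : Tendsto (fun n : ℕ => Rm ^ ((((2 * ⌊t * (n : ℝ)⌋₊ : ℕ) : ℝ) + 2 - 2 * ((n : ℝ) + χ) * q))) atTop (𝓝 0) :=
    (tendsto_rpow_atTop_of_base_lt_one Rm (by linarith) hRm1).comp hE1top
  have hRpE2 : Tendsto (fun n : ℕ => Rp ^ ((((2 * ⌊t * (n : ℝ)⌋₊ : ℕ) : ℝ) + 2 - 2 * ((n : ℝ) + χ) * Q))) atTop (𝓝 0) := by
    have hlog : (0:ℝ) < Real.log Rp := Real.log_pos hRp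
    have h := Real.tendsto_exp_atBot.comp (hE2bot.const_mul_atBot hlog)
    exact h.congr fun n => (Real.rpow_def_of_pos (by linarith) _).symm
  have hn_div_E1 : Tendsto (fun n : ℕ => (n:ℝ) / (((2 * ⌊t * (n : ℝ)⌋₊ : ℕ) : ℝ) + 2 - 2 * ((n : ℝ) + χ) * q)) atTop (𝓝 (2*(t-q))⁻¹) := by
    have h := hE1div.inv₀ (ne_of_gt (by linarith))
    simpa only [inv_div] using h
  have hn_div_E2 : Tendsto (fun n : ℕ => (n:ℝ) / (((2 * ⌊t * (n : ℝ)⌋₊ : ℕ) : ℝ) + 2 - 2 * ((n : ℝ) + χ) * Q)) atTop (𝓝 (2*(t-Q))⁻¹) := by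
    have h := hE2div.inv₀ (ne_of_lt (by linarith))
    simpa only [inv_div] using h
  -- the eventual package from coeffAux
  have pack : ∀ᶠ n : ℕ in atTop,
      ((n : ℝ) * ∫ z : ℂ, ‖z‖ ^ (2 * ⌊t * (n : ℝ)⌋₊) *
          Real.exp (-2 * ((n : ℝ) + χ) * V (‖z‖)))
        = 2 * Real.pi * ((n:ℝ) * ((∫ r in Set.Ioc (0:ℝ) Rm, r * (r ^ (2 * ⌊t * (n : ℝ)⌋₊) * Real.exp (-(2 * ((n : ℝ) + χ) * V r))))) + (n:ℝ) * ((1 - Rm ^ ((((2 * ⌊t * (n : ℝ)⌋₊ : ℕ) : ℝ) + 2 - 2 * ((n : ℝ) + χ) * q))) / ((((2 * ⌊t * (n : ℝ)⌋₊ : ℕ) : ℝ) + 2 - 2 * ((n : ℝ) + χ) * q)))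
            + (n:ℝ) * ((Rp ^ ((((2 * ⌊t * (n : ℝ)⌋₊ : ℕ) : ℝ) + 2 - 2 * ((n : ℝ) + χ) * Q)) - 1) / ((((2 * ⌊t * (n : ℝ)⌋₊ : ℕ) : ℝ) + 2 - 2 * ((n : ℝ) + χ) * Q))) + (n:ℝ) * ((∫ r in Set.Ioi Rp, r * (r ^ (2 * ⌊t * (n : ℝ)⌋₊) * Real.exp (-(2 * ((n : ℝ) + χ) * V r))))))
      ∧ 0 ≤ (∫ r in Set.Ioc (0:ℝ) Rm, r * (r ^ (2 * ⌊t * (n : ℝ)⌋₊) * Real.exp (-(2 * ((n : ℝ) + χ) * V r)))) ∧ (∫ r in Set.Ioc (0:ℝ) Rm, r * (r ^ (2 * ⌊t * (n : ℝ)⌋₊) * Real.exp (-(2 * ((n : ℝ) + χ) * V r)))) ≤ Rm ^ ((((2 * ⌊t * (n : ℝ)⌋₊ : ℕ) : ℝ) + 2 - 2 * ((n : ℝ) + χ) * q)) / ((((2 * ⌊t * (n : ℝ)⌋₊ : ℕ) : ℝ) + 2 - 2 * ((n : ℝ) + χ) * q))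
      ∧ 0 ≤ (∫ r in Set.Ioi Rp, r * (r ^ (2 * ⌊t * (n : ℝ)⌋₊) * Real.exp (-(2 * ((n : ℝ) + χ) * V r)))) ∧ (∫ r in Set.Ioi Rp, r * (r ^ (2 * ⌊t * (n : ℝ)⌋₊) * Real.exp (-(2 * ((n : ℝ) + χ) * V r)))) ≤ -(Rp ^ ((((2 * ⌊t * (n : ℝ)⌋₊ : ℕ) : ℝ) + 2 - 2 * ((n : ℝ) + χ) * Q)) / ((((2 * ⌊t * (n : ℝ)⌋₊ : ℕ) : ℝ) + 2 - 2 * ((n : ℝ) + χ) * Q))) := by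
    filter_upwards [eventually_gt_atTop 0, hE1top.eventually_gt_atTop 0,
      hE2bot.eventually_lt_atBot 0] with n hn h1 h2
    have hn0 : (0:ℝ) < (n:ℝ) := by exact_mod_cast hn
    have hcpos : (0:ℝ) < 2 * ((n:ℝ) + χ) := by linarith
    obtain ⟨heq, hA0, hAb, hD0, hDb⟩ := coeffAux q Q Rm Rp hRm0 hRm1 hRp V hVcont hV1 hV2 hV3 hV4
      (2 * ⌊t * (n:ℝ)⌋₊) (2 * ((n:ℝ) + χ)) hcpos h1 h2
    refine ⟨?_, hA0, hAb, hD0, hDb⟩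
    rw [show (∫ z : ℂ, ‖z‖ ^ (2 * ⌊t * (n : ℝ)⌋₊) *
          Real.exp (-2 * ((n : ℝ) + χ) * V (‖z‖)))
        = ∫ z : ℂ, ‖z‖ ^ (2 * ⌊t * (n : ℝ)⌋₊) *
          Real.exp (-(2 * ((n : ℝ) + χ) * V ‖z‖)) from by
        simp only [neg_mul], heq]
    ring
  -- limits of the four pieces
  have TB : Tendsto (fun n : ℕ => (n:ℝ) * ((1 - Rm ^ ((((2 * ⌊t * (n : ℝ)⌋₊ : ℕ) : ℝ) + 2 - 2 * ((n : ℝ) + χ) * q))) / ((((2 * ⌊t * (n : ℝ)⌋₊ : ℕ) : ℝ) + 2 - 2 * ((n : ℝ) + χ) * q)))) atTop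
      (𝓝 ((2*(t-q))⁻¹ * (1 - 0))) :=
    (hn_div_E1.mul (tendsto_const_nhds.sub hRmE1)).congr fun n => by ring
  have TC : Tendsto (fun n : ℕ => (n:ℝ) * ((Rp ^ ((((2 * ⌊t * (n : ℝ)⌋₊ : ℕ) : ℝ) + 2 - 2 * ((n : ℝ) + χ) * Q)) - 1) / ((((2 * ⌊t * (n : ℝ)⌋₊ : ℕ) : ℝ) + 2 - 2 * ((n : ℝ) + χ) * Q)))) atTop
      (𝓝 ((2*(t-Q))⁻¹ * (0 - 1))) :=
    (hn_div_E2.mul (hRpE2.sub tendsto_const_nhds)).congr fun n => by ring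
  have TA : Tendsto (fun n : ℕ => (n:ℝ) * (∫ r in Set.Ioc (0:ℝ) Rm, r * (r ^ (2 * ⌊t * (n : ℝ)⌋₊) * Real.exp (-(2 * ((n : ℝ) + χ) * V r))))) atTop (𝓝 0) := by
    have hb : ∀ᶠ n : ℕ in atTop, (n:ℝ) * (∫ r in Set.Ioc (0:ℝ) Rm, r * (r ^ (2 * ⌊t * (n : ℝ)⌋₊) * Real.exp (-(2 * ((n : ℝ) + χ) * V r)))) ≤ ((n:ℝ) / (((2 * ⌊t * (n : ℝ)⌋₊ : ℕ) : ℝ) + 2 - 2 * ((n : ℝ) + χ) * q)) * Rm ^ (((2 * ⌊t * (n : ℝ)⌋₊ : ℕ) : ℝ) + 2 - 2 * ((n : ℝ) + χ) * q) := by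
      filter_upwards [pack] with n h
      calc (n:ℝ) * (∫ r in Set.Ioc (0:ℝ) Rm, r * (r ^ (2 * ⌊t * (n : ℝ)⌋₊) * Real.exp (-(2 * ((n : ℝ) + χ) * V r)))) ≤ (n:ℝ) * (Rm ^ ((((2 * ⌊t * (n : ℝ)⌋₊ : ℕ) : ℝ) + 2 - 2 * ((n : ℝ) + χ) * q)) / ((((2 * ⌊t * (n : ℝ)⌋₊ : ℕ) : ℝ) + 2 - 2 * ((n : ℝ) + χ) * q))) :=
          mul_le_mul_of_nonneg_left h.2.2.1 (Nat.cast_nonneg n)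
        _ = ((n:ℝ) / (((2 * ⌊t * (n : ℝ)⌋₊ : ℕ) : ℝ) + 2 - 2 * ((n : ℝ) + χ) * q)) * Rm ^ ((((2 * ⌊t * (n : ℝ)⌋₊ : ℕ) : ℝ) + 2 - 2 * ((n : ℝ) + χ) * q)) := by ring
    apply squeeze_zero' (pack.mono fun n h => mul_nonneg (Nat.cast_nonneg n) h.2.1) hb
    simpa only [mul_zero] using hn_div_E1.mul hRmE1
  have TD : Tendsto (fun n : ℕ => (n:ℝ) * (∫ r in Set.Ioi Rp, r * (r ^ (2 * ⌊t * (n : ℝ)⌋₊) * Real.exp (-(2 * ((n : ℝ) + χ) * V r))))) atTop (𝓝 0) := by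
    have hb : ∀ᶠ n : ℕ in atTop, (n:ℝ) * (∫ r in Set.Ioi Rp, r * (r ^ (2 * ⌊t * (n : ℝ)⌋₊) * Real.exp (-(2 * ((n : ℝ) + χ) * V r)))) ≤ ((n:ℝ) / (((2 * ⌊t * (n : ℝ)⌋₊ : ℕ) : ℝ) + 2 - 2 * ((n : ℝ) + χ) * Q)) * (-(Rp ^ (((2 * ⌊t * (n : ℝ)⌋₊ : ℕ) : ℝ) + 2 - 2 * ((n : ℝ) + χ) * Q))) := by
      filter_upwards [pack] with n h
      calc (n:ℝ) * (∫ r in Set.Ioi Rp, r * (r ^ (2 * ⌊t * (n : ℝ)⌋₊) * Real.exp (-(2 * ((n : ℝ) + χ) * V r)))) ≤ (n:ℝ) * (-(Rp ^ ((((2 * ⌊t * (n : ℝ)⌋₊ : ℕ) : ℝ) + 2 - 2 * ((n : ℝ) + χ) * Q)) / ((((2 * ⌊t * (n : ℝ)⌋₊ : ℕ) : ℝ) + 2 - 2 * ((n : ℝ) + χ) * Q)))) :=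
          mul_le_mul_of_nonneg_left h.2.2.2.2 (Nat.cast_nonneg n)
        _ = ((n:ℝ) / (((2 * ⌊t * (n : ℝ)⌋₊ : ℕ) : ℝ) + 2 - 2 * ((n : ℝ) + χ) * Q)) * (-(Rp ^ ((((2 * ⌊t * (n : ℝ)⌋₊ : ℕ) : ℝ) + 2 - 2 * ((n : ℝ) + χ) * Q)))) := by ring
    apply squeeze_zero' (pack.mono fun n h => mul_nonneg (Nat.cast_nonneg n) h.2.2.2.1) hb
    simpa only [neg_zero, mul_zero] using hn_div_E2.mul hRpE2.neg
  have Ttot := (((TA.const_mul (2*Real.pi)).add (TB.const_mul (2*Real.pi))).add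
      (TC.const_mul (2*Real.pi))).add (TD.const_mul (2*Real.pi))
  rw [show 2*Real.pi*0 + 2*Real.pi*((2*(t-q))⁻¹ * (1-0)) + 2*Real.pi*((2*(t-Q))⁻¹ * (0-1))
      + 2*Real.pi*0 = Real.pi * (Q - q) / ((t - q) * (Q - t)) from by
    have h1 : t - q ≠ 0 := ne_of_gt htq
    have h2 : Q - t ≠ 0 := ne_of_gt htQ2
    have h3 : t - Q ≠ 0 := by intro h; apply h2; linarith
    field_simp
    ring] at Ttot
  refine Filter.Tendsto.congr' ?_ Ttot
  filter_upwards [pack] with n h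
  rw [h.1]
  ring
end

section
/- For each integer n ≥ 1 define Kₙ : ℂ × ℂ → ℂ by Kₙ(z, w) = (1/n) ∑_{k=0}^{n} (1 + z/n)^k (1 + conj(w)/n)^k. Then Kₙ converges, as n → ∞, uniformly on every compact subset of ℂ × ℂ to the function K(z, w) = ∫_0^1 e^{(z + conj w) t} dt; this limit equals (e^{z + conj w} − 1)/(z + conj w) whenever z + conj w ≠ 0. -/
open Filter Topology Finset

noncomputable def kacC (n j : ℕ) : ℝ := (Nat.choose (n+1) (j+1) : ℝ) / (n:ℝ)^(j+1)
noncomputable def kacE (j : ℕ) : ℝ := 1 / (Nat.factorial (j+1) : ℝ)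
noncomputable def kacG (x : ℂ) : ℂ := ∑' j : ℕ, x ^ j / (Nat.factorial (j+1) : ℂ)

lemma kac_poly (n : ℕ) (b : ℂ) :
    ∑ k ∈ range (n+1), (1+b)^k
      = ∑ j ∈ range (n+1), (Nat.choose (n+1) (j+1) : ℂ) * b ^ j := by
  rcases eq_or_ne b 0 with rfl | hb
  · simp only [add_zero, one_pow, sum_const, card_range, nsmul_eq_mul, mul_one]
    rw [Finset.sum_eq_single_of_mem 0 (by simp)]
    · simp
    · intro j _ hj
      simp [zero_pow hj]
  · apply mul_right_cancel₀ hb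
    have h1 : (∑ k ∈ range (n+1), (1+b)^k) * b = (1+b)^(n+1) - 1 := by
      have := geom_sum_mul (1+b) (n+1)
      simpa using this
    have h2 : (b+1)^(n+1) = ∑ k ∈ range (n+2), b ^ k * (Nat.choose (n+1) k : ℂ) := by
      rw [add_pow]
      simp
    rw [h1, Finset.sum_mul]
    have h3 : ∀ j ∈ range (n+1),
        (Nat.choose (n+1) (j+1) : ℂ) * b ^ j * b = b ^ (j+1) * (Nat.choose (n+1) (j+1) : ℂ) := by
      intro j _; ring
    rw [Finset.sum_congr rfl h3]
    rw [Finset.sum_range_succ' (fun k => b ^ k * (Nat.choose (n+1) k : ℂ)) (n+1)] at h2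
    simp only [pow_zero, one_mul, Nat.choose_zero_right, Nat.cast_one] at h2
    have : (1+b)^(n+1) = (b+1)^(n+1) := by ring_nf
    rw [this, h2]
    ring

lemma kac_int_eq_div {c : ℂ} (hc : c ≠ 0) :
    (∫ t in (0:ℝ)..1, Complex.exp (c * t)) = (Complex.exp c - 1) / c := by
  rw [integral_exp_mul_complex hc]
  simp

lemma kac_summable_aux (x : ℝ) : Summable (fun j : ℕ => x ^ j / (Nat.factorial (j+1) : ℝ)) := by
  have h := Real.summable_pow_div_factorial |x|
  refine Summable.of_norm_bounded h (fun j => ?_)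
  rw [Real.norm_eq_abs, abs_div, abs_pow, Nat.abs_cast]
  gcongr
  omega

lemma kac_summable_complex (x : ℂ) :
    Summable (fun j : ℕ => x ^ j / (Nat.factorial (j+1) : ℂ)) := by
  refine Summable.of_norm ?_
  have := kac_summable_aux ‖x‖
  refine this.congr (fun j => ?_)
  rw [norm_div, norm_pow]
  norm_num


lemma kac_exp_tsum (x : ℂ) : Complex.exp x = ∑' n : ℕ, x ^ n / (Nat.factorial n : ℂ) := by
  rw [Complex.exp_eq_exp_ℂ, NormedSpace.exp_eq_tsum_div]

lemma kac_integral_eq_G (x : ℂ) :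
    (∫ t in (0:ℝ)..1, Complex.exp (x * t)) = kacG x := by
  rcases eq_or_ne x 0 with rfl | hx
  · simp only [zero_mul, Complex.exp_zero, intervalIntegral.integral_const, smul_eq_mul, mul_one,
      sub_zero]
    rw [kacG, tsum_eq_single 0 (by intro j hj; simp [zero_pow hj])]
    simp
  · rw [kac_int_eq_div hx, eq_comm, eq_div_iff hx, kacG, ← tsum_mul_right]
    have hsum : Summable (fun n : ℕ => x ^ n / (Nat.factorial n : ℂ)) := by
      have := kac_summable_complex x
      -- shift: summable of n ↦ x^n/n!
      have h0 := Real.summable_pow_div_factorial ‖x‖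
      refine Summable.of_norm (h0.congr fun n => ?_)
      rw [norm_div, norm_pow]; norm_num
    have := hsum.tsum_eq_zero_add
    simp only [pow_zero, Nat.factorial_zero, Nat.cast_one, div_one] at this
    rw [← kac_exp_tsum] at this
    have heq : ∀ j : ℕ, x ^ j / (Nat.factorial (j+1) : ℂ) * x = x ^ (j+1) / (Nat.factorial (j+1) : ℂ) := by
      intro j; rw [pow_succ]; ring
    calc ∑' j : ℕ, x ^ j / (Nat.factorial (j+1) : ℂ) * x
        = ∑' j : ℕ, x ^ (j+1) / (Nat.factorial (j+1) : ℂ) := tsum_congr heq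
      _ = Complex.exp x - 1 := by rw [this]; ring
lemma kacC_nonneg (n j : ℕ) : 0 ≤ kacC n j := by
  unfold kacC; positivity

lemma kacE_nonneg (j : ℕ) : 0 ≤ kacE j := by
  unfold kacE; positivity

lemma kacC_le (n j : ℕ) (hn : 1 ≤ n) :
    kacC n j ≤ 2 ^ (j+1) / (Nat.factorial (j+1) : ℝ) := by
  have hnat : Nat.choose (n+1) (j+1) * Nat.factorial (j+1) ≤ (2*n) ^ (j+1) := by
    calc Nat.choose (n+1) (j+1) * Nat.factorial (j+1)
        = Nat.descFactorial (n+1) (j+1) := by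
          rw [Nat.descFactorial_eq_factorial_mul_choose]; ring
      _ ≤ (n+1) ^ (j+1) := Nat.descFactorial_le_pow _ _
      _ ≤ (2*n) ^ (j+1) := Nat.pow_le_pow_left (by omega) _
  have hnpos : (0:ℝ) < (n:ℝ) ^ (j+1) := by positivity
  have hfpos : (0:ℝ) < (Nat.factorial (j+1) : ℝ) := by positivity
  rw [kacC, div_le_div_iff₀ hnpos hfpos]
  calc (Nat.choose (n+1) (j+1) : ℝ) * (Nat.factorial (j+1) : ℝ)
      ≤ ((2*n : ℕ) : ℝ) ^ (j+1) := by exact_mod_cast hnat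
    _ = 2 ^ (j+1) * (n:ℝ) ^ (j+1) := by push_cast; rw [mul_pow]

lemma kacC_tendsto (j : ℕ) : Tendsto (fun n => kacC n j) atTop (𝓝 (kacE j)) := by
  have key : ∀ n : ℕ, j + 1 ≤ n →
      kacC n j = (1 / (Nat.factorial (j+1) : ℝ)) * ∏ i ∈ range (j+1), (((n:ℝ) + 1 - i) / n) := by
    intro n hn
    have hcast : (Nat.choose (n+1) (j+1) : ℝ)
        = (∏ i ∈ range (j+1), ((n:ℝ) + 1 - i)) / (Nat.factorial (j+1) : ℝ) := by
      rw [eq_div_iff (by positivity)]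
      have h1 : Nat.factorial (j+1) * Nat.choose (n+1) (j+1)
          = Nat.descFactorial (n+1) (j+1) := (Nat.descFactorial_eq_factorial_mul_choose _ _).symm
      have h2 : ((Nat.descFactorial (n+1) (j+1) : ℕ) : ℝ)
          = ∏ i ∈ range (j+1), ((n:ℝ) + 1 - i) := by
        rw [Nat.descFactorial_eq_prod_range, Nat.cast_prod]
        refine Finset.prod_congr rfl fun i hi => ?_
        rw [Finset.mem_range] at hi
        have : i ≤ n + 1 := by omega
        push_cast [Nat.cast_sub this]
        ring
      calc (Nat.choose (n+1) (j+1) : ℝ) * (Nat.factorial (j+1) : ℝ)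
          = ((Nat.factorial (j+1) * Nat.choose (n+1) (j+1) : ℕ) : ℝ) := by push_cast; ring
        _ = ∏ i ∈ range (j+1), ((n:ℝ) + 1 - i) := by rw [h1, h2]
    rw [kacC, hcast, Finset.prod_div_distrib, Finset.prod_const, Finset.card_range]
    ring
  have hlim : Tendsto (fun n : ℕ =>
      (1 / (Nat.factorial (j+1) : ℝ)) * ∏ i ∈ range (j+1), (((n:ℝ) + 1 - i) / n))
      atTop (𝓝 (kacE j)) := by
    have hprod : Tendsto (fun n : ℕ => ∏ i ∈ range (j+1), (((n:ℝ) + 1 - i) / n))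
        atTop (𝓝 1) := by
      have hprod0 : Tendsto (fun n : ℕ => ∏ i ∈ range (j+1), (((n:ℝ) + 1 - i) / n))
          atTop (𝓝 (∏ _i ∈ range (j+1), (1:ℝ))) := by
        refine tendsto_finset_prod _ fun i _ => ?_
        have : ∀ᶠ n : ℕ in atTop, ((n:ℝ) + 1 - i) / n = 1 + (1 - (i:ℝ)) * (1 / n) := by
          filter_upwards [eventually_ge_atTop 1] with n hn
          have hn0 : (n:ℝ) ≠ 0 := by positivity
          field_simp
          ring
        refine Tendsto.congr' (this.mono fun n h => h.symm) ?_
        have h0 := tendsto_one_div_atTop_nhds_zero_nat (𝕜 := ℝ)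
        have h2 : Tendsto (fun n : ℕ => 1 + (1 - (i:ℝ)) * (1 / n)) atTop (𝓝 (1 + (1 - (i:ℝ)) * 0)) :=
          tendsto_const_nhds.add (tendsto_const_nhds.mul h0)
        simpa using h2
      simpa using hprod0
    have := (tendsto_const_nhds (x := 1 / (Nat.factorial (j+1) : ℝ)) (f := atTop (α := ℕ))).mul hprod
    simpa [kacE] using this
  exact hlim.congr' (Filter.eventually_atTop.2 ⟨j+1, fun n hn => (key n hn).symm⟩)
lemma kacC_eq_zero {n j : ℕ} (h : n < j) : kacC n j = 0 := by
  rw [kacC, Nat.choose_eq_zero_of_lt (by omega)]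
  simp

lemma kac_D_tendsto (R : ℝ) (hR : 0 ≤ R) :
    Tendsto (fun n => ∑' j : ℕ, |kacC n j - kacE j| * R ^ j) atTop (𝓝 0) := by
  have hbs : Summable (fun j : ℕ => 2 * ((2*R) ^ j / (Nat.factorial (j+1) : ℝ))
      + R ^ j / (Nat.factorial (j+1) : ℝ)) :=
    ((kac_summable_aux (2*R)).mul_left 2).add (kac_summable_aux R)
  have h0 : (0:ℝ) = ∑' _j : ℕ, (0:ℝ) := by simp
  rw [h0]
  refine tendsto_tsum_of_dominated_convergence hbs (fun j => ?_) ?_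
  · have h1 : Tendsto (fun n => kacC n j - kacE j) atTop (𝓝 0) := by
      simpa using (kacC_tendsto j).sub (tendsto_const_nhds (x := kacE j))
    have h2 : Tendsto (fun n => |kacC n j - kacE j| * R ^ j) atTop (𝓝 (|0| * R ^ j)) :=
      (h1.abs).mul tendsto_const_nhds
    simpa using h2
  · filter_upwards [eventually_ge_atTop 1] with n hn
    intro j
    rw [Real.norm_eq_abs, abs_of_nonneg (by positivity)]
    have h3 : |kacC n j - kacE j| ≤ 2 ^ (j+1) / (Nat.factorial (j+1) : ℝ) + kacE j := by
      refine (abs_sub _ _).trans ?_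
      rw [abs_of_nonneg (kacC_nonneg n j), abs_of_nonneg (kacE_nonneg j)]
      exact add_le_add_left (kacC_le n j hn) _
    calc |kacC n j - kacE j| * R ^ j
        ≤ (2 ^ (j+1) / (Nat.factorial (j+1) : ℝ) + kacE j) * R ^ j := by
          exact mul_le_mul_of_nonneg_right h3 (by positivity)
      _ = 2 * ((2*R) ^ j / (Nat.factorial (j+1) : ℝ)) + R ^ j / (Nat.factorial (j+1) : ℝ) := by
          rw [kacE, mul_pow]
          ring

lemma kac_pow_diff (j : ℕ) (x y : ℂ) (Q : ℝ) (hQ : 1 ≤ Q) (hx : ‖x‖ ≤ Q) (hy : ‖y‖ ≤ Q) :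
    ‖x ^ j - y ^ j‖ ≤ j * Q ^ j * ‖x - y‖ := by
  have hQ0 : 0 ≤ Q := by linarith
  rw [← geom_sum₂_mul x y j, norm_mul]
  refine mul_le_mul_of_nonneg_right ?_ (norm_nonneg _)
  calc ‖∑ i ∈ range j, x ^ i * y ^ (j - 1 - i)‖
      ≤ ∑ i ∈ range j, ‖x ^ i * y ^ (j - 1 - i)‖ := norm_sum_le _ _
    _ ≤ ∑ _i ∈ range j, Q ^ j := by
        refine Finset.sum_le_sum fun i hi => ?_
        rw [Finset.mem_range] at hi
        rw [norm_mul, norm_pow, norm_pow]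
        calc ‖x‖ ^ i * ‖y‖ ^ (j - 1 - i)
            ≤ Q ^ i * Q ^ (j - 1 - i) := by
              exact mul_le_mul (pow_le_pow_left₀ (norm_nonneg _) hx i)
                (pow_le_pow_left₀ (norm_nonneg _) hy _) (by positivity) (by positivity)
          _ = Q ^ (i + (j - 1 - i)) := (pow_add Q _ _).symm
          _ ≤ Q ^ j := pow_le_pow_right₀ hQ (by omega)
    _ = j * Q ^ j := by rw [Finset.sum_const, Finset.card_range, nsmul_eq_mul]

lemma kac_lip_summable (Q : ℝ) (hQ : 0 ≤ Q) :
    Summable (fun j : ℕ => (j:ℝ) * Q ^ j / (Nat.factorial (j+1) : ℝ)) := by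
  refine Summable.of_nonneg_of_le (fun j => by positivity) (fun j => ?_)
    (Real.summable_pow_div_factorial Q)
  rw [div_le_div_iff₀ (by positivity) (by positivity)]
  calc (j:ℝ) * Q ^ j * (Nat.factorial j : ℝ)
      ≤ ((j:ℝ)+1) * Q ^ j * (Nat.factorial j : ℝ) := by nlinarith [pow_nonneg hQ j, Nat.cast_nonneg (α := ℝ) (Nat.factorial j)]
    _ = Q ^ j * (((j+1) * Nat.factorial j : ℕ) : ℝ) := by push_cast; ring
    _ = Q ^ j * (Nat.factorial (j+1) : ℝ) := by rw [← Nat.factorial_succ]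

lemma kacG_lip (Q : ℝ) (hQ : 1 ≤ Q) (a b : ℂ) (ha : ‖a‖ ≤ Q) (hb : ‖b‖ ≤ Q) :
    ‖kacG a - kacG b‖ ≤ (∑' j : ℕ, (j:ℝ) * Q ^ j / (Nat.factorial (j+1) : ℝ)) * ‖a - b‖ := by
  have hQ0 : (0:ℝ) ≤ Q := by linarith
  have hsa := kac_summable_complex a
  have hsb := kac_summable_complex b
  have hdiff : kacG a - kacG b = ∑' j : ℕ, (a ^ j - b ^ j) / (Nat.factorial (j+1) : ℂ) := by
    rw [kacG, kacG, ← hsa.tsum_sub hsb]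
    exact tsum_congr fun j => (sub_div _ _ _).symm
  rw [hdiff]
  have hbound : ∀ j : ℕ, ‖(a ^ j - b ^ j) / (Nat.factorial (j+1) : ℂ)‖
      ≤ (j:ℝ) * Q ^ j / (Nat.factorial (j+1) : ℝ) * ‖a - b‖ := by
    intro j
    rw [norm_div]
    have hf : ‖(Nat.factorial (j+1) : ℂ)‖ = (Nat.factorial (j+1) : ℝ) := by
      rw [Complex.norm_natCast]
    rw [hf, div_mul_eq_mul_div, div_le_div_iff₀ (by positivity) (by positivity)]
    calc ‖a ^ j - b ^ j‖ * (Nat.factorial (j+1) : ℝ)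
        ≤ ((j:ℝ) * Q ^ j * ‖a - b‖) * (Nat.factorial (j+1) : ℝ) :=
          mul_le_mul_of_nonneg_right (kac_pow_diff j a b Q hQ ha hb) (by positivity)
      _ = (j:ℝ) * Q ^ j * ‖a - b‖ * (Nat.factorial (j+1) : ℝ) := rfl
  have hsum2 : Summable (fun j : ℕ => (j:ℝ) * Q ^ j / (Nat.factorial (j+1) : ℝ) * ‖a - b‖) :=
    (kac_lip_summable Q hQ0).mul_right _
  calc ‖∑' j : ℕ, (a ^ j - b ^ j) / (Nat.factorial (j+1) : ℂ)‖
      ≤ ∑' j : ℕ, ‖(a ^ j - b ^ j) / (Nat.factorial (j+1) : ℂ)‖ := by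
        refine norm_tsum_le_tsum_norm ?_
        exact hsum2.of_nonneg_of_le (fun j => norm_nonneg _) hbound
    _ ≤ ∑' j : ℕ, (j:ℝ) * Q ^ j / (Nat.factorial (j+1) : ℝ) * ‖a - b‖ := by
        refine Summable.tsum_le_tsum hbound ?_ hsum2
        exact hsum2.of_nonneg_of_le (fun j => norm_nonneg _) hbound
    _ = (∑' j : ℕ, (j:ℝ) * Q ^ j / (Nat.factorial (j+1) : ℝ)) * ‖a - b‖ := tsum_mul_right
lemma kac_abs_le (n j : ℕ) (Q : ℝ) (hn : 1 ≤ n) (hQ : 0 ≤ Q) :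
    |kacC n j - kacE j| * Q ^ j
      ≤ 2 * ((2*Q) ^ j / (Nat.factorial (j+1) : ℝ)) + Q ^ j / (Nat.factorial (j+1) : ℝ) := by
  have h3 : |kacC n j - kacE j| ≤ 2 ^ (j+1) / (Nat.factorial (j+1) : ℝ) + kacE j := by
    refine (abs_sub _ _).trans ?_
    rw [abs_of_nonneg (kacC_nonneg n j), abs_of_nonneg (kacE_nonneg j)]
    exact add_le_add_left (kacC_le n j hn) _
  calc |kacC n j - kacE j| * Q ^ j
      ≤ (2 ^ (j+1) / (Nat.factorial (j+1) : ℝ) + kacE j) * Q ^ j :=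
        mul_le_mul_of_nonneg_right h3 (by positivity)
    _ = 2 * ((2*Q) ^ j / (Nat.factorial (j+1) : ℝ)) + Q ^ j / (Nat.factorial (j+1) : ℝ) := by
        rw [kacE, mul_pow]; ring

lemma kac_D_summable (n : ℕ) (Q : ℝ) (hn : 1 ≤ n) (hQ : 0 ≤ Q) :
    Summable (fun j : ℕ => |kacC n j - kacE j| * Q ^ j) := by
  refine Summable.of_nonneg_of_le (fun j => by positivity)
    (fun j => kac_abs_le n j Q hn hQ) ?_
  exact ((kac_summable_aux (2*Q)).mul_left 2).add (kac_summable_aux Q)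

lemma kac_tail_bound (n : ℕ) (hn : 1 ≤ n) (Q : ℝ) (hQ : 0 ≤ Q) (a : ℂ) (ha : ‖a‖ ≤ Q) :
    ‖kacG a - ∑' j : ℕ, ((kacC n j : ℝ) : ℂ) * a ^ j‖
      ≤ ∑' j : ℕ, |kacC n j - kacE j| * Q ^ j := by
  have hsC : Summable (fun j : ℕ => ((kacC n j : ℝ) : ℂ) * a ^ j) := by
    refine summable_of_ne_finset_zero (s := range (n+1)) (fun j hj => ?_)
    rw [Finset.mem_range] at hj
    rw [kacC_eq_zero (by omega)]
    simp
  have hterm : ∀ j : ℕ, a ^ j / (Nat.factorial (j+1) : ℂ) - ((kacC n j : ℝ) : ℂ) * a ^ j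
      = (((kacE j - kacC n j : ℝ)) : ℂ) * a ^ j := by
    intro j
    rw [kacE]
    push_cast
    ring
  have hnorm : ∀ j : ℕ, ‖a ^ j / (Nat.factorial (j+1) : ℂ) - ((kacC n j : ℝ) : ℂ) * a ^ j‖
      = |kacE j - kacC n j| * ‖a‖ ^ j := by
    intro j
    rw [hterm j, norm_mul, norm_pow, Complex.norm_real, Real.norm_eq_abs]
  have hb : ∀ j : ℕ, ‖a ^ j / (Nat.factorial (j+1) : ℂ) - ((kacC n j : ℝ) : ℂ) * a ^ j‖
      ≤ |kacC n j - kacE j| * Q ^ j := by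
    intro j
    rw [hnorm j, abs_sub_comm]
    exact mul_le_mul_of_nonneg_left (pow_le_pow_left₀ (norm_nonneg a) ha j) (abs_nonneg _)
  have hDsum := kac_D_summable n Q hn hQ
  have hsnorm : Summable (fun j : ℕ =>
      ‖a ^ j / (Nat.factorial (j+1) : ℂ) - ((kacC n j : ℝ) : ℂ) * a ^ j‖) :=
    hDsum.of_nonneg_of_le (fun j => norm_nonneg _) hb
  rw [kacG, ← (kac_summable_complex a).tsum_sub hsC]
  calc ‖∑' j : ℕ, (a ^ j / (Nat.factorial (j+1) : ℂ) - ((kacC n j : ℝ) : ℂ) * a ^ j)‖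
      ≤ ∑' j : ℕ, ‖a ^ j / (Nat.factorial (j+1) : ℂ) - ((kacC n j : ℝ) : ℂ) * a ^ j‖ :=
        norm_tsum_le_tsum_norm hsnorm
    _ ≤ ∑' j : ℕ, |kacC n j - kacE j| * Q ^ j := Summable.tsum_le_tsum hb hsnorm hDsum

lemma kac_rewrite (n : ℕ) (hn : 1 ≤ n) (z w : ℂ) :
    (1 / (n : ℂ)) * ∑ k ∈ Finset.range (n + 1),
        (1 + z / (n : ℂ)) ^ k * (1 + starRingEnd ℂ w / (n : ℂ)) ^ k
      = ∑' j : ℕ, ((kacC n j : ℝ) : ℂ)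
          * (z + starRingEnd ℂ w + z * starRingEnd ℂ w / n) ^ j := by
  have hn0 : (n : ℂ) ≠ 0 := Nat.cast_ne_zero.mpr (by omega)
  set a : ℂ := z + starRingEnd ℂ w + z * starRingEnd ℂ w / n with ha
  have hmul : (1 + z / (n : ℂ)) * (1 + starRingEnd ℂ w / (n : ℂ)) = 1 + a / n := by
    rw [ha, add_div, add_div, div_div]
    field_simp
    ring
  have h1 : ∀ k : ℕ, (1 + z / (n : ℂ)) ^ k * (1 + starRingEnd ℂ w / (n : ℂ)) ^ k
      = (1 + a / n) ^ k := by
    intro k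
    rw [← mul_pow, hmul]
  rw [Finset.sum_congr rfl (fun k _ => h1 k), kac_poly n (a / n), Finset.mul_sum]
  have h2 : ∀ j ∈ range (n+1),
      1 / (n:ℂ) * ((Nat.choose (n+1) (j+1) : ℂ) * (a / n) ^ j)
        = ((kacC n j : ℝ) : ℂ) * a ^ j := by
    intro j _
    have : ((kacC n j : ℝ) : ℂ) = (Nat.choose (n+1) (j+1) : ℂ) / (n : ℂ) ^ (j+1) := by
      rw [kacC]
      push_cast
      rfl
    rw [this, div_pow, pow_succ]
    ring
  rw [Finset.sum_congr rfl h2]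
  refine (tsum_eq_sum fun j hj => ?_).symm
  rw [Finset.mem_range] at hj
  rw [kacC_eq_zero (by omega)]
  simp
theorem kacCovarianceNearCircle :
    (∀ S : Set (ℂ × ℂ), IsCompact S →
      TendstoUniformlyOn
        (fun (n : ℕ) (p : ℂ × ℂ) =>
          (1 / (n : ℂ)) * ∑ k ∈ Finset.range (n + 1),
            (1 + p.1 / (n : ℂ)) ^ k * (1 + starRingEnd ℂ p.2 / (n : ℂ)) ^ k)
        (fun p : ℂ × ℂ =>
          ∫ t in (0 : ℝ)..1, Complex.exp ((p.1 + starRingEnd ℂ p.2) * t))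
        atTop S) ∧
    ∀ z w : ℂ, z + starRingEnd ℂ w ≠ 0 →
      (∫ t in (0 : ℝ)..1, Complex.exp ((z + starRingEnd ℂ w) * t)) =
        (Complex.exp (z + starRingEnd ℂ w) - 1) / (z + starRingEnd ℂ w) := by
  constructor
  · intro S hS
    obtain ⟨r, hr⟩ := hS.isBounded.subset_closedBall 0
    set R : ℝ := max r 0 with hRdef
    have hR0 : 0 ≤ R := le_max_right r 0
    have hzw : ∀ p ∈ S, ‖p.1‖ ≤ R ∧ ‖p.2‖ ≤ R := by
      intro p hp
      have h := hr hp
      rw [Metric.mem_closedBall, dist_zero_right] at h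
      exact ⟨(norm_fst_le p).trans (h.trans (le_max_left r 0)),
        (norm_snd_le p).trans (h.trans (le_max_left r 0))⟩
    set Q : ℝ := max (2*R + R^2) 1 with hQdef
    have hQ1 : (1:ℝ) ≤ Q := le_max_right _ 1
    have hQ0 : (0:ℝ) ≤ Q := by linarith
    have hQge : 2*R + R^2 ≤ Q := le_max_left _ 1
    set E : ℝ := ∑' j : ℕ, (j:ℝ) * Q ^ j / (Nat.factorial (j+1) : ℝ) with hEdef
    have hE0 : 0 ≤ E := tsum_nonneg fun j => by positivity
    have hD := kac_D_tendsto Q hQ0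
    rw [Metric.tendstoUniformlyOn_iff]
    intro ε hε
    have hB : Tendsto (fun n : ℕ =>
        (∑' j : ℕ, |kacC n j - kacE j| * Q ^ j) + E * R^2 * (1 / (n:ℝ)))
        atTop (𝓝 0) := by
      have h2 : Tendsto (fun n : ℕ => E * R^2 * (1 / (n:ℝ))) atTop (𝓝 0) := by
        have := tendsto_one_div_atTop_nhds_zero_nat.const_mul (E * R^2)
        simpa using this
      simpa using hD.add h2
    filter_upwards [hB.eventually_lt_const hε, eventually_ge_atTop 1] with n hBn hn
    intro p hp
    obtain ⟨hz, hw⟩ := hzw p hp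
    have hn0 : (0:ℝ) < (n:ℝ) := by exact_mod_cast hn
    set z := p.1
    set w := p.2
    set s : ℂ := z + starRingEnd ℂ w with hsdef
    set a : ℂ := z + starRingEnd ℂ w + z * starRingEnd ℂ w / (n:ℂ) with hadef
    have hwc : ‖starRingEnd ℂ w‖ = ‖w‖ := RCLike.norm_conj w
    have hs2 : ‖s‖ ≤ 2*R := by
      calc ‖s‖ ≤ ‖z‖ + ‖starRingEnd ℂ w‖ := norm_add_le _ _
        _ ≤ R + R := by rw [hwc]; exact add_le_add hz hw
        _ = 2*R := by ring
    have hsQ : ‖s‖ ≤ Q := hs2.trans (by nlinarith)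
    have hcn : ‖(n:ℂ)‖ = (n:ℝ) := by
      rw [Complex.norm_natCast]
    have hprod : ‖z * starRingEnd ℂ w / (n:ℂ)‖ ≤ R^2 * (1 / (n:ℝ)) := by
      rw [norm_div, norm_mul, hwc, hcn]
      rw [div_le_iff₀ hn0, mul_assoc, one_div, inv_mul_cancel₀ (ne_of_gt hn0), mul_one]
      calc ‖z‖ * ‖w‖ ≤ R * R := mul_le_mul hz hw (norm_nonneg _) hR0
        _ = R^2 := by ring
    have haQ : ‖a‖ ≤ Q := by
      have h1n : 1 / (n:ℝ) ≤ 1 := by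
        rw [div_le_one hn0]; exact_mod_cast hn
      calc ‖a‖ ≤ ‖s‖ + ‖z * starRingEnd ℂ w / (n:ℂ)‖ := norm_add_le _ _
        _ ≤ 2*R + R^2 * (1 / (n:ℝ)) := add_le_add hs2 hprod
        _ ≤ 2*R + R^2 := by nlinarith
        _ ≤ Q := hQge
    have hFn := kac_rewrite n hn z w
    have hK : (∫ t in (0:ℝ)..1, Complex.exp ((z + starRingEnd ℂ w) * t)) = kacG s :=
      kac_integral_eq_G s
    rw [dist_eq_norm, hK, hFn]
    have hsplit : kacG s - ∑' j : ℕ, ((kacC n j : ℝ) : ℂ) * a ^ j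
        = (kacG s - kacG a) + (kacG a - ∑' j : ℕ, ((kacC n j : ℝ) : ℂ) * a ^ j) := by ring
    calc ‖kacG s - ∑' j : ℕ, ((kacC n j : ℝ) : ℂ) * a ^ j‖
        ≤ ‖kacG s - kacG a‖ + ‖kacG a - ∑' j : ℕ, ((kacC n j : ℝ) : ℂ) * a ^ j‖ := by
          rw [hsplit]; exact norm_add_le _ _
      _ ≤ E * ‖s - a‖ + (∑' j : ℕ, |kacC n j - kacE j| * Q ^ j) :=
          add_le_add (kacG_lip Q hQ1 s a hsQ haQ) (kac_tail_bound n hn Q hQ0 a haQ)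
      _ ≤ E * (R^2 * (1 / (n:ℝ))) + (∑' j : ℕ, |kacC n j - kacE j| * Q ^ j) := by
          refine add_le_add_left (mul_le_mul_of_nonneg_left ?_ hE0) _
          have : s - a = -(z * starRingEnd ℂ w / (n:ℂ)) := by rw [hsdef, hadef]; ring
          rw [this, norm_neg]
          exact hprod
      _ = (∑' j : ℕ, |kacC n j - kacE j| * Q ^ j) + E * R^2 * (1 / (n:ℝ)) := by ring
      _ < ε := hBn
  · intro z w h
    exact kac_int_eq_div h
end

section
/- Let 0 ≤ q < 1 and Q > q be real numbers, and define K : ℂ × ℂ → ℂ by K(α, β) = e^{−q·Re(α)} e^{−q·Re(β)} (1/π) ∫_q^{min(Q,1)} ( (Q − t)(t − q) / (Q − q) ) e^{(α + conj β) t} dt. Let ℍ = { z ∈ ℂ : Re(z) < 0 } be the left half-plane. Then the functions (z, w) ↦ e^{−i q n Im(z)} · n² K(nz, nw) · e^{i q n Im(w)} converge, as n → ∞, uniformly on every compact subset of ℍ × ℍ to the function (z, w) ↦ 1 / ( π (z + conj w)² ). -/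
set_option maxHeartbeats 1000000

open Filter Topology MeasureTheory Complex

lemma intA (q Q m : ℝ) (hQq : ((Q:ℂ) - q) ≠ 0) (c : ℂ) (hc : c ≠ 0) :
    (∫ t in q..m, (((Q - t) * (t - q) / (Q - q) : ℝ) : ℂ) * Complex.exp (c * t))
      = (((Q:ℂ) - q) * c^3)⁻¹ *
        (Complex.exp (c*m) * (((Q:ℂ)-m)*((m:ℂ)-q)*c^2 - ((Q:ℂ)+q-2*m)*c - 2)
          - Complex.exp (c*q) * (-((Q:ℂ)-q)*c - 2)) := by
  set k : ℂ := (((Q:ℂ) - q) * c^3)⁻¹ with hk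
  set G : ℝ → ℂ := fun t => k * (((Q:ℂ)-t)*((t:ℂ)-q)*c^2 - ((Q:ℂ)+q-2*t)*c - 2)
      * Complex.exp (c*t) with hG
  have key : ∀ t : ℝ, HasDerivAt G (k * (((Q:ℂ)-t)*((t:ℂ)-q)*c^3) * Complex.exp (c*t)) t := by
    intro t
    have ha : HasDerivAt (fun z : ℂ => ((Q:ℂ)-z)*((z:ℂ)-q))
        (((Q:ℂ)+q-2*t)) (t:ℂ) := by
      have h := ((hasDerivAt_const (t:ℂ) ((Q:ℂ))).sub (hasDerivAt_id (t:ℂ))).mul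
        ((hasDerivAt_id (t:ℂ)).sub (hasDerivAt_const (t:ℂ) ((q:ℂ))))
      refine HasDerivAt.congr_deriv h ?_
      simp
      ring
    have hb : HasDerivAt (fun z : ℂ => ((Q:ℂ)+q-2*z)) (-2 : ℂ) (t:ℂ) := by
      have h := (hasDerivAt_const ((t:ℂ)) ((Q:ℂ)+(q:ℂ))).sub
        ((hasDerivAt_id ((t:ℂ))).const_mul 2)
      refine HasDerivAt.congr_deriv h ?_
      simp
    have h1 : HasDerivAt (fun z : ℂ => k * (((Q:ℂ)-z)*((z:ℂ)-q)*c^2 - ((Q:ℂ)+q-2*z)*c - 2))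
        (k * (((Q:ℂ)+q-2*t)*c^2 - (-2)*c)) (t:ℂ) := by
      have h := (((ha.mul_const (c^2)).sub (hb.mul_const c)).sub
        (hasDerivAt_const (t:ℂ) (2:ℂ))).const_mul k
      refine HasDerivAt.congr_deriv h ?_
      ring
    have h2 : HasDerivAt (fun z : ℂ => Complex.exp (c*z)) (c * Complex.exp (c*t)) (t:ℂ) := by
      simpa [mul_comm] using ((hasDerivAt_id ((t:ℂ))).const_mul c).cexp
    have h3 := (h1.mul h2).comp_ofReal
    refine HasDerivAt.congr_deriv h3 ?_
    ring
  have hcont : Continuous (fun t : ℝ => (((Q - t) * (t - q) / (Q - q) : ℝ) : ℂ) * Complex.exp (c * t)) := by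
    fun_prop
  have hfd : ∀ t ∈ Set.uIcc q m,
      HasDerivAt G ((fun t : ℝ => (((Q - t) * (t - q) / (Q - q) : ℝ) : ℂ) * Complex.exp (c * t)) t) t := by
    intro t _
    have h := key t
    convert h using 2
    rw [hk]
    push_cast
    field_simp
  have hint := intervalIntegral.integral_eq_sub_of_hasDerivAt hfd (hcont.intervalIntegrable _ _)
  rw [hint, hG]
  simp only []
  ring

theorem edgeToBergman
    (q Q : ℝ) (hq0 : 0 ≤ q) (hq1 : q < 1) (hqQ : q < Q) :
    ∀ S : Set (ℂ × ℂ), IsCompact S →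
      S ⊆ {p : ℂ × ℂ | p.1.re < 0 ∧ p.2.re < 0} →
      TendstoUniformlyOn
        (fun (n : ℕ) (p : ℂ × ℂ) =>
          Complex.exp (-Complex.I * (q : ℂ) * (n : ℂ) * (p.1.im : ℂ)) *
            ((n : ℂ) ^ 2 *
              (((Real.exp (-(q * ((n : ℂ) * p.1).re)) : ℝ) : ℂ) *
                ((Real.exp (-(q * ((n : ℂ) * p.2).re)) : ℝ) : ℂ) *
                (1 / (Real.pi : ℂ)) *
                ∫ t in q..(min Q 1),
                  (((Q - t) * (t - q) / (Q - q) : ℝ) : ℂ) *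
                    Complex.exp ((((n : ℂ) * p.1) + starRingEnd ℂ ((n : ℂ) * p.2)) *
                      (t : ℂ)))) *
            Complex.exp (Complex.I * (q : ℂ) * (n : ℂ) * (p.2.im : ℂ)))
        (fun p : ℂ × ℂ => 1 / ((Real.pi : ℂ) * (p.1 + starRingEnd ℂ p.2) ^ 2))
        atTop S := by
  intro S hScomp hSsub
  rcases S.eq_empty_or_nonempty with rfl | hne
  · exact tendstoUniformlyOn_empty
  -- notation
  set s : ℂ × ℂ → ℂ := fun p => p.1 + starRingEnd ℂ p.2 with hs
  have hscont : Continuous s := continuous_fst.add (Complex.continuous_conj.comp continuous_snd)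
  have hres : ∀ p ∈ S, (s p).re < 0 := by
    intro p hp
    obtain ⟨h1, h2⟩ := hSsub hp
    simp only [hs, Complex.add_re, Complex.conj_re]
    linarith
  have hsne : ∀ p ∈ S, s p ≠ 0 := by
    intro p hp h0
    have := hres p hp
    rw [h0] at this
    simp at this
  -- δ : uniform lower bound on -Re s
  obtain ⟨p0, hp0S, hp0max⟩ := hScomp.exists_isMaxOn hne
    (continuous_re.comp hscont).continuousOn
  set δ : ℝ := -(s p0).re with hδdef
  have hδ : 0 < δ := by have := hres p0 hp0S; simp [hδdef]; linarith
  have hδle : ∀ p ∈ S, (s p).re ≤ -δ := by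
    intro p hp
    have := hp0max hp
    simp only [hδdef, neg_neg]
    exact this
  -- ε0 : uniform lower bound on ‖s‖ ; M : upper bound
  obtain ⟨p1, hp1S, hp1min⟩ := hScomp.exists_isMinOn hne
    (continuous_norm.comp hscont).continuousOn
  set ε0 : ℝ := ‖s p1‖ with hε0def
  have hε0 : 0 < ε0 := norm_pos_iff.mpr (hsne p1 hp1S)
  have hε0le : ∀ p ∈ S, ε0 ≤ ‖s p‖ := fun p hp => hp1min hp
  obtain ⟨p2, hp2S, hp2max⟩ := hScomp.exists_isMaxOn hne
    (continuous_norm.comp hscont).continuousOn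
  set M : ℝ := ‖s p2‖ with hMdef
  have hM0 : 0 < M := lt_of_lt_of_le hε0 (hp2max hp1S)
  have hMle : ∀ p ∈ S, ‖s p‖ ≤ M := fun p hp => hp2max hp
  -- constants
  set m : ℝ := min Q 1 with hm
  have hqm : q < m := lt_min hqQ hq1
  set L : ℝ := m - q with hL
  have hL0 : 0 < L := by simp [hL]; linarith
  set dR : ℝ := Q - q with hdR
  have hdR0 : 0 < dR := by simp [hdR]; linarith
  have hdC : ((Q:ℂ) - q) ≠ 0 := by
    rw [show ((Q:ℂ) - q) = ((dR : ℝ) : ℂ) by rw [hdR]; push_cast; ring]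
    exact_mod_cast ne_of_gt hdR0
  have hπ : (0:ℝ) < Real.pi := Real.pi_pos
  set A : ℝ := |(Q - m) * (m - q)| with hA
  set B : ℝ := |Q + q - 2*m| with hB
  have hA0 : 0 ≤ A := abs_nonneg _
  have hB0 : 0 ≤ B := abs_nonneg _
  -- the dominating sequence
  set a : ℕ → ℝ := fun n =>
    (1/(Real.pi * dR * ε0^3)) * ((A*M^2*(n:ℝ) + B*M + 2) * Real.exp (-(δ*L)*(n:ℝ)) + 2/(n:ℝ))
    with ha
  -- a → 0
  have hb : 0 < δ * L := mul_pos hδ hL0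
  have t1R : Tendsto (fun x:ℝ => x * Real.exp (-(δ*L)*x)) atTop (𝓝 0) := by
    have h := (Real.tendsto_pow_mul_exp_neg_atTop_nhds_zero 1).comp
      (tendsto_id.const_mul_atTop hb)
    have h2 := h.const_mul (δ*L)⁻¹
    rw [mul_zero] at h2
    refine h2.congr fun x => ?_
    simp only [Function.comp, pow_one, id_eq]
    field_simp
  have t1 : Tendsto (fun n:ℕ => (n:ℝ) * Real.exp (-(δ*L)*(n:ℝ))) atTop (𝓝 0) :=
    t1R.comp tendsto_natCast_atTop_atTop
  have t2 : Tendsto (fun n:ℕ => Real.exp (-(δ*L)*(n:ℝ))) atTop (𝓝 0) := by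
    have hbase : Tendsto (fun n:ℕ => -(δ*L)*(n:ℝ)) atTop atBot := by
      have h := (tendsto_natCast_atTop_atTop (R := ℝ)).const_mul_atTop hb
      simpa [neg_mul] using tendsto_neg_atBot_iff.mpr h
    exact Real.tendsto_exp_atBot.comp hbase
  have t3 : Tendsto (fun n:ℕ => 2/(n:ℝ)) atTop (𝓝 0) := by
    have := tendsto_one_div_atTop_nhds_zero_nat.const_mul (2:ℝ)
    rw [mul_zero] at this
    refine this.congr fun n => by ring
  have hatend : Tendsto a atTop (𝓝 0) := by
    have tall := (((t1.const_mul (A*M^2)).add (t2.const_mul (B*M + 2))).add t3).const_mul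
      (1/(Real.pi * dR * ε0^3))
    simp only [add_zero, mul_zero] at tall
    refine tall.congr fun n => ?_
    rw [ha]
    ring
  -- main estimate
  have key : ∀ n : ℕ, 1 ≤ n → ∀ p ∈ S,
      ‖(Complex.exp (-Complex.I * (q : ℂ) * (n : ℂ) * (p.1.im : ℂ)) *
            ((n : ℂ) ^ 2 *
              (((Real.exp (-(q * ((n : ℂ) * p.1).re)) : ℝ) : ℂ) *
                ((Real.exp (-(q * ((n : ℂ) * p.2).re)) : ℝ) : ℂ) *
                (1 / (Real.pi : ℂ)) *
                ∫ t in q..(min Q 1),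
                  (((Q - t) * (t - q) / (Q - q) : ℝ) : ℂ) *
                    Complex.exp ((((n : ℂ) * p.1) + starRingEnd ℂ ((n : ℂ) * p.2)) *
                      (t : ℂ)))) *
            Complex.exp (Complex.I * (q : ℂ) * (n : ℂ) * (p.2.im : ℂ)))
          - 1 / ((Real.pi : ℂ) * (p.1 + starRingEnd ℂ p.2) ^ 2)‖ ≤ a n := by
    intro n hn1 p hp
    have hn0R : (0:ℝ) < (n:ℝ) := by exact_mod_cast hn1
    have hn0C : ((n:ℂ)) ≠ 0 := by exact_mod_cast hn0R.ne'
    set sp : ℂ := s p with hsp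
    have hspne : sp ≠ 0 := hsne p hp
    set c : ℂ := (n:ℂ) * sp with hc
    have hcne : c ≠ 0 := mul_ne_zero hn0C hspne
    set u : ℝ := ‖sp‖ with hu
    have hu0 : 0 < u := norm_pos_iff.mpr hspne
    -- rewrite the exponent inside the integral
    have hexp : ((n : ℂ) * p.1) + starRingEnd ℂ ((n : ℂ) * p.2) = c := by
      rw [hc, hsp, hs]
      simp [map_mul, Complex.conj_natCast, mul_add]
    -- prefactor identity
    have hpre : Complex.exp (-Complex.I * (q : ℂ) * (n : ℂ) * (p.1.im : ℂ)) *
        ((Real.exp (-(q * ((n : ℂ) * p.1).re)) : ℝ) : ℂ) *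
        ((Real.exp (-(q * ((n : ℂ) * p.2).re)) : ℝ) : ℂ) *
        Complex.exp (Complex.I * (q : ℂ) * (n : ℂ) * (p.2.im : ℂ))
        = Complex.exp (-(q:ℂ) * c) := by
      rw [Complex.ofReal_exp, Complex.ofReal_exp, ← Complex.exp_add, ← Complex.exp_add,
        ← Complex.exp_add]
      congr 1
      rw [hc, hsp, hs]
      apply Complex.ext <;>
        simp [Complex.mul_re, Complex.mul_im, Complex.add_re, Complex.add_im,
          Complex.conj_re, Complex.conj_im] <;> ring
    -- the integral
    have hint := intA q Q m hdC c hcne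
    -- X
    set X : ℂ := Complex.exp (c*m - c*q) * (((Q:ℂ)-m)*((m:ℂ)-q)*c^2 - ((Q:ℂ)+q-2*m)*c - 2) + 2
      with hX
    -- the difference identity
    have e1 : Complex.exp (-(q:ℂ)*c) * Complex.exp (c*(m:ℝ)) = Complex.exp (c*m - c*q) := by
      rw [← Complex.exp_add]; congr 1; ring
    have e2 : Complex.exp (-(q:ℂ)*c) * Complex.exp (c*(q:ℝ)) = 1 := by
      rw [← Complex.exp_add, show -(q:ℂ)*c + c*(q:ℝ) = 0 by ring, Complex.exp_zero]
    have e3 : (n:ℂ)^2 * (1/(Real.pi:ℂ)) * (((Q:ℂ)-(q:ℂ))*c^3)⁻¹ * (((Q:ℂ)-(q:ℂ))*c)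
        = 1/((Real.pi:ℂ) * sp^2) := by
      have hπC : ((Real.pi:ℝ):ℂ) ≠ 0 := by exact_mod_cast hπ.ne'
      rw [hc]
      field_simp
    have hdiff : (Complex.exp (-Complex.I * (q : ℂ) * (n : ℂ) * (p.1.im : ℂ)) *
            ((n : ℂ) ^ 2 *
              (((Real.exp (-(q * ((n : ℂ) * p.1).re)) : ℝ) : ℂ) *
                ((Real.exp (-(q * ((n : ℂ) * p.2).re)) : ℝ) : ℂ) *
                (1 / (Real.pi : ℂ)) *
                ∫ t in q..(min Q 1),
                  (((Q - t) * (t - q) / (Q - q) : ℝ) : ℂ) *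
                    Complex.exp ((((n : ℂ) * p.1) + starRingEnd ℂ ((n : ℂ) * p.2)) *
                      (t : ℂ)))) *
            Complex.exp (Complex.I * (q : ℂ) * (n : ℂ) * (p.2.im : ℂ)))
          - 1 / ((Real.pi : ℂ) * (p.1 + starRingEnd ℂ p.2) ^ 2)
        = (n:ℂ)^2 * (1/(Real.pi:ℂ)) * (((Q:ℂ)-(q:ℂ))*c^3)⁻¹ * X := by
      simp only [hexp, ← hm]
      rw [hint]
      rw [show (p.1 + starRingEnd ℂ p.2) = sp by rw [hsp, hs]]
      simp only [hX]
      linear_combination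
        ((n:ℂ)^2 * (1/(Real.pi:ℂ)) * (((Q:ℂ)-(q:ℂ))*c^3)⁻¹ *
          (Complex.exp (c*(m:ℝ)) * (((Q:ℂ)-m)*((m:ℂ)-q)*c^2 - ((Q:ℂ)+q-2*m)*c - 2)
            - Complex.exp (c*(q:ℝ)) * (-((Q:ℂ)-q)*c - 2))) * hpre
        + ((n:ℂ)^2 * (1/(Real.pi:ℂ)) * (((Q:ℂ)-(q:ℂ))*c^3)⁻¹ *
            (((Q:ℂ)-m)*((m:ℂ)-q)*c^2 - ((Q:ℂ)+q-2*m)*c - 2)) * e1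
        - ((n:ℂ)^2 * (1/(Real.pi:ℂ)) * (((Q:ℂ)-(q:ℂ))*c^3)⁻¹ * (-((Q:ℂ)-q)*c - 2)) * e2
        + e3
    rw [hdiff]
    -- norm computation
    have hnorm : ‖(n:ℂ)^2 * (1/(Real.pi:ℂ)) * (((Q:ℂ)-(q:ℂ))*c^3)⁻¹ * X‖
        = (n:ℝ)^2 * (1/Real.pi) * (dR * ((n:ℝ)*u)^3)⁻¹ * ‖X‖ := by
      have hQqcast : ((Q:ℂ) - (q:ℂ)) = ((dR:ℝ):ℂ) := by rw [hdR]; push_cast; ring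
      rw [norm_mul, norm_mul, norm_mul, norm_inv, norm_mul, norm_pow, norm_pow, hQqcast, hc,
        norm_mul]
      simp [Complex.norm_natCast, Complex.norm_real, Real.norm_eq_abs,
        abs_of_pos hπ, abs_of_pos hdR0, hu]
    rw [hnorm]
    -- bound ‖X‖
    have hcre : c.re = (n:ℝ) * sp.re := by
      rw [hc]; simp [Complex.mul_re]
    have hXb : ‖X‖ ≤ Real.exp (-(δ*L)*(n:ℝ)) * (A*((n:ℝ)*M)^2 + B*((n:ℝ)*M) + 2) + 2 := by
      rw [hX]
      refine le_trans (norm_add_le _ _) ?_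
      have h2 : ‖(2:ℂ)‖ = 2 := by norm_num
      rw [norm_mul, h2]
      gcongr
      · -- norm of exp
        rw [Complex.norm_exp]
        apply Real.exp_le_exp.mpr
        have : (c*(m:ℝ) - c*(q:ℝ)).re = c.re * L := by
          rw [hL]; simp [Complex.sub_re, Complex.mul_re]; ring
        rw [this, hcre]
        have hsple : sp.re ≤ -δ := hδle p hp
        nlinarith [mul_nonneg (mul_nonneg hn0R.le hL0.le) (show (0:ℝ) ≤ -δ - sp.re by linarith)]
      · -- norm of polynomial
        have hcnorm : ‖c‖ = (n:ℝ) * u := by rw [hc, norm_mul]; simp [hu]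
        refine le_trans (norm_sub_le _ _) ?_
        refine le_trans (add_le_add_left (norm_sub_le _ _) _) ?_
        have hb1 : ‖((Q:ℂ)-m)*((m:ℂ)-q)*c^2‖ ≤ A * ((n:ℝ)*M)^2 := by
          rw [norm_mul, norm_mul, norm_pow, hcnorm]
          rw [show ((Q:ℂ)-(m:ℝ)) = (((Q-m : ℝ)):ℂ) by push_cast; ring,
            show ((m:ℂ)-(q:ℝ)) = (((m-q : ℝ)):ℂ) by push_cast; ring]
          simp only [Complex.norm_real, Real.norm_eq_abs]
          rw [hA]
          rw [abs_mul]
          gcongr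
          exact hMle p hp
        have hb2 : ‖((Q:ℂ)+q-2*m)*c‖ ≤ B * ((n:ℝ)*M) := by
          rw [norm_mul, hcnorm]
          rw [show ((Q:ℂ)+(q:ℝ)-2*(m:ℝ)) = (((Q+q-2*m : ℝ)):ℂ) by push_cast; ring]
          simp only [Complex.norm_real, Real.norm_eq_abs]
          rw [hB]
          gcongr
          exact hMle p hp
        rw [h2]
        linarith
    -- final chain
    have hn1R : (1:ℝ) ≤ (n:ℝ) := by exact_mod_cast hn1
    calc (n:ℝ)^2 * (1/Real.pi) * (dR * ((n:ℝ)*u)^3)⁻¹ * ‖X‖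
        ≤ (n:ℝ)^2 * (1/Real.pi) * (dR * ((n:ℝ)*ε0)^3)⁻¹ *
            (Real.exp (-(δ*L)*(n:ℝ)) * (A*((n:ℝ)*M)^2 + B*((n:ℝ)*M) + 2) + 2) := by
          gcongr <;> first
            | positivity
            | exact hε0le p hp
            | exact hXb
            | exact Real.exp_nonneg _
            | linarith
        _ = (1/(Real.pi * dR * ε0^3 * (n:ℝ))) *
            (Real.exp (-(δ*L)*(n:ℝ)) * (A*M^2*(n:ℝ)^2 + B*M*(n:ℝ) + 2) + 2) := by
          field_simp
        _ ≤ (1/(Real.pi * dR * ε0^3 * (n:ℝ))) *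
            (Real.exp (-(δ*L)*(n:ℝ)) * (A*M^2*(n:ℝ)^2 + B*M*(n:ℝ) + 2*(n:ℝ)) + 2) := by
          gcongr <;> first
            | positivity
            | exact Real.exp_nonneg _
            | linarith
        _ = a n := by
          rw [ha]
          field_simp
  -- conclude
  rw [Metric.tendstoUniformlyOn_iff]
  intro ε hε
  have hev1 : ∀ᶠ n : ℕ in atTop, a n < ε := hatend.eventually (gt_mem_nhds hε)
  have hev2 : ∀ᶠ n : ℕ in atTop, 1 ≤ n := eventually_ge_atTop 1
  filter_upwards [hev1, hev2] with n h1 h2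
  intro p hp
  rw [dist_comm, dist_eq_norm]
  exact lt_of_le_of_lt (key n h2 p hp) h1
end

section
/- For each χ > 0 let ε_χ > 0 be the unique positive solution of e^{χ ε_χ} ε_χ = 1. Then for every a ∈ ℝ, lim_{χ → ∞} ∏_{k=0}^∞ ( 1 − (1 + ε_χ/2 + a/(2χ))^{−2k−2χ} ) = exp(−e^{−a}), where the limit is taken along χ → ∞ (in particular the infinite product is understood for χ large enough that 1 + ε_χ/2 + a/(2χ) > 1). -/
open Filter Topology

open Real

lemma log_one_sub_le {y : ℝ} (hy : 0 ≤ y) (hy1 : y < 1) :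
    Real.log (1 - y) ≤ -y := by
  have h := Real.log_le_sub_one_of_pos (x := 1 - y) (by linarith)
  linarith

lemma neg_div_le_log_one_sub {y : ℝ} (hy : 0 ≤ y) (hy1 : y < 1) :
    -(y / (1 - y)) ≤ Real.log (1 - y) := by
  have h1y : (0:ℝ) < 1 - y := by linarith
  have h := Real.log_le_sub_one_of_pos (x := (1 - y)⁻¹) (by positivity)
  rw [Real.log_inv] at h
  have : (1 - y)⁻¹ - 1 = y / (1 - y) := by field_simp; ring
  linarith [this ▸ h]

lemma geomLog (u q : ℝ) (hu0 : 0 < u) (hu1 : u < 1) (hq0 : 0 ≤ q) (hq1 : q < 1) :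
    Summable (fun k : ℕ => Real.log (1 - u * q ^ k)) ∧
    (∏' k : ℕ, (1 - u * q ^ k)) = Real.exp (∑' k : ℕ, Real.log (1 - u * q ^ k)) ∧
    -(u / (1 - q) / (1 - u)) ≤ (∑' k : ℕ, Real.log (1 - u * q ^ k)) ∧
    (∑' k : ℕ, Real.log (1 - u * q ^ k)) ≤ -(u / (1 - q)) := by
  have hyle : ∀ k : ℕ, u * q ^ k ≤ u := fun k => by
    have := pow_le_one₀ hq0 hq1.le (n := k)
    nlinarith
  have hy0 : ∀ k : ℕ, 0 ≤ u * q ^ k := fun k => by positivity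
  have hy1 : ∀ k : ℕ, u * q ^ k < 1 := fun k => lt_of_le_of_lt (hyle k) hu1
  have h1u : (0:ℝ) < 1 - u := by linarith
  have hub : ∀ k : ℕ, Real.log (1 - u * q ^ k) ≤ -(u * q ^ k) :=
    fun k => log_one_sub_le (hy0 k) (hy1 k)
  have hlb : ∀ k : ℕ, -(u / (1 - u) * q ^ k) ≤ Real.log (1 - u * q ^ k) := by
    intro k
    have h := neg_div_le_log_one_sub (hy0 k) (hy1 k)
    have h2 : u * q ^ k / (1 - u * q ^ k) ≤ u / (1 - u) * q ^ k := by
      rw [div_le_iff₀ (by linarith [hy1 k])]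
      have hq : (0:ℝ) ≤ q ^ k := by positivity
      rw [div_mul_eq_mul_div, div_mul_eq_mul_div, le_div_iff₀ h1u]
      nlinarith [mul_nonneg (hy0 k) (sub_nonneg.2 (hyle k))]
    linarith
  have habs : ∀ k : ℕ, |Real.log (1 - u * q ^ k)| ≤ u / (1 - u) * q ^ k := by
    intro k
    rw [abs_le]
    constructor
    · exact hlb k
    · have := hub k
      have := hy0 k
      have hq : (0:ℝ) ≤ q ^ k := by positivity
      nlinarith [hy0 k, div_nonneg hu0.le h1u.le]
  have hgeo : Summable (fun k : ℕ => q ^ k) := summable_geometric_of_lt_one hq0 hq1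
  have hsum : Summable (fun k : ℕ => Real.log (1 - u * q ^ k)) := by
    refine Summable.of_abs ?_
    exact Summable.of_nonneg_of_le (fun k => abs_nonneg _) habs (hgeo.mul_left _)
  have hgeosum : ∀ c : ℝ, ∑' k : ℕ, c * q ^ k = c / (1 - q) := by
    intro c
    rw [tsum_mul_left, tsum_geometric_of_lt_one hq0 hq1, div_eq_mul_inv]
  refine ⟨hsum, ?_, ?_, ?_⟩
  · have hpos : ∀ k : ℕ, 0 < 1 - u * q ^ k := fun k => by linarith [hy1 k]
    have h2 := hsum.hasSum.rexp
    have heq : (Real.exp ∘ fun k : ℕ => Real.log (1 - u * q ^ k))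
        = fun k : ℕ => 1 - u * q ^ k := by
      funext k
      exact Real.exp_log (hpos k)
    rw [heq] at h2
    exact h2.tprod_eq
  · have := Summable.tsum_le_tsum hlb ((hgeo.mul_left (u / (1 - u))).neg) hsum
    calc -(u / (1 - q) / (1 - u)) = -(∑' k : ℕ, u / (1 - u) * q ^ k) := by
          rw [hgeosum]; ring_nf
      _ ≤ _ := by rw [← tsum_neg]; exact this
  · have := Summable.tsum_le_tsum hub hsum ((hgeo.mul_left u).neg)
    calc (∑' k : ℕ, Real.log (1 - u * q ^ k)) ≤ ∑' k : ℕ, -(u * q ^ k) := this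
      _ = -(u / (1 - q)) := by rw [tsum_neg, hgeosum]

theorem gumbelWeakly
    (ε : ℝ → ℝ)
    (hε : ∀ χ : ℝ, 0 < χ → 0 < ε χ ∧ Real.exp (χ * ε χ) * ε χ = 1)
    (a : ℝ) :
    Tendsto (fun χ : ℝ =>
        ∏' k : ℕ, (1 - (1 + ε χ / 2 + a / (2 * χ)) ^ (-(2 * (k : ℝ)) - 2 * χ)))
      atTop (𝓝 (Real.exp (-Real.exp (-a)))) := by
  -- basic facts
  have hb : ∀ᶠ χ in atTop, 0 < χ ∧ 0 < ε χ ∧ ε χ < 1 ∧ ε χ = Real.exp (-(χ * ε χ)) := by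
    filter_upwards [eventually_gt_atTop (0:ℝ)] with χ hχ
    obtain ⟨hp, he⟩ := hε χ hχ
    have hgt : 1 < Real.exp (χ * ε χ) := by
      have h := Real.add_one_le_exp (χ * ε χ)
      nlinarith
    have heq : ε χ = Real.exp (-(χ * ε χ)) := by
      rw [Real.exp_neg]
      field_simp
      rw [mul_comm (ε χ) χ]; linear_combination he
    refine ⟨hχ, hp, ?_, heq⟩
    nlinarith [he]
  have hε0 : Tendsto ε atTop (𝓝 0) := by
    rw [NormedAddCommGroup.tendsto_nhds_zero]
    intro δ hδ
    filter_upwards [hb, eventually_gt_atTop (max 0 (-Real.log δ / δ))] with χ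
      ⟨hχ, hp, h1, heq⟩ hbig
    rw [Real.norm_eq_abs, abs_of_pos hp]
    by_contra hcon
    push_neg at hcon
    have h2 : -Real.log δ / δ < χ := lt_of_le_of_lt (le_max_right _ _) hbig
    have h3 : -Real.log δ < χ * δ := by
      rw [div_lt_iff₀ hδ] at h2; linarith
    have h4 : Real.exp (-(χ * ε χ)) ≤ Real.exp (-(χ * δ)) := by
      apply Real.exp_le_exp.2
      have hχ0 : (0:ℝ) < χ := lt_of_le_of_lt (le_max_left _ _) hbig
      nlinarith
    have h5 : Real.exp (-(χ * δ)) < δ := by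
      calc Real.exp (-(χ * δ)) < Real.exp (Real.log δ) := Real.exp_lt_exp.2 (by linarith)
        _ = δ := Real.exp_log hδ
    have h6 : ε χ < δ := by rw [heq]; exact h4.trans_lt h5
    linarith
  have hεlog : ∀ᶠ χ in atTop, χ * ε χ = -Real.log (ε χ) := by
    filter_upwards [hb] with χ ⟨hχ, hp, h1, heq⟩
    have hl : Real.log (ε χ) = -(χ * ε χ) := by
      nth_rewrite 1 [heq]; exact Real.log_exp _
    rw [hl]; ring
  have hχε : Tendsto (fun χ => χ * ε χ) atTop atTop := by
    have h1 : Tendsto ε atTop (𝓝[>] 0) := by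
      refine tendsto_nhdsWithin_iff.mpr ⟨hε0, ?_⟩
      filter_upwards [hb] with χ h using h.2.1
    have h2 : Tendsto (fun χ => Real.log (ε χ)) atTop atBot :=
      Real.tendsto_log_nhdsGT_zero.comp h1
    have h3 : Tendsto (fun χ => -Real.log (ε χ)) atTop atTop :=
      tendsto_neg_atBot_atTop.comp h2
    exact h3.congr' (hεlog.mono fun χ h => h.symm)
  have hχε2 : Tendsto (fun χ => χ * ε χ ^ 2) atTop (𝓝 0) := by
    have h1 : Tendsto (fun χ => ε χ * Real.log (ε χ)) atTop (𝓝 0) := by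
      have := (Real.continuous_mul_log.tendsto 0).comp hε0
      simpa [Function.comp_def] using this
    have h2 : Tendsto (fun χ => -(ε χ * Real.log (ε χ))) atTop (𝓝 0) := by
      simpa using h1.neg
    refine h2.congr' ?_
    filter_upwards [hεlog] with χ h
    have hl : Real.log (ε χ) = -(χ * ε χ) := by linarith
    rw [hl]; ring
  set x : ℝ → ℝ := fun χ => ε χ / 2 + a / (2 * χ) with hxdef
  set t : ℝ → ℝ := fun χ => 1 + x χ with htdef
  have hax : Tendsto (fun χ : ℝ => a / (2 * χ)) atTop (𝓝 0) :=
    Tendsto.div_atTop tendsto_const_nhds (tendsto_id.const_mul_atTop two_pos)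
  have hx0 : Tendsto x atTop (𝓝 0) := by
    have := (hε0.div_const 2).add hax
    simpa using this
  have ht1 : Tendsto t atTop (𝓝 1) := by
    have := (tendsto_const_nhds : Tendsto (fun _ : ℝ => (1:ℝ)) atTop (𝓝 1)).add hx0
    simpa using this
  have hxε : Tendsto (fun χ => x χ / ε χ) atTop (𝓝 (1/2)) := by
    have haχε : Tendsto (fun χ => a / (2 * (χ * ε χ))) atTop (𝓝 0) :=
      Tendsto.div_atTop tendsto_const_nhds (hχε.const_mul_atTop two_pos)
    have h1 : Tendsto (fun χ => 1/2 + a / (2 * (χ * ε χ))) atTop (𝓝 (1/2)) := by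
      have := (tendsto_const_nhds : Tendsto (fun _ : ℝ => (1/2:ℝ)) atTop (𝓝 (1/2))).add haχε
      simpa using this
    refine h1.congr' ?_
    filter_upwards [hb] with χ ⟨hχ, hp, h1, heq⟩
    rw [hxdef]
    field_simp
  have hχx2 : Tendsto (fun χ => χ * x χ ^ 2) atTop (𝓝 0) := by
    have h1 : Tendsto (fun χ : ℝ => χ * ε χ ^ 2 / 4 + ε χ * a / 2 + a ^ 2 / (4 * χ))
        atTop (𝓝 0) := by
      have t1 := hχε2.div_const 4
      have t2 := (hε0.mul_const a).div_const 2
      have t3 : Tendsto (fun χ : ℝ => a ^ 2 / (4 * χ)) atTop (𝓝 0) :=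
        Tendsto.div_atTop tendsto_const_nhds (tendsto_id.const_mul_atTop four_pos)
      have := (t1.add t2).add t3
      simpa using this
    refine h1.congr' ?_
    filter_upwards [eventually_gt_atTop (0:ℝ)] with χ hχ
    rw [hxdef]
    field_simp
    ring
  have hr0 : Tendsto (fun χ => 2 * χ * (Real.log (t χ) - x χ)) atTop (𝓝 0) := by
    have hg : Tendsto (fun χ => 4 * (χ * x χ ^ 2)) atTop (𝓝 0) := by
      simpa using hχx2.const_mul 4
    refine squeeze_zero_norm' ?_ hg
    filter_upwards [eventually_gt_atTop (0:ℝ),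
      (NormedAddCommGroup.tendsto_nhds_zero.mp hx0) (1/2) (by norm_num)] with χ hχ hxs
    rw [Real.norm_eq_abs] at hxs ⊢
    have hxabs : |x χ| ≤ 1/2 := hxs.le
    have key := Real.abs_log_sub_add_sum_range_le (x := -(x χ)) (by rw [abs_neg]; linarith [hxs]) 1
    norm_num at key
    rw [show (1:ℝ) + x χ = t χ from rfl] at key
    have hden : 1 - |x χ| ≥ 1/2 := by linarith
    have key2 : |Real.log (t χ) - x χ| ≤ 2 * x χ ^ 2 := by
      have h2 : x χ ^ 2 / (1 - |x χ|) ≤ 2 * x χ ^ 2 := by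
        rw [div_le_iff₀ (by linarith)]
        nlinarith [sq_nonneg (x χ)]
      have h3 : |Real.log (t χ) - x χ| = |-(x χ) + Real.log (t χ)| := by
        congr 1
        ring
      rw [h3]
      exact key.trans h2
    calc |2 * χ * (Real.log (t χ) - x χ)| = 2 * χ * |Real.log (t χ) - x χ| := by
          rw [abs_mul, abs_of_pos (by linarith : (0:ℝ) < 2 * χ)]
      _ ≤ 2 * χ * (2 * x χ ^ 2) := by
          apply mul_le_mul_of_nonneg_left key2 (by linarith)
      _ = 4 * (χ * x χ ^ 2) := by ring
  set u : ℝ → ℝ := fun χ => ε χ * Real.exp (-a - 2 * χ * (Real.log (t χ) - x χ)) with hudef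
  set q : ℝ → ℝ := fun χ => ((t χ) ^ 2)⁻¹ with hqdef
  have hexp : Tendsto (fun χ => Real.exp (-a - 2 * χ * (Real.log (t χ) - x χ))) atTop
      (𝓝 (Real.exp (-a))) := by
    have h1 : Tendsto (fun χ => -a - 2 * χ * (Real.log (t χ) - x χ)) atTop (𝓝 (-a)) := by
      have := (tendsto_const_nhds : Tendsto (fun _ : ℝ => -a) atTop (𝓝 (-a))).sub hr0
      simpa using this
    exact (Real.continuous_exp.tendsto _).comp h1
  have hu0 : Tendsto u atTop (𝓝 0) := by
    have := hε0.mul hexp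
    simpa using this
  have huε : Tendsto (fun χ => u χ / ε χ) atTop (𝓝 (Real.exp (-a))) := by
    refine hexp.congr' ?_
    filter_upwards [hb] with χ ⟨hχ, hp, h1, heq⟩
    rw [hudef]
    field_simp
  have htpos : ∀ᶠ χ in atTop, (0:ℝ) < t χ := by
    have h1 : ∀ᶠ y in 𝓝 (1:ℝ), (0:ℝ) < y := eventually_gt_nhds (by norm_num)
    exact ht1.eventually h1
  have hqε : Tendsto (fun χ => (1 - q χ) / ε χ) atTop (𝓝 1) := by
    have h1 : Tendsto (fun χ => (x χ / ε χ) * ((t χ + 1) / (t χ) ^ 2)) atTop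
        (𝓝 ((1/2) * ((1 + 1) / 1 ^ 2))) := by
      refine hxε.mul (Tendsto.div ?_ (ht1.pow 2) (by norm_num))
      simpa using ht1.add (tendsto_const_nhds : Tendsto (fun _ : ℝ => (1:ℝ)) atTop (𝓝 1))
    norm_num at h1
    refine h1.congr' ?_
    filter_upwards [hb, htpos] with χ ⟨hχ, hp, _, _⟩ ht0
    have htx : t χ = 1 + x χ := rfl
    rw [hqdef]
    field_simp
    rw [htx]
    ring
  have hL : Tendsto (fun χ => u χ / (1 - q χ)) atTop (𝓝 (Real.exp (-a))) := by
    have h1 := huε.div hqε one_ne_zero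
    norm_num at h1
    refine h1.congr' ?_
    filter_upwards [hb] with χ ⟨hχ, hp, _, _⟩
    rcases eq_or_ne (1 - q χ) 0 with h0 | h0
    · simp [h0]
    · rw [Pi.div_apply, div_div_div_cancel_right₀ hp.ne']
  have hx_pos : ∀ᶠ χ in atTop, 0 < x χ := by
    filter_upwards [hb, hχε.eventually_gt_atTop (-a)] with χ ⟨hχ, hp, _, _⟩ hgt
    have hx : x χ = (χ * ε χ + a) / (2 * χ) := by rw [hxdef]; field_simp
    rw [hx]
    exact div_pos (by linarith) (by linarith)
  have hu_small : ∀ᶠ χ in atTop, u χ < 1/2 := by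
    filter_upwards [(NormedAddCommGroup.tendsto_nhds_zero.mp hu0) (1/2) (by norm_num)] with χ h
    rw [Real.norm_eq_abs] at h
    exact lt_of_le_of_lt (le_abs_self _) h
  have hkey : ∀ᶠ χ in atTop,
      (∏' k : ℕ, (1 - (1 + ε χ / 2 + a / (2 * χ)) ^ (-(2 * (k:ℝ)) - 2 * χ)))
        = Real.exp (∑' k : ℕ, Real.log (1 - u χ * q χ ^ k)) ∧
      -(u χ / (1 - q χ) / (1 - u χ)) ≤ (∑' k : ℕ, Real.log (1 - u χ * q χ ^ k)) ∧
      (∑' k : ℕ, Real.log (1 - u χ * q χ ^ k)) ≤ -(u χ / (1 - q χ)) := by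
    filter_upwards [hb, hx_pos, hu_small] with χ ⟨hχ, hp, h1, heq⟩ hxp hus
    have ht0 : (0:ℝ) < t χ := by
      have : t χ = 1 + x χ := rfl
      linarith [this]
    have ht1' : (1:ℝ) < t χ := by
      have : t χ = 1 + x χ := rfl
      linarith [this]
    have hq0 : 0 ≤ q χ := by rw [hqdef]; positivity
    have hq1 : q χ < 1 := by
      rw [hqdef]
      rw [inv_lt_one_iff₀]
      right
      nlinarith
    have hu0' : 0 < u χ := by rw [hudef]; positivity
    have hu1 : u χ < 1 := hus.trans (by norm_num)
    obtain ⟨hsum, hprod, hlow, hup⟩ := geomLog (u χ) (q χ) hu0' hu1 hq0 hq1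
    have hpow : ∀ k : ℕ,
        (1 + ε χ / 2 + a / (2 * χ)) ^ (-(2 * (k:ℝ)) - 2 * χ) = u χ * q χ ^ k := by
      intro k
      have hteq : 1 + ε χ / 2 + a / (2 * χ) = t χ := by rw [htdef, hxdef]; ring
      rw [hteq, show -(2 * (k:ℝ)) - 2 * χ = (-(2 * (k:ℝ))) + (-(2 * χ)) by ring,
        Real.rpow_add ht0]
      have hq : t χ ^ (-(2 * (k:ℝ))) = q χ ^ k := by
        rw [show -(2 * (k:ℝ)) = -(((2 * k : ℕ)) : ℝ) by push_cast; ring]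
        rw [Real.rpow_neg ht0.le, Real.rpow_natCast, pow_mul, hqdef, inv_pow]
      have hu : t χ ^ (-(2 * χ)) = u χ := by
        rw [Real.rpow_def_of_pos ht0]
        show _ = ε χ * Real.exp (-a - 2 * χ * (Real.log (t χ) - x χ))
        nth_rewrite 1 [heq]
        rw [← Real.exp_add]
        congr 1
        have hx2 : 2 * χ * x χ = χ * ε χ + a := by rw [hxdef]; field_simp
        linear_combination hx2 - 2*a*(mul_inv_cancel₀ hχ.ne')
      rw [hq, hu, mul_comm]
    refine ⟨?_, hlow, hup⟩
    rw [show (fun k : ℕ => 1 - (1 + ε χ / 2 + a / (2 * χ)) ^ (-(2 * (k:ℝ)) - 2 * χ))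
        = fun k : ℕ => 1 - u χ * q χ ^ k from funext fun k => by rw [hpow k]]
    exact hprod
  have hS : Tendsto (fun χ => ∑' k : ℕ, Real.log (1 - u χ * q χ ^ k)) atTop
      (𝓝 (-Real.exp (-a))) := by
    have hlow : Tendsto (fun χ => -(u χ / (1 - q χ) / (1 - u χ))) atTop
        (𝓝 (-Real.exp (-a))) := by
      have h1u : Tendsto (fun χ => 1 - u χ) atTop (𝓝 1) := by
        have := (tendsto_const_nhds : Tendsto (fun _ : ℝ => (1:ℝ)) atTop (𝓝 1)).sub hu0
        simpa using this
      have := (hL.div h1u one_ne_zero).neg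
      simpa using this
    have hup : Tendsto (fun χ => -(u χ / (1 - q χ))) atTop (𝓝 (-Real.exp (-a))) := hL.neg
    exact tendsto_of_tendsto_of_tendsto_of_le_of_le' hlow hup
      (hkey.mono fun χ h => h.2.1) (hkey.mono fun χ h => h.2.2)
  have hfin := (Real.continuous_exp.tendsto _).comp hS
  exact hfin.congr' (hkey.mono fun χ h => h.1.symm)
end
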